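/- arXiv:1806.07015 — 7 statements merged into one kernel-verified Lean document; each statement's English description precedes it below -/
import Mathlib

section
/- Let f : ℝ^d → ℂ be a bounded continuous function and let α ∈ ℝ^d. Let M_f denote the multiplication operator (M_f ξ)(t) = f(t)ξ(t) and T_α the translation operator (T_α ξ)(t) = ξ(t+α), both bounded operators on L²(ℝ^d). Then the commutator [M_f, T_α] = M_f T_α − T_α M_f is a compact operator if and only if f(t) = f(t+α) for every t ∈ ℝ^d (i.e. f is α-periodic). -/
open MeasureTheory
open scoped ENNReal

private lemma sep_seq_no_compact {X : Type*} [PseudoMetricSpace X] {K : Set X}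
    (hK : IsCompact K) {y : ℕ → X} (hy : ∀ n, y n ∈ K) {c : ℝ} (hc : 0 < c)
    (hsep : ∀ m n, m ≠ n → c ≤ dist (y m) (y n)) : False := by
  obtain ⟨a, -, φ, hφ, hconv⟩ := hK.tendsto_subseq hy
  obtain ⟨N, hN⟩ := Metric.cauchySeq_iff.mp hconv.cauchySeq c hc
  have h1 := hN (N + 1) (by omega) N le_rfl
  have h2 := hsep (φ (N + 1)) (φ N) (fun h => by have := hφ.injective h; omega)
  simp only [Function.comp] at h1
  linarith

set_option maxHeartbeats 1000000 in
/-- Let `f : ℝ^d → ℂ` be a bounded continuous function and `α ∈ ℝ^d`.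
If `M` is the operator of multiplication by `f` on `L²(ℝ^d)` and `T` is the translation
operator `(Tξ)(t) = ξ(t+α)`, then the commutator `[M, T] = M∘T - T∘M` is compact if and
only if `f(t) = f(t+α)` for every `t`. -/
theorem stmt1 {d : ℕ} (f : EuclideanSpace ℝ (Fin d) → ℂ)
    (hf_cont : Continuous f) (hf_bdd : ∃ C, ∀ t, ‖f t‖ ≤ C)
    (α : EuclideanSpace ℝ (Fin d))
    (M T : Lp ℂ 2 (volume : Measure (EuclideanSpace ℝ (Fin d))) →L[ℂ]
      Lp ℂ 2 (volume : Measure (EuclideanSpace ℝ (Fin d))))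
    (hM : ∀ ξ : Lp ℂ 2 (volume : Measure (EuclideanSpace ℝ (Fin d))),
      (M ξ : EuclideanSpace ℝ (Fin d) → ℂ) =ᵐ[volume] fun t => f t * ξ t)
    (hT : ∀ ξ : Lp ℂ 2 (volume : Measure (EuclideanSpace ℝ (Fin d))),
      (T ξ : EuclideanSpace ℝ (Fin d) → ℂ) =ᵐ[volume] fun t => ξ (t + α)) :
    IsCompactOperator (⇑(M ∘L T - T ∘L M)) ↔ ∀ t, f t = f (t + α) := by
  have hMP : MeasurePreserving (fun x : EuclideanSpace ℝ (Fin d) => x + α) volume volume :=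
    measurePreserving_add_right volume α
  set D := M ∘L T - T ∘L M with hDdef
  have key : ∀ ξ : Lp ℂ 2 (volume : Measure (EuclideanSpace ℝ (Fin d))),
      (D ξ : EuclideanSpace ℝ (Fin d) → ℂ)
        =ᵐ[volume] fun t => (f t - f (t + α)) * (ξ : EuclideanSpace ℝ (Fin d) → ℂ) (t + α) := by
    intro ξ
    have h0 : D ξ = M (T ξ) - T (M ξ) := rfl
    have h1 : (D ξ : EuclideanSpace ℝ (Fin d) → ℂ) =ᵐ[volume]
        (M (T ξ) : EuclideanSpace ℝ (Fin d) → ℂ) - (T (M ξ) : EuclideanSpace ℝ (Fin d) → ℂ) := by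
      rw [h0]; exact Lp.coeFn_sub _ _
    have h2 : (M (T ξ) : EuclideanSpace ℝ (Fin d) → ℂ) =ᵐ[volume]
        fun t => f t * (ξ : EuclideanSpace ℝ (Fin d) → ℂ) (t + α) := by
      filter_upwards [hM (T ξ), hT ξ] with t h h' using by rw [h, h']
    have h3 : (T (M ξ) : EuclideanSpace ℝ (Fin d) → ℂ) =ᵐ[volume]
        fun t => f (t + α) * (ξ : EuclideanSpace ℝ (Fin d) → ℂ) (t + α) := by
      have hcomp := hMP.quasiMeasurePreserving.ae_eq_comp (hM ξ)
      filter_upwards [hT (M ξ), hcomp] with t h h'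
      rw [h]; exact h'
    filter_upwards [h1, h2, h3] with t e1 e2 e3
    rw [e1]; simp only [Pi.sub_apply]; rw [e2, e3]; ring
  constructor
  · intro hcpt t0
    by_cases hd : d = 0
    · subst hd
      have : Subsingleton (EuclideanSpace ℝ (Fin 0)) :=
        inferInstance
      rw [Subsingleton.elim (t0 + α) t0]
    · by_contra hne
      have hd1 : 0 < d := Nat.pos_of_ne_zero hd
      set ε : ℝ := ‖f t0 - f (t0 + α)‖ / 2 with hε
      have hεpos : 0 < ε := by
        have : f t0 - f (t0 + α) ≠ 0 := sub_ne_zero.mpr hne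
        have := norm_pos_iff.mpr this
        positivity
      have hgc : Continuous fun s => ‖f s - f (s + α)‖ :=
        (hf_cont.sub (hf_cont.comp (continuous_id.add continuous_const))).norm
      obtain ⟨δ, hδpos, hδ⟩ : ∃ δ > 0, ∀ s, dist s t0 < δ → ε ≤ ‖f s - f (s + α)‖ := by
        obtain ⟨δ, hδpos, h⟩ := Metric.continuousAt_iff.mp hgc.continuousAt ε hεpos
        refine ⟨δ, hδpos, fun s hs => ?_⟩
        have h2 := h hs
        rw [Real.dist_eq] at h2
        have := abs_lt.mp h2
        rw [hε] at *
        linarith [this.1]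
      -- geometry: disjoint balls near t0 + α
      obtain ⟨e, he⟩ : ∃ e : EuclideanSpace ℝ (Fin d), e = EuclideanSpace.single ⟨0, hd1⟩ (1:ℝ) := ⟨_, rfl⟩
      have he1 : ‖e‖ = 1 := by rw [he, EuclideanSpace.norm_single]; norm_num
      obtain ⟨q, hq⟩ : ∃ q : EuclideanSpace ℝ (Fin d), q = t0 + α := ⟨_, rfl⟩
      obtain ⟨s, hs⟩ : ∃ s : ℕ → ℝ, s = fun n => δ * (2/3) * (1/2)^n := ⟨_, rfl⟩
      obtain ⟨r, hr⟩ : ∃ r : ℕ → ℝ, r = fun n => δ * (1/8) * (1/2)^n := ⟨_, rfl⟩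
      obtain ⟨c, hc⟩ : ∃ c : ℕ → EuclideanSpace ℝ (Fin d), c = fun n => q + (s n) • e := ⟨_, rfl⟩
      obtain ⟨B, hB⟩ : ∃ B : ℕ → Set (EuclideanSpace ℝ (Fin d)), B = fun n => Metric.ball (c n) (r n) := ⟨_, rfl⟩
      have hrpos : ∀ n, 0 < r n := fun n => by rw [hr]; positivity
      have hspos : ∀ n, 0 < s n := fun n => by rw [hs]; positivity
      have hBsub : ∀ n, B n ⊆ Metric.ball q δ := by
        intro n x hx
        rw [hB] at hx
        have h1 : dist x (c n) < r n := Metric.mem_ball.mp hx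
        have h2 : dist (c n) q = s n := by
          rw [hc]
          simp only []
          rw [dist_eq_norm, add_sub_cancel_left, norm_smul, he1, mul_one,
            Real.norm_eq_abs, abs_of_pos (hspos n)]
        rw [Metric.mem_ball]
        have hpow : (1/2:ℝ)^n ≤ 1 := pow_le_one₀ (by norm_num) (by norm_num)
        calc dist x q ≤ dist x (c n) + dist (c n) q := dist_triangle _ _ _
          _ < r n + s n := by rw [h2]; linarith
          _ ≤ δ := by rw [hr, hs]; nlinarith
      have hdisj : ∀ m n, m ≠ n → Disjoint (B m) (B n) := by
        have aux : ∀ m n, m < n → Disjoint (B m) (B n) := by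
          intro m n hmn
          rw [hB]
          apply Metric.ball_disjoint_ball
          have hdist : dist (c m) (c n) = s m - s n := by
            rw [hc]
            simp only []
            rw [dist_add_left, dist_eq_norm, ← sub_smul, norm_smul, he1, mul_one,
              Real.norm_eq_abs]
            have : s n ≤ s m := by
              rw [hs]
              have : (1/2:ℝ)^n ≤ (1/2)^m :=
                pow_le_pow_of_le_one (by norm_num) (by norm_num) hmn.le
              nlinarith
            rw [abs_of_nonneg (by linarith)]
          rw [hdist, hr, hs]
          have h2n : (1/2:ℝ)^n ≤ (1/2)^m * (1/2) := by
            have : (1/2:ℝ)^n ≤ (1/2)^(m+1) :=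
              pow_le_pow_of_le_one (by norm_num) (by norm_num) (by omega)
            simpa [pow_succ] using this
          have hp : (0:ℝ) < (1/2)^m := by positivity
          have hq : (0:ℝ) < (1/2)^n := by positivity
          nlinarith
        intro m n hmn
        rcases lt_or_gt_of_ne hmn with h | h
        · exact aux m n h
        · exact (aux n m h).symm
      have hBmeas : ∀ n, MeasurableSet (B n) := fun n => by
        rw [hB]; exact measurableSet_ball
      have hBpos : ∀ n, 0 < volume (B n) := fun n => by
        rw [hB]; exact Metric.measure_ball_pos _ _ (hrpos n)
      have hBfin : ∀ n, volume (B n) ≠ ⊤ := fun n => by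
        rw [hB]; exact measure_ball_lt_top.ne
      obtain ⟨a, ha⟩ : ∃ a : ℕ → ℝ, a = fun n => (Real.sqrt ((volume (B n)).toReal))⁻¹ := ⟨_, rfl⟩
      have hapos : ∀ n, 0 < a n := fun n => by
        rw [ha]
        exact inv_pos.mpr (Real.sqrt_pos.mpr (ENNReal.toReal_pos (hBpos n).ne' (hBfin n)))
      obtain ⟨u, hu⟩ : ∃ u : ℕ → Lp ℂ 2 (volume : Measure (EuclideanSpace ℝ (Fin d))),
          u = fun n => indicatorConstLp 2 (hBmeas n) (hBfin n) ((a n : ℝ) : ℂ) := ⟨_, rfl⟩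
      have hunorm : ∀ n, ‖u n‖ = 1 := by
        intro n
        rw [hu]
        simp only []
        rw [norm_indicatorConstLp two_ne_zero ENNReal.ofNat_ne_top]
        have h2 : ((2:ℝ≥0∞)).toReal = 2 := by norm_num
        rw [h2, Complex.norm_real, Real.norm_eq_abs, abs_of_pos (hapos n),
          ← Real.sqrt_eq_rpow, ha]
        exact inv_mul_cancel₀ (Real.sqrt_pos.mpr
          (ENNReal.toReal_pos (hBpos n).ne' (hBfin n))).ne'
      -- unit mass of each bump
      have hmass : ∀ n, (‖((a n : ℝ) : ℂ)‖₊ : ℝ≥0∞) ^ (2:ℝ) * volume (B n) = 1 := by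
        intro n
        have hx : 0 < (volume (B n)).toReal := ENNReal.toReal_pos (hBpos n).ne' (hBfin n)
        have h1 : (‖((a n : ℝ) : ℂ)‖₊ : ℝ≥0∞) = ENNReal.ofReal (a n) := by
          rw [← enorm_eq_nnnorm, ← ofReal_norm, Complex.norm_real, Real.norm_eq_abs,
            abs_of_pos (hapos n)]
        rw [h1, ENNReal.ofReal_rpow_of_pos (hapos n)]
        have h2 : a n ^ (2:ℝ) = ((volume (B n)).toReal)⁻¹ := by
          rw [ha]
          simp only []
          rw [Real.rpow_two, inv_pow, Real.sq_sqrt hx.le]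
        rw [h2, ENNReal.ofReal_inv_of_pos hx, ENNReal.ofReal_toReal (hBfin n)]
        exact ENNReal.inv_mul_cancel (hBpos n).ne' (hBfin n)
      -- separation estimate
      have hsep : ∀ m n, m ≠ n → ε ≤ dist (D (u m)) (D (u n)) := by
        intro m n hmn
        obtain ⟨w, hw⟩ : ∃ w : EuclideanSpace ℝ (Fin d) → ℂ, w = fun x =>
          (B m).indicator (fun _ => ((a m : ℝ) : ℂ)) x
            - (B n).indicator (fun _ => ((a n : ℝ) : ℂ)) x := ⟨_, rfl⟩
        have hwmeas : Measurable w := by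
          rw [hw]
          exact (measurable_const.indicator (hBmeas m)).sub
            (measurable_const.indicator (hBmeas n))
        have hae : ((D (u m) - D (u n) : Lp ℂ 2 (volume : Measure (EuclideanSpace ℝ (Fin d)))) :
            EuclideanSpace ℝ (Fin d) → ℂ) =ᵐ[volume]
            fun t => (f t - f (t + α)) * w (t + α) := by
          have hum := hMP.quasiMeasurePreserving.ae_eq_comp
            (indicatorConstLp_coeFn (p := 2) (hs := hBmeas m) (hμs := hBfin m)
              (c := ((a m : ℝ) : ℂ)))
          have hun := hMP.quasiMeasurePreserving.ae_eq_comp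
            (indicatorConstLp_coeFn (p := 2) (hs := hBmeas n) (hμs := hBfin n)
              (c := ((a n : ℝ) : ℂ)))
          filter_upwards [Lp.coeFn_sub (D (u m)) (D (u n)), key (u m), key (u n), hum, hun]
            with t e1 e2 e3 e4 e5
          rw [e1]
          simp only [Pi.sub_apply]
          rw [e2, e3, hw]
          simp only []
          have e4' : (u m : EuclideanSpace ℝ (Fin d) → ℂ) (t + α)
              = (B m).indicator (fun _ => ((a m : ℝ) : ℂ)) (t + α) := by rw [hu]; exact e4
          have e5' : (u n : EuclideanSpace ℝ (Fin d) → ℂ) (t + α)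
              = (B n).indicator (fun _ => ((a n : ℝ) : ℂ)) (t + α) := by rw [hu]; exact e5
          rw [e4', e5']
          ring
        -- pointwise lower bound
        have hptwise : ∀ t, (ENNReal.ofReal ε) ^ (2:ℝ) * (‖w (t + α)‖₊ : ℝ≥0∞) ^ (2:ℝ)
            ≤ (‖(f t - f (t + α)) * w (t + α)‖₊ : ℝ≥0∞) ^ (2:ℝ) := by
          intro t
          by_cases hw0 : w (t + α) = 0
          · simp [hw0]
          · have htmem : t + α ∈ Metric.ball q δ := by
              by_contra hmem
              apply hw0
              have hm' : t + α ∉ B m := fun h => hmem (hBsub m h)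
              have hn' : t + α ∉ B n := fun h => hmem (hBsub n h)
              rw [hw]
              simp [Set.indicator_of_notMem, hm', hn']
            have htb : dist t t0 < δ := by
              have hdd : dist (t + α) q = dist t t0 := by rw [hq, dist_add_right]
              rw [← hdd]
              exact Metric.mem_ball.mp htmem
            have hge := hδ t htb
            have hle : ENNReal.ofReal ε * (‖w (t + α)‖₊ : ℝ≥0∞)
                ≤ (‖(f t - f (t + α)) * w (t + α)‖₊ : ℝ≥0∞) := by
              rw [nnnorm_mul, ENNReal.coe_mul]
              apply mul_le_mul_left
              rw [← enorm_eq_nnnorm, ← ofReal_norm]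
              exact ENNReal.ofReal_le_ofReal hge
            calc (ENNReal.ofReal ε) ^ (2:ℝ) * (‖w (t + α)‖₊ : ℝ≥0∞) ^ (2:ℝ)
                = (ENNReal.ofReal ε * (‖w (t + α)‖₊ : ℝ≥0∞)) ^ (2:ℝ) := by
                  rw [ENNReal.mul_rpow_of_nonneg _ _ (by norm_num)]
              _ ≤ _ := ENNReal.rpow_le_rpow hle (by norm_num)
        -- total mass lower bound for w
        have hw2 : (1:ℝ≥0∞) ≤ ∫⁻ x, (‖w x‖₊ : ℝ≥0∞) ^ (2:ℝ) ∂volume := by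
          have hw1 : ∀ x, (B m).indicator (fun _ => (‖((a m : ℝ) : ℂ)‖₊ : ℝ≥0∞) ^ (2:ℝ)) x
              ≤ (‖w x‖₊ : ℝ≥0∞) ^ (2:ℝ) := by
            intro x
            by_cases hx : x ∈ B m
            · have hxn : x ∉ B n := fun h => Set.disjoint_left.mp (hdisj m n hmn) hx h
              rw [Set.indicator_of_mem hx]
              have : w x = ((a m : ℝ) : ℂ) := by
                rw [hw]
                simp [Set.indicator_of_mem hx, Set.indicator_of_notMem hxn]
              rw [this]
            · rw [Set.indicator_of_notMem hx]
              exact zero_le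
          calc (1:ℝ≥0∞) = (‖((a m : ℝ) : ℂ)‖₊ : ℝ≥0∞) ^ (2:ℝ) * volume (B m) :=
                (hmass m).symm
            _ = ∫⁻ x, (B m).indicator (fun _ => (‖((a m : ℝ) : ℂ)‖₊ : ℝ≥0∞) ^ (2:ℝ)) x
                ∂volume := by
                rw [lintegral_indicator (hBmeas m), setLIntegral_const]
            _ ≤ _ := lintegral_mono hw1
        have hlow : (ENNReal.ofReal ε) ^ (2:ℝ)
            ≤ ∫⁻ t, (‖(f t - f (t + α)) * w (t + α)‖₊ : ℝ≥0∞) ^ (2:ℝ) ∂volume := by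
          calc (ENNReal.ofReal ε) ^ (2:ℝ)
              = (ENNReal.ofReal ε) ^ (2:ℝ) * 1 := (mul_one _).symm
            _ ≤ (ENNReal.ofReal ε) ^ (2:ℝ) * ∫⁻ x, (‖w x‖₊ : ℝ≥0∞) ^ (2:ℝ) ∂volume :=
                mul_le_mul_right hw2 _
            _ = ∫⁻ x, (ENNReal.ofReal ε) ^ (2:ℝ) * (‖w x‖₊ : ℝ≥0∞) ^ (2:ℝ) ∂volume :=
                (lintegral_const_mul _ (hwmeas.enorm.pow_const _)).symm
            _ = ∫⁻ t, (ENNReal.ofReal ε) ^ (2:ℝ) * (‖w (t + α)‖₊ : ℝ≥0∞) ^ (2:ℝ) ∂volume :=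
                (hMP.lintegral_comp_emb (measurableEmbedding_addRight α) _).symm
            _ ≤ _ := lintegral_mono hptwise
        have hels : ENNReal.ofReal ε ≤ eLpNorm
            ((D (u m) - D (u n) : Lp ℂ 2 (volume : Measure (EuclideanSpace ℝ (Fin d)))) :
              EuclideanSpace ℝ (Fin d) → ℂ) 2 volume := by
          rw [eLpNorm_congr_ae hae,
            eLpNorm_eq_lintegral_rpow_enorm_toReal two_ne_zero ENNReal.ofNat_ne_top]
          have h2 : ((2:ℝ≥0∞)).toReal = 2 := by norm_num
          rw [h2]
          calc ENNReal.ofReal ε = ((ENNReal.ofReal ε) ^ (2:ℝ)) ^ (1/2:ℝ) := by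
                rw [← ENNReal.rpow_mul]; norm_num
            _ ≤ _ := ENNReal.rpow_le_rpow hlow (by norm_num)
        have hnorm : ε ≤ ‖D (u m) - D (u n)‖ := by
          rw [Lp.norm_def]
          calc ε = (ENNReal.ofReal ε).toReal := (ENNReal.toReal_ofReal hεpos.le).symm
            _ ≤ _ := (ENNReal.toReal_le_toReal ENNReal.ofReal_ne_top
                (Lp.eLpNorm_ne_top _)).mpr hels
        rw [dist_eq_norm]
        exact hnorm
      -- compactness contradiction
      obtain ⟨K, hK, hKnhds⟩ := hcpt
      obtain ⟨ρ, hρpos, hρ⟩ := Metric.mem_nhds_iff.mp hKnhds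
      obtain ⟨y, hy⟩ : ∃ y : ℕ → Lp ℂ 2 (volume : Measure (EuclideanSpace ℝ (Fin d))),
          y = fun n => D (((ρ/2 : ℝ) : ℂ) • u n) := ⟨_, rfl⟩
      have hymem : ∀ n, y n ∈ K := by
        intro n
        rw [hy]
        apply hρ
        rw [Metric.mem_ball, dist_zero_right, norm_smul, hunorm n, mul_one,
          Complex.norm_real, Real.norm_eq_abs, abs_of_pos (by positivity)]
        linarith
      refine sep_seq_no_compact hK hymem (c := ρ/2 * ε) (by positivity) ?_
      intro m n hmn
      have hdiff : y m - y n = ((ρ/2 : ℝ) : ℂ) • (D (u m) - D (u n)) := by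
        rw [hy]
        simp only []
        rw [← map_sub, ← smul_sub, _root_.map_smul, map_sub]
      rw [dist_eq_norm, hdiff, norm_smul, Complex.norm_real, Real.norm_eq_abs,
        abs_of_pos (by positivity : (0:ℝ) < ρ/2)]
      have h1 := hsep m n hmn
      rw [dist_eq_norm] at h1
      have : (0:ℝ) < ρ/2 := by positivity
      nlinarith
  · intro hper
    have hz : D = 0 := by
      ext ξ
      simp only [ContinuousLinearMap.zero_apply]
      have h0 : ((0 : Lp ℂ 2 (volume : Measure (EuclideanSpace ℝ (Fin d)))) :
          EuclideanSpace ℝ (Fin d) → ℂ) =ᵐ[volume] 0 := Lp.coeFn_zero _ _ _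
      filter_upwards [key ξ, h0] with t ht h0t
      rw [ht, h0t]
      rw [show f (t + α) = f t from (hper t).symm]
      simp
    rw [hz]
    exact isCompactOperator_zero
end

section
/- Let d ≥ 2 and let y : S^{d−1} → ℂ be a Lipschitz function. Then there exists a constant C such that for every nonzero n ∈ ℤ^d, | y(n/|n|) (1+|n|²)^{−d/2} − ∫_{n+[0,1]^d} y(t/|t|) (1+|t|²)^{−d/2} dt | ≤ C (1+|n|²)^{−(d+1)/2}. -/
open MeasureTheory

attribute [local instance] Classical.propDecidable

/-- The homogeneous (degree-zero) extension to `ℝ^d` of a function `y` on the unit sphere: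
`homogF y t = y (t / ‖t‖)` for `t ≠ 0`, and `0` at `t = 0`. -/
noncomputable def homogF {d : ℕ}
    (y : Metric.sphere (0 : EuclideanSpace ℝ (Fin d)) 1 → ℂ)
    (t : EuclideanSpace ℝ (Fin d)) : ℂ :=
  if h : ‖t‖⁻¹ • t ∈ Metric.sphere (0 : EuclideanSpace ℝ (Fin d)) 1 then y ⟨_, h⟩ else 0

/-- A lattice point `n ∈ ℤ^d` viewed as a vector in Euclidean space `ℝ^d`. -/
def latticeVec {d : ℕ} (n : Fin d → ℤ) : EuclideanSpace ℝ (Fin d) :=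
  WithLp.toLp 2 (fun i => (n i : ℝ))

lemma quot_bound' {E : Type*} [NormedAddCommGroup E] [NormedSpace ℝ E] {a b : E}
    (ha : a ≠ 0) (hb : b ≠ 0) :
    ‖‖a‖⁻¹ • a - ‖b‖⁻¹ • b‖ ≤ 2 * ‖a - b‖ / ‖a‖ := by
  have ha' : (0:ℝ) < ‖a‖ := norm_pos_iff.mpr ha
  have hb' : (0:ℝ) < ‖b‖ := norm_pos_iff.mpr hb
  have key : ‖a‖⁻¹ • a - ‖b‖⁻¹ • b = ‖a‖⁻¹ • (a - b) + (‖a‖⁻¹ - ‖b‖⁻¹) • b := by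
    rw [smul_sub, sub_smul]; abel
  rw [key]
  have h1 : ‖‖a‖⁻¹ • (a - b)‖ = ‖a - b‖ / ‖a‖ := by
    rw [norm_smul, Real.norm_eq_abs, abs_of_pos (by positivity)]
    ring
  have h2 : ‖(‖a‖⁻¹ - ‖b‖⁻¹) • b‖ ≤ ‖a - b‖ / ‖a‖ := by
    rw [norm_smul, Real.norm_eq_abs]
    have he : |‖a‖⁻¹ - ‖b‖⁻¹| = |‖b‖ - ‖a‖| / (‖a‖ * ‖b‖) := by
      rw [inv_sub_inv ha'.ne' hb'.ne', abs_div]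
      congr 1
      exact abs_of_pos (by positivity)
    rw [he]
    have hb2 : |‖b‖ - ‖a‖| ≤ ‖a - b‖ := by
      rw [abs_sub_comm]; exact abs_norm_sub_norm_le a b
    rw [div_mul_eq_mul_div, div_le_div_iff₀ (by positivity) ha']
    calc |‖b‖ - ‖a‖| * ‖b‖ * ‖a‖ ≤ ‖a - b‖ * ‖b‖ * ‖a‖ := by gcongr
      _ = ‖a - b‖ * (‖a‖ * ‖b‖) := by ring
  calc ‖‖a‖⁻¹ • (a - b) + (‖a‖⁻¹ - ‖b‖⁻¹) • b‖
      ≤ ‖‖a‖⁻¹ • (a - b)‖ + ‖(‖a‖⁻¹ - ‖b‖⁻¹) • b‖ := norm_add_le _ _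
    _ ≤ ‖a - b‖ / ‖a‖ + ‖a - b‖ / ‖a‖ := by rw [h1]; gcongr
    _ = 2 * ‖a - b‖ / ‖a‖ := by ring

lemma hpow_lip {p m a b : ℝ} (hp : 0 < p) (hm : 0 ≤ m) (hma : m ≤ a) (hmb : m ≤ b) :
    |(1 + a) ^ (-p) - (1 + b) ^ (-p)| ≤ p * (1 + m) ^ (-p - 1) * |a - b| := by
  have hd : ∀ x ∈ Set.Ici m, HasDerivWithinAt (fun s : ℝ => (1 + s) ^ (-p))
      ((-p) * (1 + x) ^ (-p - 1)) (Set.Ici m) x := by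
    intro x hx
    have hx1 : (0:ℝ) < 1 + x := by have := hx.out; linarith
    have h1 : HasDerivAt (fun s : ℝ => 1 + s) 1 x := by
      simpa using (hasDerivAt_id x).const_add (1:ℝ)
    have h2 : HasDerivAt (fun u : ℝ => u ^ (-p)) ((-p) * (1 + x) ^ (-p - 1)) (1 + x) :=
      Real.hasDerivAt_rpow_const (Or.inl hx1.ne')
    have := h2.comp x h1
    simpa [Function.comp_def] using this.hasDerivWithinAt
  have hb : ∀ x ∈ Set.Ici m, ‖(-p) * (1 + x) ^ (-p - 1)‖ ≤ p * (1 + m) ^ (-p - 1) := by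
    intro x hx
    have hx1 : (0:ℝ) < 1 + x := by have := hx.out; linarith
    rw [Real.norm_eq_abs, abs_mul, abs_neg, abs_of_pos hp,
      abs_of_pos (Real.rpow_pos_of_pos hx1 _)]
    have := Real.rpow_le_rpow_of_nonpos (x := 1 + m) (y := 1 + x) (z := -p - 1)
      (by linarith) (by linarith [hx.out]) (by linarith)
    exact mul_le_mul_of_nonneg_left this hp.le
  have := Convex.norm_image_sub_le_of_norm_hasDerivWithin_le hd hb (convex_Ici m) hmb hma
  simpa [Real.norm_eq_abs] using this

variable {d : ℕ} {y : Metric.sphere (0 : EuclideanSpace ℝ (Fin d)) 1 → ℂ}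

def cubeSet (n : Fin d → ℤ) : Set (EuclideanSpace ℝ (Fin d)) :=
  {t | ∀ i, (n i : ℝ) ≤ t i ∧ t i ≤ (n i : ℝ) + 1}

lemma cube_eq (n : Fin d → ℤ) :
    cubeSet n = (MeasurableEquiv.toLp 2 (Fin d → ℝ)).symm ⁻¹'
      (Set.univ.pi fun i => Set.Icc ((n i : ℝ)) ((n i : ℝ) + 1)) := by
  ext t
  constructor
  · intro h
    exact fun i _ => ⟨(h i).1, (h i).2⟩
  · intro h i
    exact ⟨(h i (Set.mem_univ i)).1, (h i (Set.mem_univ i)).2⟩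

lemma cube_meas (n : Fin d → ℤ) : MeasurableSet (cubeSet n) := by
  rw [cube_eq]
  exact (MeasurableEquiv.toLp 2 (Fin d → ℝ)).symm.measurable
    (MeasurableSet.univ_pi fun i => measurableSet_Icc)

lemma cube_vol (n : Fin d → ℤ) : volume (cubeSet n) = 1 := by
  rw [cube_eq,
    (EuclideanSpace.volume_preserving_symm_measurableEquiv_toLp (Fin d)).measure_preimage
      (MeasurableSet.univ_pi fun i => measurableSet_Icc).nullMeasurableSet]
  rw [volume_pi_pi]
  simp [Real.volume_Icc]

lemma cube_dist {n : Fin d → ℤ} {t : EuclideanSpace ℝ (Fin d)} (ht : t ∈ cubeSet n) :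
    ‖t - latticeVec n‖ ≤ Real.sqrt d := by
  rw [EuclideanSpace.norm_eq]
  apply Real.sqrt_le_sqrt
  calc ∑ i, ‖(t - latticeVec n) i‖ ^ 2 ≤ ∑ _i : Fin d, (1:ℝ) := by
        apply Finset.sum_le_sum
        intro i _
        have h := ht i
        have : ‖(t - latticeVec n) i‖ ≤ 1 := by
          have he : (t - latticeVec n) i = t i - (n i : ℝ) := by simp [latticeVec]
          rw [he, Real.norm_eq_abs, abs_le]
          constructor <;> [linarith [h.1]; linarith [h.2]]
        calc ‖(t - latticeVec n) i‖ ^ 2 ≤ 1 ^ 2 := by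
              exact pow_le_pow_left₀ (norm_nonneg _) this 2
          _ = 1 := one_pow 2
    _ = (d : ℝ) := by simp

lemma mem_sphere_of_ne {t : EuclideanSpace ℝ (Fin d)} (ht : t ≠ 0) :
    ‖t‖⁻¹ • t ∈ Metric.sphere (0 : EuclideanSpace ℝ (Fin d)) 1 := by
  have h : ‖t‖ ≠ 0 := norm_ne_zero_iff.mpr ht
  simp [mem_sphere_zero_iff_norm, norm_smul, abs_of_nonneg (inv_nonneg.mpr (norm_nonneg t)),
    inv_mul_cancel₀ h]

lemma homogF_eq {t : EuclideanSpace ℝ (Fin d)} (ht : t ≠ 0) :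
    homogF y t = y ⟨‖t‖⁻¹ • t, mem_sphere_of_ne ht⟩ := by
  rw [homogF, dif_pos]

lemma homogF_bound {M : ℝ} (hM : 0 ≤ M) (hy : ∀ v, ‖y v‖ ≤ M) (t : EuclideanSpace ℝ (Fin d)) :
    ‖homogF y t‖ ≤ M := by
  rw [homogF]
  split
  · exact hy _
  · simpa using hM

lemma y_bound (K : NNReal) (hy : LipschitzWith K y)
    (u₀ : Metric.sphere (0 : EuclideanSpace ℝ (Fin d)) 1) (v) :
    ‖y v‖ ≤ ‖y u₀‖ + 2 * K := by
  have h1 : ‖y v - y u₀‖ ≤ K * dist v u₀ := by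
    rw [← dist_eq_norm]; exact hy.dist_le_mul v u₀
  have h2 : dist v u₀ ≤ 2 := by
    rw [Subtype.dist_eq, dist_eq_norm]
    have hv : ‖(v : EuclideanSpace ℝ (Fin d))‖ = 1 := by
      simpa [mem_sphere_zero_iff_norm] using v.2
    have hu : ‖(u₀ : EuclideanSpace ℝ (Fin d))‖ = 1 := by
      simpa [mem_sphere_zero_iff_norm] using u₀.2
    calc ‖(v : EuclideanSpace ℝ (Fin d)) - u₀‖ ≤ ‖(v : EuclideanSpace ℝ (Fin d))‖ + ‖(u₀ : EuclideanSpace ℝ (Fin d))‖ := norm_sub_le _ _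
      _ = 2 := by rw [hv, hu]; norm_num
  calc ‖y v‖ = ‖y u₀ + (y v - y u₀)‖ := by ring_nf
    _ ≤ ‖y u₀‖ + ‖y v - y u₀‖ := norm_add_le _ _
    _ ≤ ‖y u₀‖ + K * 2 := by
        have := h1.trans (by exact mul_le_mul_of_nonneg_left h2 K.2)
        linarith
    _ = ‖y u₀‖ + 2 * K := by ring

lemma homogF_contOn {K : NNReal} (hyl : LipschitzWith K y) : ContinuousOn (homogF y) {t : EuclideanSpace ℝ (Fin d) | t ≠ 0} := by
  rw [continuousOn_iff_continuous_restrict]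
  have he : Set.restrict {t : EuclideanSpace ℝ (Fin d) | t ≠ 0} (homogF y)
      = fun t : ↥{t : EuclideanSpace ℝ (Fin d) | t ≠ 0} =>
          y ⟨‖t.1‖⁻¹ • t.1, mem_sphere_of_ne t.2⟩ := by
    funext t
    exact homogF_eq t.2
  rw [show Set.domRestrict _ (homogF y) = _ from he]
  have hy : Continuous y := hyl.continuous
  apply hy.comp
  have hval : Continuous (fun t : ↥{t : EuclideanSpace ℝ (Fin d) | t ≠ 0} => t.1) :=
    continuous_subtype_val
  have hinv : Continuous (fun t : ↥{t : EuclideanSpace ℝ (Fin d) | t ≠ 0} => ‖t.1‖⁻¹) := by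
    apply Continuous.inv₀ (continuous_norm.comp hval)
    intro t
    exact norm_ne_zero_iff.mpr t.2
  exact Continuous.subtype_mk (hinv.smul hval) _

set_option maxHeartbeats 1000000 in
lemma pointwise_est (hd1 : 1 ≤ d)
    (K : NNReal) (hy : LipschitzWith K y) {M : ℝ} (hM : 0 ≤ M)
    (hyM : ∀ v, ‖y v‖ ≤ M)
    {a t : EuclideanSpace ℝ (Fin d)}
    (hbig : 2 * Real.sqrt d ≤ ‖a‖) (hclose : ‖t - a‖ ≤ Real.sqrt d) :
    ‖homogF y a * (((1 + ‖a‖ ^ 2) ^ (-(d:ℝ)/2) : ℝ) : ℂ)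
      - homogF y t * (((1 + ‖t‖ ^ 2) ^ (-(d:ℝ)/2) : ℝ) : ℂ)‖
    ≤ (2 * Real.sqrt 2 * (K:ℝ) * Real.sqrt d
        + M * (3 * Real.sqrt d) * (((d:ℝ)/2) * (4:ℝ) ^ ((d:ℝ)/2 + 1)))
      * (1 + ‖a‖ ^ 2) ^ (-((d:ℝ)+1)/2) := by
  have hd1' : (1:ℝ) ≤ (d:ℝ) := by exact_mod_cast hd1
  have hsd1 : 1 ≤ Real.sqrt d := by
    rw [show (1:ℝ) = Real.sqrt 1 by simp]
    exact Real.sqrt_le_sqrt hd1'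
  have hsd0 : (0:ℝ) < Real.sqrt d := by linarith
  have hr2 : 2 ≤ ‖a‖ := le_trans (by linarith) hbig
  have hrpos : (0:ℝ) < ‖a‖ := by linarith
  have ha0 : a ≠ 0 := norm_pos_iff.mp hrpos
  have hs_lb : ‖a‖/2 ≤ ‖t‖ := by
    have h1 : ‖a‖ - ‖t‖ ≤ ‖a - t‖ := norm_sub_norm_le a t
    have h2 : ‖a - t‖ = ‖t - a‖ := norm_sub_rev a t
    linarith
  have hspos : (0:ℝ) < ‖t‖ := by linarith
  have ht0 : t ≠ 0 := norm_pos_iff.mp hspos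
  have hs_ub : ‖t‖ ≤ ‖a‖ + Real.sqrt d := by
    have h1 : ‖t‖ - ‖a‖ ≤ ‖t - a‖ := norm_sub_norm_le t a
    linarith
  have hp : (0:ℝ) < (d:ℝ)/2 := by linarith
  have hApos : (0:ℝ) < 1 + ‖a‖^2 := by positivity
  have hgA0 : (0:ℝ) ≤ (1 + ‖a‖^2) ^ (-(d:ℝ)/2) := Real.rpow_nonneg hApos.le _
  rw [homogF_eq ha0, homogF_eq ht0]
  set u : Metric.sphere (0 : EuclideanSpace ℝ (Fin d)) 1 := ⟨_, mem_sphere_of_ne ha0⟩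
  set v : Metric.sphere (0 : EuclideanSpace ℝ (Fin d)) 1 := ⟨_, mem_sphere_of_ne ht0⟩
  have hdecomp : y u * (((1 + ‖a‖ ^ 2) ^ (-(d:ℝ)/2) : ℝ) : ℂ)
      - y v * (((1 + ‖t‖ ^ 2) ^ (-(d:ℝ)/2) : ℝ) : ℂ)
      = (y u - y v) * (((1 + ‖a‖ ^ 2) ^ (-(d:ℝ)/2) : ℝ) : ℂ)
        + y v * ((((1 + ‖a‖ ^ 2) ^ (-(d:ℝ)/2) - (1 + ‖t‖ ^ 2) ^ (-(d:ℝ)/2) : ℝ)) : ℂ) := by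
    push_cast; ring
  rw [hdecomp]
  -- Term 1 bound
  have hT1 : ‖(y u - y v) * (((1 + ‖a‖ ^ 2) ^ (-(d:ℝ)/2) : ℝ) : ℂ)‖
      ≤ ((K:ℝ) * (2 * Real.sqrt d / ‖a‖)) * (1 + ‖a‖^2) ^ (-(d:ℝ)/2) := by
    rw [norm_mul, Complex.norm_real, Real.norm_eq_abs, abs_of_nonneg hgA0]
    apply mul_le_mul_of_nonneg_right _ hgA0
    have h1 : ‖y u - y v‖ ≤ (K:ℝ) * ‖(u : EuclideanSpace ℝ (Fin d)) - v‖ := by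
      rw [← dist_eq_norm, ← dist_eq_norm, ← Subtype.dist_eq]
      exact hy.dist_le_mul u v
    have h2 : ‖(u : EuclideanSpace ℝ (Fin d)) - v‖ ≤ 2 * ‖a - t‖ / ‖a‖ :=
      quot_bound' ha0 ht0
    have h3 : 2 * ‖a - t‖ / ‖a‖ ≤ 2 * Real.sqrt d / ‖a‖ := by
      have : ‖a - t‖ ≤ Real.sqrt d := by rw [norm_sub_rev]; exact hclose
      gcongr
    calc ‖y u - y v‖ ≤ (K:ℝ) * ‖(u : EuclideanSpace ℝ (Fin d)) - v‖ := h1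
      _ ≤ (K:ℝ) * (2 * Real.sqrt d / ‖a‖) :=
          mul_le_mul_of_nonneg_left (h2.trans h3) K.2
  -- Term 2 bound
  have hT2 : ‖y v * ((((1 + ‖a‖ ^ 2) ^ (-(d:ℝ)/2) - (1 + ‖t‖ ^ 2) ^ (-(d:ℝ)/2) : ℝ)) : ℂ)‖
      ≤ M * (((d:ℝ)/2) * (1 + ‖a‖^2/4) ^ (-((d:ℝ)/2) - 1) * (3 * Real.sqrt d * ‖a‖)) := by
    rw [norm_mul, Complex.norm_real, Real.norm_eq_abs]
    apply mul_le_mul (hyM v) _ (abs_nonneg _) hM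
    have hlip := hpow_lip (p := (d:ℝ)/2) (m := ‖a‖^2/4) (a := ‖a‖^2) (b := ‖t‖^2)
      hp (by positivity) (by nlinarith) (by nlinarith)
    have habs : |‖a‖^2 - ‖t‖^2| ≤ 3 * Real.sqrt d * ‖a‖ := by
      have hfac : ‖a‖^2 - ‖t‖^2 = (‖a‖ - ‖t‖) * (‖a‖ + ‖t‖) := by ring
      rw [hfac, abs_mul, abs_of_nonneg (by linarith : (0:ℝ) ≤ ‖a‖ + ‖t‖)]
      have h1 : |‖a‖ - ‖t‖| ≤ Real.sqrt d := by
        have := abs_norm_sub_norm_le a t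
        have h2 : ‖a - t‖ = ‖t - a‖ := norm_sub_rev a t
        linarith [abs_norm_sub_norm_le a t]
      have h2 : ‖a‖ + ‖t‖ ≤ 3 * ‖a‖ := by
        have hsd_le : Real.sqrt d ≤ ‖a‖ := by linarith
        linarith
      calc |‖a‖ - ‖t‖| * (‖a‖ + ‖t‖) ≤ Real.sqrt d * (3 * ‖a‖) :=
            mul_le_mul h1 h2 (by linarith) hsd0.le
        _ = 3 * Real.sqrt d * ‖a‖ := by ring
    have hexp : -(d:ℝ)/2 = -((d:ℝ)/2) := by ring
    rw [hexp]
    calc |(1 + ‖a‖^2) ^ (-((d:ℝ)/2)) - (1 + ‖t‖^2) ^ (-((d:ℝ)/2))|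
        ≤ ((d:ℝ)/2) * (1 + ‖a‖^2/4) ^ (-((d:ℝ)/2) - 1) * |‖a‖^2 - ‖t‖^2| := hlip
      _ ≤ ((d:ℝ)/2) * (1 + ‖a‖^2/4) ^ (-((d:ℝ)/2) - 1) * (3 * Real.sqrt d * ‖a‖) := by
          apply mul_le_mul_of_nonneg_left habs
          positivity
  -- rpow splitting facts
  have hsplit : (1 + ‖a‖^2) ^ (-((d:ℝ)+1)/2)
      = (1 + ‖a‖^2) ^ (-(d:ℝ)/2) * (1 + ‖a‖^2) ^ (-(1:ℝ)/2) := by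
    rw [← Real.rpow_add hApos]; congr 1; ring
  have hsA : (0:ℝ) < Real.sqrt (1 + ‖a‖^2) := Real.sqrt_pos.mpr hApos
  have hAneg : (1 + ‖a‖^2) ^ (-(1:ℝ)/2) = (Real.sqrt (1 + ‖a‖^2))⁻¹ := by
    rw [neg_div, Real.rpow_neg hApos.le, Real.sqrt_eq_rpow]
  have hinvr : 1/‖a‖ ≤ Real.sqrt 2 * (1 + ‖a‖^2) ^ (-(1:ℝ)/2) := by
    rw [hAneg, ← div_eq_mul_inv, div_le_div_iff₀ hrpos hsA, one_mul]
    have hle : 1 + ‖a‖^2 ≤ 2 * ‖a‖^2 := by nlinarith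
    calc Real.sqrt (1 + ‖a‖^2) ≤ Real.sqrt (2 * ‖a‖^2) := Real.sqrt_le_sqrt hle
      _ = Real.sqrt 2 * ‖a‖ := by
          rw [Real.sqrt_mul (by norm_num), Real.sqrt_sq hrpos.le]
  have hb1 : ((K:ℝ) * (2 * Real.sqrt d / ‖a‖)) * (1 + ‖a‖^2) ^ (-(d:ℝ)/2)
      ≤ 2 * Real.sqrt 2 * (K:ℝ) * Real.sqrt d * (1 + ‖a‖^2) ^ (-((d:ℝ)+1)/2) := by
    rw [hsplit]
    have hre : ((K:ℝ) * (2 * Real.sqrt d / ‖a‖)) * (1 + ‖a‖^2) ^ (-(d:ℝ)/2)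
        = (2 * (K:ℝ) * Real.sqrt d * (1 + ‖a‖^2) ^ (-(d:ℝ)/2)) * (1/‖a‖) := by ring
    rw [hre]
    calc (2 * (K:ℝ) * Real.sqrt d * (1 + ‖a‖^2) ^ (-(d:ℝ)/2)) * (1/‖a‖)
        ≤ (2 * (K:ℝ) * Real.sqrt d * (1 + ‖a‖^2) ^ (-(d:ℝ)/2))
            * (Real.sqrt 2 * (1 + ‖a‖^2) ^ (-(1:ℝ)/2)) := by
          apply mul_le_mul_of_nonneg_left hinvr
          positivity
      _ = 2 * Real.sqrt 2 * (K:ℝ) * Real.sqrt d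
            * ((1 + ‖a‖^2) ^ (-(d:ℝ)/2) * (1 + ‖a‖^2) ^ (-(1:ℝ)/2)) := by ring
  have h14 : (1 + ‖a‖^2/4) ^ (-((d:ℝ)/2) - 1)
      ≤ (4:ℝ) ^ ((d:ℝ)/2 + 1) * (1 + ‖a‖^2) ^ (-((d:ℝ)/2) - 1) := by
    have h1 : (1 + ‖a‖^2)/4 ≤ 1 + ‖a‖^2/4 := by nlinarith [sq_nonneg ‖a‖]
    have h2 := Real.rpow_le_rpow_of_nonpos (x := (1 + ‖a‖^2)/4) (y := 1 + ‖a‖^2/4)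
      (z := -((d:ℝ)/2) - 1) (by positivity) h1 (by linarith)
    have h4inv : ((4:ℝ)) ^ (-((d:ℝ)/2) - 1) = ((4:ℝ) ^ ((d:ℝ)/2 + 1))⁻¹ := by
      rw [show -((d:ℝ)/2) - 1 = -((d:ℝ)/2 + 1) by ring,
        Real.rpow_neg (by norm_num : (0:ℝ) ≤ 4)]
    have h3 : ((1 + ‖a‖^2)/4 : ℝ) ^ (-((d:ℝ)/2) - 1)
        = (4:ℝ) ^ ((d:ℝ)/2 + 1) * (1 + ‖a‖^2) ^ (-((d:ℝ)/2) - 1) := by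
      rw [Real.div_rpow hApos.le (by norm_num), h4inv, div_eq_mul_inv, inv_inv, mul_comm]
    rw [h3] at h2
    exact h2
  have hra : ‖a‖ * (1 + ‖a‖^2) ^ (-((d:ℝ)/2) - 1) ≤ (1 + ‖a‖^2) ^ (-((d:ℝ)+1)/2) := by
    have h4 : ‖a‖ ≤ (1 + ‖a‖^2) ^ ((1:ℝ)/2) := by
      rw [← Real.sqrt_eq_rpow]
      calc ‖a‖ = Real.sqrt (‖a‖^2) := (Real.sqrt_sq hrpos.le).symm
        _ ≤ Real.sqrt (1 + ‖a‖^2) := Real.sqrt_le_sqrt (by linarith)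
    calc ‖a‖ * (1 + ‖a‖^2) ^ (-((d:ℝ)/2) - 1)
        ≤ (1 + ‖a‖^2) ^ ((1:ℝ)/2) * (1 + ‖a‖^2) ^ (-((d:ℝ)/2) - 1) :=
          mul_le_mul_of_nonneg_right h4 (Real.rpow_nonneg hApos.le _)
      _ = (1 + ‖a‖^2) ^ (-((d:ℝ)+1)/2) := by
          rw [← Real.rpow_add hApos]; congr 1; ring
  have hb2 : M * (((d:ℝ)/2) * (1 + ‖a‖^2/4) ^ (-((d:ℝ)/2) - 1) * (3 * Real.sqrt d * ‖a‖))
      ≤ M * (3 * Real.sqrt d) * (((d:ℝ)/2) * (4:ℝ) ^ ((d:ℝ)/2 + 1))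
        * (1 + ‖a‖^2) ^ (-((d:ℝ)+1)/2) := by
    calc M * (((d:ℝ)/2) * (1 + ‖a‖^2/4) ^ (-((d:ℝ)/2) - 1) * (3 * Real.sqrt d * ‖a‖))
        ≤ M * (((d:ℝ)/2) * ((4:ℝ) ^ ((d:ℝ)/2 + 1) * (1 + ‖a‖^2) ^ (-((d:ℝ)/2) - 1))
            * (3 * Real.sqrt d * ‖a‖)) := by
          apply mul_le_mul_of_nonneg_left _ hM
          apply mul_le_mul_of_nonneg_right _ (by positivity)
          exact mul_le_mul_of_nonneg_left h14 hp.le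
      _ = (M * (3 * Real.sqrt d) * (((d:ℝ)/2) * (4:ℝ) ^ ((d:ℝ)/2 + 1)))
            * (‖a‖ * (1 + ‖a‖^2) ^ (-((d:ℝ)/2) - 1)) := by ring
      _ ≤ (M * (3 * Real.sqrt d) * (((d:ℝ)/2) * (4:ℝ) ^ ((d:ℝ)/2 + 1)))
            * (1 + ‖a‖^2) ^ (-((d:ℝ)+1)/2) := by
          apply mul_le_mul_of_nonneg_left hra
          positivity
  calc ‖(y u - y v) * (((1 + ‖a‖ ^ 2) ^ (-(d:ℝ)/2) : ℝ) : ℂ)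
        + y v * ((((1 + ‖a‖ ^ 2) ^ (-(d:ℝ)/2) - (1 + ‖t‖ ^ 2) ^ (-(d:ℝ)/2) : ℝ)) : ℂ)‖
      ≤ ‖(y u - y v) * (((1 + ‖a‖ ^ 2) ^ (-(d:ℝ)/2) : ℝ) : ℂ)‖
        + ‖y v * ((((1 + ‖a‖ ^ 2) ^ (-(d:ℝ)/2) - (1 + ‖t‖ ^ 2) ^ (-(d:ℝ)/2) : ℝ)) : ℂ)‖ :=
        norm_add_le _ _
    _ ≤ ((K:ℝ) * (2 * Real.sqrt d / ‖a‖)) * (1 + ‖a‖^2) ^ (-(d:ℝ)/2)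
        + M * (((d:ℝ)/2) * (1 + ‖a‖^2/4) ^ (-((d:ℝ)/2) - 1) * (3 * Real.sqrt d * ‖a‖)) :=
        add_le_add hT1 hT2
    _ ≤ 2 * Real.sqrt 2 * (K:ℝ) * Real.sqrt d * (1 + ‖a‖^2) ^ (-((d:ℝ)+1)/2)
        + M * (3 * Real.sqrt d) * (((d:ℝ)/2) * (4:ℝ) ^ ((d:ℝ)/2 + 1))
          * (1 + ‖a‖^2) ^ (-((d:ℝ)+1)/2) := add_le_add hb1 hb2
    _ = (2 * Real.sqrt 2 * (K:ℝ) * Real.sqrt d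
        + M * (3 * Real.sqrt d) * (((d:ℝ)/2) * (4:ℝ) ^ ((d:ℝ)/2 + 1)))
      * (1 + ‖a‖ ^ 2) ^ (-((d:ℝ)+1)/2) := by ring

-- volume of singleton is zero
lemma vol_singleton_zero (hd1 : 1 ≤ d) : volume ({0} : Set (EuclideanSpace ℝ (Fin d))) = 0 := by
  have he : ({0} : Set (EuclideanSpace ℝ (Fin d)))
      = (MeasurableEquiv.toLp 2 (Fin d → ℝ)).symm ⁻¹' ({0} : Set (Fin d → ℝ)) := by
    ext t
    simp
  rw [he, (EuclideanSpace.volume_preserving_symm_measurableEquiv_toLp (Fin d)).measure_preimage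
    (measurableSet_singleton 0).nullMeasurableSet]
  have hpi : ({0} : Set (Fin d → ℝ)) = Set.pi Set.univ (fun _ => ({0} : Set ℝ)) := by
    ext x
    simp [Set.mem_pi, funext_iff]
  rw [hpi, volume_pi_pi]
  exact Finset.prod_eq_zero (Finset.mem_univ (⟨0, by omega⟩ : Fin d)) Real.volume_singleton

set_option maxHeartbeats 1000000 in
/-- For `d ≥ 2` and `y : S^{d-1} → ℂ` Lipschitz, there is a constant `C` such
that for every nonzero `n ∈ ℤ^d`,
`| y(n/|n|)(1+|n|²)^{-d/2} − ∫_{n+[0,1]^d} y(t/|t|)(1+|t|²)^{-d/2} dt | ≤ C (1+|n|²)^{-(d+1)/2}`. -/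
theorem stmt4 {d : ℕ} (hd : 2 ≤ d)
    (y : Metric.sphere (0 : EuclideanSpace ℝ (Fin d)) 1 → ℂ)
    (K : NNReal) (hy : LipschitzWith K y) :
    ∃ C : ℝ, ∀ n : Fin d → ℤ, n ≠ 0 →
      ‖homogF y (latticeVec n) * (((1 + ‖latticeVec n‖ ^ 2) ^ (-(d : ℝ) / 2) : ℝ) : ℂ)
        - ∫ t in {t : EuclideanSpace ℝ (Fin d) |
              ∀ i, (n i : ℝ) ≤ t i ∧ t i ≤ (n i : ℝ) + 1},
            homogF y t * (((1 + ‖t‖ ^ 2) ^ (-(d : ℝ) / 2) : ℝ) : ℂ) ∂volume‖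
        ≤ C * (1 + ‖latticeVec n‖ ^ 2) ^ (-((d : ℝ) + 1) / 2) := by
  have hd1 : 1 ≤ d := le_trans one_le_two hd
  have hd1' : (1:ℝ) ≤ (d:ℝ) := by exact_mod_cast hd1
  -- a base point on the sphere
  have hu0 : EuclideanSpace.single (⟨0, by omega⟩ : Fin d) (1:ℝ)
      ∈ Metric.sphere (0 : EuclideanSpace ℝ (Fin d)) 1 := by
    simp [mem_sphere_zero_iff_norm, EuclideanSpace.norm_single]
  set u₀ : Metric.sphere (0 : EuclideanSpace ℝ (Fin d)) 1 := ⟨_, hu0⟩ with hu₀def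
  set M : ℝ := ‖y u₀‖ + 2 * K with hMdef
  have hM : 0 ≤ M := by positivity
  have hyM : ∀ v, ‖y v‖ ≤ M := y_bound K hy u₀
  set L : ℝ := 2 * Real.sqrt 2 * (K:ℝ) * Real.sqrt d
      + M * (3 * Real.sqrt d) * (((d:ℝ)/2) * (4:ℝ) ^ ((d:ℝ)/2 + 1)) with hLdef
  have hL : 0 ≤ L := by positivity
  set C0 : ℝ := 2 * M * (1 + 4*(d:ℝ)) ^ (((d:ℝ)+1)/2) with hC0def
  have hC0 : 0 ≤ C0 := by positivity
  refine ⟨L + C0, ?_⟩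
  intro n hn
  set F : EuclideanSpace ℝ (Fin d) → ℂ :=
    fun t => homogF y t * (((1 + ‖t‖ ^ 2) ^ (-(d : ℝ) / 2) : ℝ) : ℂ) with hFdef
  have hFb : ∀ t, ‖F t‖ ≤ M := by
    intro t
    rw [hFdef]
    calc ‖homogF y t * (((1 + ‖t‖ ^ 2) ^ (-(d : ℝ) / 2) : ℝ) : ℂ)‖
        = ‖homogF y t‖ * |(1 + ‖t‖ ^ 2) ^ (-(d : ℝ) / 2)| := by
          rw [norm_mul, Complex.norm_real, Real.norm_eq_abs]
      _ ≤ M * 1 := by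
          apply mul_le_mul (homogF_bound hM hyM t) _ (abs_nonneg _) hM
          rw [abs_of_nonneg (Real.rpow_nonneg (by positivity) _)]
          apply Real.rpow_le_one_of_one_le_of_nonpos (by nlinarith [sq_nonneg ‖t‖])
          have : (0:ℝ) ≤ (d:ℝ) := by positivity
          linarith
      _ = M := mul_one M
  have hS : {t : EuclideanSpace ℝ (Fin d) |
      ∀ i, (n i : ℝ) ≤ t i ∧ t i ≤ (n i : ℝ) + 1} = cubeSet n := rfl
  rw [hS]
  have hSm := cube_meas n
  have hSvol := cube_vol n
  have hSfin : volume (cubeSet n) < ⊤ := by rw [hSvol]; exact ENNReal.one_lt_top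
  -- a.e. strong measurability of F on the cube
  have hg : Continuous (fun t : EuclideanSpace ℝ (Fin d) =>
      (((1 + ‖t‖ ^ 2) ^ (-(d : ℝ) / 2) : ℝ) : ℂ)) := by
    apply Complex.continuous_ofReal.comp
    apply Continuous.rpow_const
    · exact continuous_const.add (continuous_norm.pow 2)
    · intro t; left; positivity
  have hFcont : ContinuousOn F {t : EuclideanSpace ℝ (Fin d) | t ≠ 0} :=
    (homogF_contOn hy).mul hg.continuousOn
  have h0ae : ∀ᵐ (x : EuclideanSpace ℝ (Fin d)) ∂volume, x ≠ 0 := by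
    rw [ae_iff]
    have : {x : EuclideanSpace ℝ (Fin d) | ¬ x ≠ 0} = {0} := by ext x; simp
    rw [this]
    exact vol_singleton_zero hd1
  have hae : (cubeSet n ∩ {t : EuclideanSpace ℝ (Fin d) | t ≠ 0} : Set _)
      =ᵐ[volume] cubeSet n := by
    refine Filter.eventuallyEq_set.2 ?_
    filter_upwards [h0ae] with x hx
    simp [hx]
  have hFm : AEStronglyMeasurable F (volume.restrict (cubeSet n)) := by
    have h1 : MeasurableSet (cubeSet n ∩ {t : EuclideanSpace ℝ (Fin d) | t ≠ 0}) := by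
      apply hSm.inter
      have : {t : EuclideanSpace ℝ (Fin d) | t ≠ 0} = ({0} : Set _)ᶜ := by ext; simp
      rw [this]
      exact (measurableSet_singleton 0).compl
    have h2 := (hFcont.mono Set.inter_subset_right).aestronglyMeasurable (μ := volume) h1
    rwa [Measure.restrict_congr_set hae] at h2
  have hFint : IntegrableOn F (cubeSet n) volume :=
    ⟨hFm, HasFiniteIntegral.restrict_of_bounded (C := M) hSfin
      (Filter.Eventually.of_forall hFb)⟩
  have hconst : IntegrableOn (fun _ : EuclideanSpace ℝ (Fin d) => F (latticeVec n))
      (cubeSet n) volume := by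
    apply integrableOn_const hSfin.ne
  have hcval : ∫ _ in cubeSet n, F (latticeVec n) ∂volume = F (latticeVec n) := by
    rw [setIntegral_const, measureReal_def, hSvol]; simp
  have hkey : F (latticeVec n) - ∫ t in cubeSet n, F t ∂volume
      = ∫ t in cubeSet n, (F (latticeVec n) - F t) ∂volume := by
    rw [integral_sub hconst hFint, hcval]
  show ‖F (latticeVec n) - ∫ t in cubeSet n, F t ∂volume‖
      ≤ (L + C0) * (1 + ‖latticeVec n‖ ^ 2) ^ (-((d : ℝ) + 1) / 2)
  have hApos : (0:ℝ) < 1 + ‖latticeVec n‖^2 := by positivity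
  by_cases hbig : 2 * Real.sqrt d ≤ ‖latticeVec n‖
  · -- large case
    rw [hkey]
    have hbound : ∀ t ∈ cubeSet n, ‖F (latticeVec n) - F t‖
        ≤ L * (1 + ‖latticeVec n‖ ^ 2) ^ (-((d : ℝ) + 1) / 2) := by
      intro t ht
      exact pointwise_est hd1 K hy hM hyM hbig (cube_dist ht)
    calc ‖∫ t in cubeSet n, (F (latticeVec n) - F t) ∂volume‖
        ≤ (L * (1 + ‖latticeVec n‖ ^ 2) ^ (-((d : ℝ) + 1) / 2)) * (volume (cubeSet n)).toReal := by
          apply norm_setIntegral_le_of_norm_le_const_ae' hSfin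
          exact Filter.Eventually.of_forall hbound
      _ = L * (1 + ‖latticeVec n‖ ^ 2) ^ (-((d : ℝ) + 1) / 2) := by
          rw [hSvol]; simp
      _ ≤ (L + C0) * (1 + ‖latticeVec n‖ ^ 2) ^ (-((d : ℝ) + 1) / 2) := by
          apply mul_le_mul_of_nonneg_right (by linarith) (Real.rpow_nonneg hApos.le _)
  · -- small case
    push_neg at hbig
    have hsmall_norm : ‖latticeVec n‖^2 ≤ 4 * (d:ℝ) := by
      have h1 : ‖latticeVec n‖ ≤ 2 * Real.sqrt d := hbig.le
      have h2 : (2 * Real.sqrt d)^2 = 4 * (d:ℝ) := by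
        rw [mul_pow, Real.sq_sqrt (by positivity)]; ring
      nlinarith [norm_nonneg (latticeVec n), Real.sqrt_nonneg (d:ℝ)]
    have hlhs : ‖F (latticeVec n) - ∫ t in cubeSet n, F t ∂volume‖ ≤ 2 * M := by
      have h1 : ‖∫ t in cubeSet n, F t ∂volume‖ ≤ M := by
        calc ‖∫ t in cubeSet n, F t ∂volume‖ ≤ M * (volume (cubeSet n)).toReal := by
              apply norm_setIntegral_le_of_norm_le_const_ae' hSfin
              exact Filter.Eventually.of_forall (fun t _ => hFb t)
          _ = M := by rw [hSvol]; simp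
      calc ‖F (latticeVec n) - ∫ t in cubeSet n, F t ∂volume‖
          ≤ ‖F (latticeVec n)‖ + ‖∫ t in cubeSet n, F t ∂volume‖ := norm_sub_le _ _
        _ ≤ M + M := add_le_add (hFb _) h1
        _ = 2 * M := by ring
    have hrhs : 2 * M ≤ C0 * (1 + ‖latticeVec n‖ ^ 2) ^ (-((d : ℝ) + 1) / 2) := by
      have he : -((d:ℝ)+1)/2 = -(((d:ℝ)+1)/2) := by ring
      have h1 : (1 + ‖latticeVec n‖^2) ^ (((d:ℝ)+1)/2) ≤ (1 + 4*(d:ℝ)) ^ (((d:ℝ)+1)/2) :=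
        Real.rpow_le_rpow hApos.le (by linarith) (by positivity)
      have h2 : (1 + ‖latticeVec n‖^2) ^ (((d:ℝ)+1)/2)
          * (1 + ‖latticeVec n‖^2) ^ (-(((d:ℝ)+1)/2)) = 1 := by
        rw [← Real.rpow_add hApos]; simp
      rw [he]
      calc 2 * M = 2 * M * ((1 + ‖latticeVec n‖^2) ^ (((d:ℝ)+1)/2)
            * (1 + ‖latticeVec n‖^2) ^ (-(((d:ℝ)+1)/2))) := by rw [h2]; ring
        _ ≤ 2 * M * ((1 + 4*(d:ℝ)) ^ (((d:ℝ)+1)/2)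
            * (1 + ‖latticeVec n‖^2) ^ (-(((d:ℝ)+1)/2))) := by
            apply mul_le_mul_of_nonneg_left _ (by positivity)
            exact mul_le_mul_of_nonneg_right h1 (Real.rpow_nonneg hApos.le _)
        _ = C0 * (1 + ‖latticeVec n‖ ^ 2) ^ (-(((d : ℝ) + 1) / 2)) := by
            rw [hC0def]; ring
    calc ‖F (latticeVec n) - ∫ t in cubeSet n, F t ∂volume‖ ≤ 2 * M := hlhs
      _ ≤ C0 * (1 + ‖latticeVec n‖ ^ 2) ^ (-((d : ℝ) + 1) / 2) := hrhs
      _ ≤ (L + C0) * (1 + ‖latticeVec n‖ ^ 2) ^ (-((d : ℝ) + 1) / 2) := by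
          apply mul_le_mul_of_nonneg_right (by linarith) (Real.rpow_nonneg hApos.le _)
end

section
/- Let d ≥ 2 and let g be an invertible real d×d matrix. Then for every b ∈ C(S^{d−1}), ∫_{S^{d−1}} |g t|^{−d} b(g t / |g t|) dσ(t) = |det g|^{−1} ∫_{S^{d−1}} b dσ; that is, m ∘ V_g = |det g|^{−1} m. -/
open MeasureTheory

attribute [local instance] Classical.propDecidable

/-- The homogeneous (degree-zero) extension to `ℝ^d` of a function on the unit sphere:
`homog b t = b (t / ‖t‖)` for `t ≠ 0`, and `0` at `t = 0`. -/
noncomputable def homog {d : ℕ}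
    (b : C(Metric.sphere (0 : EuclideanSpace ℝ (Fin d)) 1, ℂ))
    (t : EuclideanSpace ℝ (Fin d)) : ℂ :=
  if h : ‖t‖⁻¹ • t ∈ Metric.sphere (0 : EuclideanSpace ℝ (Fin d)) 1 then b ⟨_, h⟩ else 0

section
open Set Metric

namespace Stmt6Aux

variable {d : ℕ}

lemma homog_zero (b : C(sphere (0 : EuclideanSpace ℝ (Fin d)) 1, ℂ)) : homog b 0 = 0 := by
  rw [homog, dif_neg]
  simp

lemma homog_smul (b : C(sphere (0 : EuclideanSpace ℝ (Fin d)) 1, ℂ)) {c : ℝ} (hc : 0 < c)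
    (t : EuclideanSpace ℝ (Fin d)) : homog b (c • t) = homog b t := by
  rcases eq_or_ne t 0 with rfl | ht
  · rw [smul_zero]
  · have h : ‖c • t‖⁻¹ • (c • t) = ‖t‖⁻¹ • t := by
      rw [norm_smul, Real.norm_eq_abs, abs_of_pos hc, smul_smul]
      congr 1
      rw [mul_inv, mul_comm, mul_inv_cancel_left₀ hc.ne']
    simp only [homog, h]

lemma homog_coe (b : C(sphere (0 : EuclideanSpace ℝ (Fin d)) 1, ℂ))
    (ω : sphere (0 : EuclideanSpace ℝ (Fin d)) 1) : homog b ω = b ω := by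
  have h1 : ‖(ω : EuclideanSpace ℝ (Fin d))‖ = 1 := norm_eq_of_mem_sphere ω
  have h : ‖(ω : EuclideanSpace ℝ (Fin d))‖⁻¹ • (ω : EuclideanSpace ℝ (Fin d))
      = (ω : EuclideanSpace ℝ (Fin d)) := by rw [h1]; simp
  simp only [homog, h]
  rw [dif_pos ω.2]

lemma norm_homog_le (b : C(sphere (0 : EuclideanSpace ℝ (Fin d)) 1, ℂ))
    (t : EuclideanSpace ℝ (Fin d)) : ‖homog b t‖ ≤ ‖b‖ := by
  rw [homog]
  split
  · exact b.norm_coe_le_norm _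
  · simp

lemma measurable_homog (b : C(sphere (0 : EuclideanSpace ℝ (Fin d)) 1, ℂ)) :
    Measurable (homog b) := by
  have key : homog b = Function.extend (Subtype.val : ({0}ᶜ : Set (EuclideanSpace ℝ (Fin d))) → _)
      (fun x => b ((homeomorphUnitSphereProd (EuclideanSpace ℝ (Fin d)) x).1)) (fun _ => 0) := by
    funext t
    rcases eq_or_ne t 0 with rfl | ht
    · rw [homog_zero, Function.extend_apply']
      rintro ⟨x, hx⟩
      exact x.2 hx
    · have := Subtype.val_injective.extend_apply
        (fun x : ({0}ᶜ : Set (EuclideanSpace ℝ (Fin d))) =>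
          b ((homeomorphUnitSphereProd (EuclideanSpace ℝ (Fin d)) x).1)) (fun _ => 0) ⟨t, ht⟩
      rw [this, homog,
        dif_pos (by rw [mem_sphere_zero_iff_norm, norm_smul, norm_inv, norm_norm,
          inv_mul_cancel₀ (norm_ne_zero_iff.2 ht)])]
      congr 1
      apply Subtype.ext
      rw [homeomorphUnitSphereProd_apply_fst_coe]
  rw [key]
  exact (MeasurableEmbedding.subtype_coe (measurableSet_singleton _).compl).measurable_extend
    ((map_continuous b).comp ((continuous_fst).comp
      (homeomorphUnitSphereProd _).continuous)).measurable measurable_const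


lemma nontriv (hd : 1 ≤ d) : Nontrivial (EuclideanSpace ℝ (Fin d)) :=
  Module.nontrivial_of_finrank_pos (R := ℝ)
    (by rw [finrank_euclideanSpace_fin]; omega)

lemma polar (hd : 1 ≤ d) (f : EuclideanSpace ℝ (Fin d) → ℂ) :
    ∫ p : sphere (0 : EuclideanSpace ℝ (Fin d)) 1 × Ioi (0 : ℝ),
        f ((p.2 : ℝ) • (p.1 : EuclideanSpace ℝ (Fin d)))
      ∂((volume : Measure (EuclideanSpace ℝ (Fin d))).toSphere.prod
          (Measure.volumeIoiPow (Module.finrank ℝ (EuclideanSpace ℝ (Fin d)) - 1)))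
    = ∫ x, f x := by
  haveI := nontriv hd
  rw [← ((volume : Measure (EuclideanSpace ℝ (Fin d))).measurePreserving_homeomorphUnitSphereProd).integral_comp
      (Homeomorph.measurableEmbedding _)
      (fun p : sphere (0 : EuclideanSpace ℝ (Fin d)) 1 × Ioi (0 : ℝ) =>
        f ((p.2 : ℝ) • (p.1 : EuclideanSpace ℝ (Fin d))))]
  have e1 : (fun x : ({0}ᶜ : Set (EuclideanSpace ℝ (Fin d))) =>
      f (((homeomorphUnitSphereProd _ x).2 : ℝ) •
        ((homeomorphUnitSphereProd _ x).1 : EuclideanSpace ℝ (Fin d))))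
      = fun x : ({0}ᶜ : Set (EuclideanSpace ℝ (Fin d))) => f (x : EuclideanSpace ℝ (Fin d)) := by
    funext x
    congr 1
    simp only [homeomorphUnitSphereProd_apply_fst_coe, homeomorphUnitSphereProd_apply_snd_coe]
    exact smul_inv_smul₀ (norm_ne_zero_iff.2 x.2) _
  rw [show (fun x : ({0}ᶜ : Set (EuclideanSpace ℝ (Fin d))) =>
      f ((((homeomorphUnitSphereProd _) x).2 : ℝ) •
        (((homeomorphUnitSphereProd _) x).1 : EuclideanSpace ℝ (Fin d)))) = _ from e1,
    integral_subtype_comap (measurableSet_singleton 0).compl,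
    MeasureTheory.restrict_compl_singleton 0]

lemma integral_volumeIoiPow (n : ℕ) (φ : ℝ → ℂ) :
    ∫ x : Ioi (0 : ℝ), φ x ∂(Measure.volumeIoiPow n)
      = ∫ r in Ioi (0 : ℝ), (r ^ n : ℝ) • φ r := by
  simp only [Measure.volumeIoiPow, ENNReal.ofReal]
  rw [integral_withDensity_eq_integral_smul
      ((measurable_subtype_coe.pow_const _).real_toNNReal),
    integral_subtype_comap measurableSet_Ioi fun a => Real.toNNReal (a ^ n) • φ a]
  refine setIntegral_congr_fun measurableSet_Ioi fun x hx => ?_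
  rw [NNReal.smul_def, Real.coe_toNNReal _ (pow_nonneg hx.out.le _)]


/-- The radial cut-off: the function `y ↦ ‖y‖^{-d} · homog b y` restricted to the shell
`1 < ‖y‖ ≤ 2`. -/
noncomputable def Hfun (b : C(sphere (0 : EuclideanSpace ℝ (Fin d)) 1, ℂ)) :
    EuclideanSpace ℝ (Fin d) → ℂ :=
  fun y => Set.indicator {y : EuclideanSpace ℝ (Fin d) | ‖y‖ ∈ Ioc (1:ℝ) 2}
    (fun y => (((‖y‖ ^ d)⁻¹ : ℝ) : ℂ) * homog b y) y

lemma measurableSet_shell :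
    MeasurableSet {y : EuclideanSpace ℝ (Fin d) | ‖y‖ ∈ Ioc (1:ℝ) 2} :=
  measurable_norm measurableSet_Ioc

lemma measurable_Hfun (b : C(sphere (0 : EuclideanSpace ℝ (Fin d)) 1, ℂ)) :
    Measurable (Hfun b) := by
  refine Measurable.indicator ?_ measurableSet_shell
  exact (Complex.measurable_ofReal.comp ((measurable_norm.pow_const d).inv)).mul
    (measurable_homog b)

lemma norm_Hfun_le (b : C(sphere (0 : EuclideanSpace ℝ (Fin d)) 1, ℂ))
    (y : EuclideanSpace ℝ (Fin d)) : ‖Hfun b y‖ ≤ ‖b‖ := by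
  rw [Hfun]
  by_cases h : y ∈ {y : EuclideanSpace ℝ (Fin d) | ‖y‖ ∈ Ioc (1:ℝ) 2}
  · rw [Set.indicator_of_mem h, norm_mul, Complex.norm_real, Real.norm_eq_abs]
    have h1 : (1:ℝ) ≤ ‖y‖ ^ d := one_le_pow₀ h.1.le
    have h2 : |(‖y‖ ^ d)⁻¹| ≤ 1 := by
      rw [abs_of_nonneg (by positivity)]
      exact inv_le_one_of_one_le₀ h1
    calc |(‖y‖ ^ d)⁻¹| * ‖homog b y‖ ≤ 1 * ‖b‖ :=
          mul_le_mul h2 (norm_homog_le b y) (norm_nonneg _) zero_le_one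
    _ = ‖b‖ := one_mul _
  · rw [Set.indicator_of_notMem h]
    simp [norm_nonneg]

lemma Hfun_smul (b : C(sphere (0 : EuclideanSpace ℝ (Fin d)) 1, ℂ))
    {y : EuclideanSpace ℝ (Fin d)} {r : ℝ} (hr : 0 < r) :
    Hfun b (r • y) = (Ioc (1:ℝ) 2).indicator (fun s : ℝ => (((s ^ d)⁻¹ : ℝ) : ℂ)) (r * ‖y‖)
      * homog b y := by
  have hn : ‖r • y‖ = r * ‖y‖ := by rw [norm_smul, Real.norm_eq_abs, abs_of_pos hr]
  by_cases h : r * ‖y‖ ∈ Ioc (1:ℝ) 2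
  · rw [Hfun, Set.indicator_of_mem (show r • y ∈ {y : EuclideanSpace ℝ (Fin d) | ‖y‖ ∈ Ioc (1:ℝ) 2}
        from by rw [mem_setOf_eq, hn]; exact h),
      Set.indicator_of_mem h, hn, homog_smul b hr]
  · rw [Hfun, Set.indicator_of_notMem (show r • y ∉ {y : EuclideanSpace ℝ (Fin d) | ‖y‖ ∈ Ioc (1:ℝ) 2}
        from by rw [mem_setOf_eq, hn]; exact h),
      Set.indicator_of_notMem h, zero_mul]

lemma inner_calc (hd : 1 ≤ d) {c : ℝ} (hc : 0 < c) :
    (∫ r in Ioi (0 : ℝ), (r ^ (d - 1) : ℝ) •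
        (Ioc (1:ℝ) 2).indicator (fun s : ℝ => (((s ^ d)⁻¹ : ℝ) : ℂ)) (r * c))
      = (((c ^ d)⁻¹ * Real.log 2 : ℝ) : ℂ) := by
  have hset : ∀ r : ℝ, (r ^ (d - 1) : ℝ) •
      (Ioc (1:ℝ) 2).indicator (fun s : ℝ => (((s ^ d)⁻¹ : ℝ) : ℂ)) (r * c)
      = (Ioc (1/c) (2/c)).indicator (fun r : ℝ => (((c ^ d)⁻¹ * r⁻¹ : ℝ) : ℂ)) r := by
    intro r
    by_cases h : r ∈ Ioc (1/c) (2/c)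
    · have hm : r * c ∈ Ioc (1:ℝ) 2 := ⟨(div_lt_iff₀ hc).1 h.1, (le_div_iff₀ hc).1 h.2⟩
      rw [Set.indicator_of_mem hm, Set.indicator_of_mem h]
      have hr : 0 < r := lt_trans (by positivity) h.1
      rw [Complex.real_smul, ← Complex.ofReal_mul]
      congr 1
      have hrd : r ^ d = r ^ (d - 1) * r := by
        rw [← pow_succ, Nat.sub_add_cancel hd]
      rw [mul_pow, hrd]
      field_simp
    · rw [Set.indicator_of_notMem h, Set.indicator_of_notMem
        (fun hm => h ⟨(div_lt_iff₀ hc).2 hm.1, (le_div_iff₀ hc).2 hm.2⟩), smul_zero]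
  simp only [hset]
  have hsub : Ioc (1/c) (2/c) ⊆ Ioi (0:ℝ) := fun x hx => lt_trans (by positivity) hx.1
  rw [integral_indicator measurableSet_Ioc, Measure.restrict_restrict measurableSet_Ioc,
    Set.inter_eq_self_of_subset_left hsub]
  simp_rw [Complex.ofReal_mul]
  rw [MeasureTheory.integral_const_mul]
  rw [show (∫ x in Ioc (1/c) (2/c), ((x⁻¹ : ℝ) : ℂ)) = (((∫ x in Ioc (1/c) (2/c), x⁻¹) : ℝ) : ℂ)
    from integral_ofReal]
  have hab : (1/c) ≤ (2/c) := by
    gcongr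
    norm_num
  have h0 : (0:ℝ) ∉ Set.uIcc (1/c) (2/c) := by
    rw [Set.uIcc_of_le hab]
    intro h0
    exact absurd h0.1 (not_le.2 (by positivity))
  open intervalIntegral in
  rw [← intervalIntegral.integral_of_le hab, integral_inv h0]
  congr 2
  field_simp


lemma integrable_Hfun_comp (b : C(sphere (0 : EuclideanSpace ℝ (Fin d)) 1, ℂ))
    (L : EuclideanSpace ℝ (Fin d) ≃L[ℝ] EuclideanSpace ℝ (Fin d)) :
    Integrable (fun x : EuclideanSpace ℝ (Fin d) => Hfun b (L x)) volume := by
  have hmeas : Measurable fun x : EuclideanSpace ℝ (Fin d) => Hfun b (L x) :=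
    (measurable_Hfun b).comp L.continuous.measurable
  set S : Set (EuclideanSpace ℝ (Fin d)) := ⇑L ⁻¹' (closedBall (0 : EuclideanSpace ℝ (Fin d)) 2)
    with hS
  have hScompact : IsCompact S := by
    have h : S = ⇑L.symm '' (closedBall (0 : EuclideanSpace ℝ (Fin d)) 2) := by
      rw [ContinuousLinearEquiv.image_symm_eq_preimage]
    rw [h]
    exact (isCompact_closedBall _ _).image L.symm.continuous
  have hSm : MeasurableSet S := hScompact.measurableSet
  have heq : (fun x => Hfun b (L x)) = S.indicator (fun x => Hfun b (L x)) := by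
    funext x
    by_cases hx : x ∈ S
    · rw [Set.indicator_of_mem hx]
    · rw [Set.indicator_of_notMem hx, Hfun, Set.indicator_of_notMem]
      intro hm
      exact hx (by simpa [hS, mem_closedBall_zero_iff] using hm.2)
  rw [heq]
  refine MeasureTheory.IntegrableOn.integrable_indicator ?_ hSm
  refine Measure.integrableOn_of_bounded hScompact.measure_lt_top.ne
    hmeas.aestronglyMeasurable (M := ‖b‖) ?_
  exact Filter.Eventually.of_forall fun x => norm_Hfun_le b (L x)

lemma key (hd : 1 ≤ d) (b : C(sphere (0 : EuclideanSpace ℝ (Fin d)) 1, ℂ))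
    (L : EuclideanSpace ℝ (Fin d) ≃L[ℝ] EuclideanSpace ℝ (Fin d)) :
    (∫ x, Hfun b (L x))
      = ((Real.log 2 : ℝ) : ℂ) *
        ∫ ω : sphere (0 : EuclideanSpace ℝ (Fin d)) 1,
          (((‖L (ω : EuclideanSpace ℝ (Fin d))‖ ^ d)⁻¹ : ℝ) : ℂ)
            * homog b (L (ω : EuclideanSpace ℝ (Fin d)))
          ∂(volume : Measure (EuclideanSpace ℝ (Fin d))).toSphere := by
  haveI := nontriv hd
  have hfr : Module.finrank ℝ (EuclideanSpace ℝ (Fin d)) = d := finrank_euclideanSpace_fin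
  rw [← polar hd fun x => Hfun b (L x)]
  have hint : Integrable
      (fun p : sphere (0 : EuclideanSpace ℝ (Fin d)) 1 × Ioi (0:ℝ) =>
        Hfun b (L ((p.2 : ℝ) • (p.1 : EuclideanSpace ℝ (Fin d)))))
      ((volume : Measure (EuclideanSpace ℝ (Fin d))).toSphere.prod
        (Measure.volumeIoiPow (Module.finrank ℝ (EuclideanSpace ℝ (Fin d)) - 1))) := by
    rw [← ((volume : Measure (EuclideanSpace ℝ (Fin d))).measurePreserving_homeomorphUnitSphereProd).integrable_comp_emb
      (Homeomorph.measurableEmbedding _)]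
    have e1 : ((fun p : sphere (0 : EuclideanSpace ℝ (Fin d)) 1 × Ioi (0:ℝ) =>
        Hfun b (L ((p.2 : ℝ) • (p.1 : EuclideanSpace ℝ (Fin d)))))
          ∘ (homeomorphUnitSphereProd (EuclideanSpace ℝ (Fin d))))
        = fun x : ({0}ᶜ : Set (EuclideanSpace ℝ (Fin d))) => Hfun b (L (x : EuclideanSpace ℝ (Fin d))) := by
      funext x
      simp only [Function.comp_apply, homeomorphUnitSphereProd_apply_fst_coe,
        homeomorphUnitSphereProd_apply_snd_coe]
      rw [smul_inv_smul₀ (norm_ne_zero_iff.2 x.2)]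
    rw [e1]
    have hmap : Measure.map (Subtype.val)
        (Measure.comap (Subtype.val) (volume : Measure (EuclideanSpace ℝ (Fin d))))
        = (volume : Measure (EuclideanSpace ℝ (Fin d))).restrict ({0}ᶜ) :=
      map_comap_subtype_coe (measurableSet_singleton 0).compl _
    have h4 := ((MeasurableEmbedding.subtype_coe (measurableSet_singleton
        (0 : EuclideanSpace ℝ (Fin d))).compl).integrable_map_iff
        (μ := Measure.comap (Subtype.val) (volume : Measure (EuclideanSpace ℝ (Fin d))))
        (g := fun x : EuclideanSpace ℝ (Fin d) => Hfun b (L x))).1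
    rw [hmap, MeasureTheory.restrict_compl_singleton] at h4
    exact h4 (integrable_Hfun_comp b L)
  rw [MeasureTheory.integral_prod _ hint]
  have hinner : ∀ ω : sphere (0 : EuclideanSpace ℝ (Fin d)) 1,
      (∫ r : Ioi (0:ℝ), Hfun b (L ((r : ℝ) • (ω : EuclideanSpace ℝ (Fin d))))
        ∂(Measure.volumeIoiPow (Module.finrank ℝ (EuclideanSpace ℝ (Fin d)) - 1)))
      = ((Real.log 2 : ℝ) : ℂ) *
          ((((‖L (ω : EuclideanSpace ℝ (Fin d))‖ ^ d)⁻¹ : ℝ) : ℂ)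
            * homog b (L (ω : EuclideanSpace ℝ (Fin d)))) := by
    intro ω
    have hy : L (ω : EuclideanSpace ℝ (Fin d)) ≠ 0 := by
      intro h
      exact ne_of_mem_sphere ω.2 one_ne_zero (by simpa using L.map_eq_zero_iff.1 h)
    have hc : 0 < ‖L (ω : EuclideanSpace ℝ (Fin d))‖ := norm_pos_iff.2 hy
    rw [integral_volumeIoiPow _
      (fun t : ℝ => Hfun b (L (t • (ω : EuclideanSpace ℝ (Fin d))))), hfr]
    have hcong : ∀ r ∈ Ioi (0:ℝ), (r ^ (d - 1) : ℝ) •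
        Hfun b (L (r • (ω : EuclideanSpace ℝ (Fin d))))
        = ((r ^ (d - 1) : ℝ) • (Ioc (1:ℝ) 2).indicator (fun s : ℝ => (((s ^ d)⁻¹ : ℝ) : ℂ))
            (r * ‖L (ω : EuclideanSpace ℝ (Fin d))‖))
          * homog b (L (ω : EuclideanSpace ℝ (Fin d))) := by
      intro r hr
      rw [L.map_smul, Hfun_smul b hr, smul_mul_assoc]
    rw [setIntegral_congr_fun measurableSet_Ioi hcong, MeasureTheory.integral_mul_const,
      inner_calc hd hc, Complex.ofReal_mul]
    ring
  rw [funext hinner, MeasureTheory.integral_const_mul]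

end Stmt6Aux

end

/-- For `d ≥ 2` and `g` an invertible real `d×d` matrix, for every
`b ∈ C(S^{d-1})`:
`∫_{S^{d-1}} |gt|^{-d} b(gt/|gt|) dσ(t) = |det g|⁻¹ ∫_{S^{d-1}} b dσ`,
where `σ` is the rotation-invariant surface measure on the unit sphere. -/
theorem stmt6 {d : ℕ} (hd : 2 ≤ d)
    (g : Matrix (Fin d) (Fin d) ℝ) (hg : g.det ≠ 0)
    (b : C(Metric.sphere (0 : EuclideanSpace ℝ (Fin d)) 1, ℂ)) :
    (∫ t : Metric.sphere (0 : EuclideanSpace ℝ (Fin d)) 1,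
        (((‖Matrix.toEuclideanLin g t‖ ^ d)⁻¹ : ℝ) : ℂ) *
          homog b (Matrix.toEuclideanLin g t)
        ∂((volume : Measure (EuclideanSpace ℝ (Fin d))).toSphere))
      = ((|g.det|⁻¹ : ℝ) : ℂ) *
        ∫ t, b t ∂((volume : Measure (EuclideanSpace ℝ (Fin d))).toSphere) := by
  have hd1 : 1 ≤ d := le_trans one_le_two hd
  have hunit : IsUnit ((LinearMap.toMatrix (PiLp.basisFun 2 ℝ (Fin d)) (PiLp.basisFun 2 ℝ (Fin d))
      (Matrix.toEuclideanLin g)).det) := by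
    rw [Matrix.toEuclideanLin_eq_toLin, LinearMap.toMatrix_toLin]
    exact isUnit_iff_ne_zero.2 hg
  let L : EuclideanSpace ℝ (Fin d) ≃L[ℝ] EuclideanSpace ℝ (Fin d) :=
    (LinearEquiv.ofIsUnitDet hunit).toContinuousLinearEquiv
  have hLa : ∀ x, L x = Matrix.toEuclideanLin g x := fun x => rfl
  have hLlin : ((L : EuclideanSpace ℝ (Fin d) →ₗ[ℝ] EuclideanSpace ℝ (Fin d)))
      = Matrix.toEuclideanLin g := LinearMap.ext fun x => hLa x
  have hdet : LinearMap.det ((L : EuclideanSpace ℝ (Fin d) →ₗ[ℝ] EuclideanSpace ℝ (Fin d)))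
      = g.det := by
    rw [hLlin, Matrix.toEuclideanLin_eq_toLin, LinearMap.det_toLin]
  have key1 := Stmt6Aux.key hd1 b L
  have key2 := Stmt6Aux.key hd1 b
    (ContinuousLinearEquiv.refl ℝ (EuclideanSpace ℝ (Fin d)))
  have e2 : (fun ω : Metric.sphere (0 : EuclideanSpace ℝ (Fin d)) 1 =>
      (((‖(ContinuousLinearEquiv.refl ℝ (EuclideanSpace ℝ (Fin d)))
          (ω : EuclideanSpace ℝ (Fin d))‖ ^ d)⁻¹ : ℝ) : ℂ)
        * homog b ((ContinuousLinearEquiv.refl ℝ (EuclideanSpace ℝ (Fin d)))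
          (ω : EuclideanSpace ℝ (Fin d))))
      = fun ω => b ω := by
    funext ω
    have h1 : ‖(ω : EuclideanSpace ℝ (Fin d))‖ = 1 := norm_eq_of_mem_sphere ω
    simp [ContinuousLinearEquiv.coe_refl, h1, Stmt6Aux.homog_coe]
  rw [e2] at key2
  simp only [ContinuousLinearEquiv.refl_apply] at key2
  have hmeas := Stmt6Aux.measurable_Hfun b
  have hmap : Measure.map (⇑L) (volume : Measure (EuclideanSpace ℝ (Fin d)))
      = ENNReal.ofReal |(g.det)⁻¹| • volume := by
    have h2 := Measure.map_linearMap_addHaar_eq_smul_addHaar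
      (volume : Measure (EuclideanSpace ℝ (Fin d)))
      (f := (L : EuclideanSpace ℝ (Fin d) →ₗ[ℝ] EuclideanSpace ℝ (Fin d)))
      (by rw [hdet]; exact hg)
    rw [hdet] at h2
    exact h2
  have cov : (∫ x, Stmt6Aux.Hfun b (L x))
      = |(g.det)⁻¹| • ∫ y, Stmt6Aux.Hfun b y := by
    rw [← integral_map L.continuous.measurable.aemeasurable hmeas.aestronglyMeasurable,
      hmap, integral_smul_measure, ENNReal.toReal_ofReal (abs_nonneg _)]
  rw [cov, key2] at key1
  have hlog : ((Real.log 2 : ℝ) : ℂ) ≠ 0 := by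
    simp only [ne_eq, Complex.ofReal_eq_zero]
    exact (Real.log_pos one_lt_two).ne'
  apply mul_left_cancel₀ hlog
  simp only [hLa] at key1
  rw [← key1, Complex.real_smul]
  push_cast [abs_inv]
  ring
end

section
/- Let d ≥ 2 be even and let l be a continuous linear functional on C(S^{d−1}) such that l(V_g b) = l(b) for every g ∈ Sp(d,ℝ) and every b ∈ C(S^{d−1}). If n ∈ ℕ^d is a multi-index such that at least one entry n_j is odd, then l(b_n) = 0. -/
open MeasureTheory

/-- The standard symplectic form matrix `Ω`: block-diagonal with `d/2` diagonal blocks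
`((0, 1), (-1, 0))`. -/
def Omega (d : ℕ) : Matrix (Fin d) (Fin d) ℝ :=
  Matrix.of fun i j =>
    if i.val % 2 = 0 ∧ j.val = i.val + 1 then 1
    else if j.val % 2 = 0 ∧ i.val = j.val + 1 then -1
    else 0

attribute [local instance] Classical.propDecidable

namespace Stmt9Aux

open Finset Matrix Real

/-! ### The core roots-of-unity sum identity -/

lemma core_sum (a b : ℕ) (hab : Odd a ∨ Odd b) (P Q ζ η : ℂ) (hζη : ζ * η = 1)
    (hprim : IsPrimitiveRoot ζ (a + b + 1)) :
    ∑ m ∈ range (a + b + 1),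
      (P * ζ ^ m + Q * η ^ m) ^ a * (P * ζ ^ m - Q * η ^ m) ^ b = 0 := by
  set M := a + b + 1 with hM
  have hζ0 : ζ ≠ 0 := left_ne_zero_of_mul_eq_one hζη
  have hη : η = ζ⁻¹ := eq_inv_of_mul_eq_one_right (mul_comm ζ η ▸ hζη)
  set c : ℕ → ℕ → ℂ := fun p q =>
    P ^ (p + q) * Q ^ ((a - p) + (b - q)) * (-1) ^ (b - q) * (a.choose p) * (b.choose q) with hc
  set ρ : ℕ → ℕ → ℂ := fun p q => ζ ^ (p + q) * η ^ ((a - p) + (b - q)) with hρ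
  have expand : ∀ m, (P * ζ ^ m + Q * η ^ m) ^ a * (P * ζ ^ m - Q * η ^ m) ^ b
      = ∑ p ∈ range (a + 1), ∑ q ∈ range (b + 1), c p q * (ρ p q) ^ m := by
    intro m
    rw [add_pow, sub_eq_add_neg, add_pow, sum_mul_sum]
    refine Finset.sum_congr rfl fun p hp => Finset.sum_congr rfl fun q hq => ?_
    simp only [hc, hρ]
    ring
  rw [Finset.sum_congr rfl fun m _ => expand m]
  rw [Finset.sum_comm]
  have inner : ∀ p ∈ range (a+1), ∀ q ∈ range (b+1),
      ∑ m ∈ range M, c p q * (ρ p q) ^ m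
        = if 2 * (p + q) = a + b then c p q * M else 0 := by
    intro p hp q hq
    rw [← Finset.mul_sum]
    by_cases hcond : 2 * (p + q) = a + b
    · rw [if_pos hcond]
      have hu : (a - p) + (b - q) = p + q := by
        simp only [mem_range] at hp hq; omega
      have : ρ p q = 1 := by
        simp only [hρ, hu, ← mul_pow, hζη, one_pow]
      rw [this]
      simp
    · rw [if_neg hcond]
      have hζM : ζ ^ M = 1 := hprim.pow_eq_one
      have hρM : (ρ p q) ^ M = 1 := by
        have hrw : ρ p q = ζ ^ (p + q) * (ζ ^ ((a - p) + (b - q)))⁻¹ := by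
          simp [hρ, hη, inv_pow]
        rw [hrw, mul_pow, ← pow_mul, mul_comm (p + q) M, pow_mul, hζM, one_pow,
          inv_pow, ← pow_mul, mul_comm ((a - p) + (b - q)) M, pow_mul, hζM, one_pow,
          inv_one, mul_one]
      have hρ1 : ρ p q ≠ 1 := by
        intro h1
        have hval : ζ ^ (p + q) = ζ ^ ((a - p) + (b - q)) := by
          have := congrArg (· * ζ ^ ((a - p) + (b - q))) h1
          simp only [one_mul] at this
          calc ζ ^ (p+q) = ζ ^ (p+q) * (η * ζ) ^ ((a-p)+(b-q)) := by
                rw [mul_comm η ζ, hζη, one_pow, mul_one]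
            _ = ρ p q * ζ ^ ((a-p)+(b-q)) := by simp only [hρ, mul_pow]; ring
            _ = ζ ^ ((a-p)+(b-q)) := by rw [h1, one_mul]
        have h1lt : p + q < M := by simp only [mem_range] at hp hq; omega
        have h2lt : (a - p) + (b - q) < M := by simp only [mem_range] at hp hq; omega
        have := hprim.pow_inj h1lt h2lt hval
        simp only [mem_range] at hp hq
        omega
      rw [geom_sum_eq hρ1, hρM, sub_self, zero_div, mul_zero]
  rw [Finset.sum_congr rfl fun p hp => Finset.sum_comm]
  rw [Finset.sum_congr rfl fun p hp => Finset.sum_congr rfl fun q hq => inner p hp q hq]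
  set F : ℕ → ℕ → ℂ := fun p q => if 2 * (p + q) = a + b then c p q * M else 0 with hF
  have hflip : ∀ p ∈ range (a+1), ∀ q ∈ range (b+1), F (a - p) (b - q) = - F p q := by
    intro p hp q hq
    simp only [mem_range] at hp hq
    by_cases hcond : 2 * (p + q) = a + b
    · have hcond' : 2 * ((a - p) + (b - q)) = a + b := by omega
      have hbodd : Odd b := by
        rcases hab with ha | hb
        · rcases ha with ⟨k, hk⟩; exact ⟨p + q - k - 1, by omega⟩
        · exact hb
      simp only [hF, if_pos hcond, if_pos hcond']
      have e1 : (a - p) + (b - q) = p + q := by omega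
      have e2 : a - (a - p) = p := by omega
      have e3 : b - (b - q) = q := by omega
      have e4 : a.choose (a - p) = a.choose p := Nat.choose_symm (by omega)
      have e5 : b.choose (b - q) = b.choose q := Nat.choose_symm (by omega)
      have esign : ((-1 : ℂ)) ^ q = - (-1) ^ (b - q) := by
        have : ((-1 : ℂ)) ^ q * (-1) ^ (b - q) = (-1) ^ b := by
          rw [← pow_add]; congr 1; omega
        rw [hbodd.neg_one_pow] at this
        have h2 : ((-1:ℂ)) ^ (b-q) * ((-1:ℂ)) ^ (b-q) = 1 := by
          rw [← pow_add, Even.neg_one_pow ⟨b - q, rfl⟩]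
        calc ((-1:ℂ))^q = ((-1:ℂ))^q * (((-1:ℂ))^(b-q) * ((-1:ℂ))^(b-q)) := by rw [h2, mul_one]
          _ = (((-1:ℂ))^q * ((-1:ℂ))^(b-q)) * ((-1:ℂ))^(b-q) := by ring
          _ = - (-1)^(b-q) := by rw [this]; ring
      simp only [hc, e1, e2, e3, e4, e5, esign]
      ring
    · have hcond' : ¬ (2 * ((a - p) + (b - q)) = a + b) := by omega
      simp only [hF, if_neg hcond, if_neg hcond', neg_zero]
  have hreflect : ∑ p ∈ range (a+1), ∑ q ∈ range (b+1), F p q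
      = ∑ p ∈ range (a+1), ∑ q ∈ range (b+1), F (a - p) (b - q) := by
    rw [← Finset.sum_range_reflect (fun p => ∑ q ∈ range (b+1), F p q) (a+1)]
    refine Finset.sum_congr rfl fun p hp => ?_
    rw [← Finset.sum_range_reflect (fun q => F (a + 1 - 1 - p) q) (b+1)]
    refine Finset.sum_congr rfl fun q hq => ?_
    congr 1 <;> omega
  have hneg : ∑ p ∈ range (a+1), ∑ q ∈ range (b+1), F p q
      = - ∑ p ∈ range (a+1), ∑ q ∈ range (b+1), F p q := by
    nth_rewrite 1 [hreflect]
    rw [← Finset.sum_neg_distrib]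
    exact Finset.sum_congr rfl fun p hp => by
      rw [← Finset.sum_neg_distrib]
      exact Finset.sum_congr rfl fun q hq => hflip p hp q hq
  have h2 : (2 : ℂ) * ∑ p ∈ range (a+1), ∑ q ∈ range (b+1), F p q = 0 := by
    linear_combination hneg
  have := (mul_eq_zero.mp h2).resolve_left two_ne_zero
  convert this using 2

/-! ### Complex exponential / trigonometric identities -/

lemma cosC (u : ℝ) : ((Real.cos u : ℝ) : ℂ)
    = (Complex.exp ((u : ℂ) * Complex.I) + Complex.exp (-((u : ℂ) * Complex.I))) / 2 := by
  rw [Complex.ofReal_cos, Complex.cos, neg_mul]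

lemma sinC (u : ℝ) : ((Real.sin u : ℝ) : ℂ)
    = (Complex.exp (-((u : ℂ) * Complex.I)) - Complex.exp ((u : ℂ) * Complex.I)) * Complex.I / 2 := by
  rw [Complex.ofReal_sin, Complex.sin, neg_mul]

lemma trig_sum (a b : ℕ) (hab : Odd a ∨ Odd b) (x y : ℝ) (θ : ℕ → ℝ)
    (hθ : ∀ m : ℕ, θ m = 2 * π * m / (a + b + 1)) :
    ∑ m ∈ range (a + b + 1),
      (((Real.cos (θ m) * x + Real.sin (θ m) * y : ℝ) : ℂ)) ^ a
        * (((-Real.sin (θ m) * x + Real.cos (θ m) * y : ℝ) : ℂ)) ^ b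
      = 0 := by
  simp only [hθ]
  have hM0 : ((a + b + 1 : ℕ) : ℂ) ≠ 0 := Nat.cast_ne_zero.mpr (by omega)
  set ζ : ℂ := Complex.exp (2 * ↑π * Complex.I / ((a + b + 1 : ℕ) : ℂ)) with hζ
  set η : ℂ := Complex.exp (-(2 * ↑π * Complex.I / ((a + b + 1 : ℕ) : ℂ))) with hη
  have hζη : ζ * η = 1 := by
    rw [hζ, hη, ← Complex.exp_add, add_neg_cancel, Complex.exp_zero]
  have hprim : IsPrimitiveRoot ζ (a + b + 1) := Complex.isPrimitiveRoot_exp _ (by omega)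
  set P : ℂ := (x : ℂ) - (y : ℂ) * Complex.I with hP
  set Q : ℂ := (x : ℂ) + (y : ℂ) * Complex.I with hQ
  have key := core_sum a b hab P Q ζ η hζη hprim
  calc ∑ m ∈ range (a + b + 1), _ = ∑ m ∈ range (a + b + 1), ((2:ℂ)⁻¹ ^ (a+b) * Complex.I ^ b) *
        ((P * ζ ^ m + Q * η ^ m) ^ a * (P * ζ ^ m - Q * η ^ m) ^ b) := ?_
    _ = 0 := by rw [← Finset.mul_sum, key, mul_zero]
  refine Finset.sum_congr rfl fun m hm => ?_
  have hζm : ζ ^ m = Complex.exp (((2 * π * m / (a + b + 1) : ℝ) : ℂ) * Complex.I) := by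
    rw [hζ, ← Complex.exp_nat_mul]
    congr 1
    push_cast
    field_simp
  have hηm : η ^ m = Complex.exp (-(((2 * π * m / (a + b + 1) : ℝ) : ℂ) * Complex.I)) := by
    rw [hη, ← Complex.exp_nat_mul]
    congr 1
    push_cast
    field_simp
  have hA : ((Real.cos (2 * π * m / (a + b + 1)) * x + Real.sin (2 * π * m / (a + b + 1)) * y : ℝ) : ℂ)
      = (P * ζ ^ m + Q * η ^ m) / 2 := by
    rw [Complex.ofReal_add, Complex.ofReal_mul, Complex.ofReal_mul, cosC, sinC, ← hζm, ← hηm,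
      hP, hQ]
    ring
  have hB : ((-Real.sin (2 * π * m / (a + b + 1)) * x + Real.cos (2 * π * m / (a + b + 1)) * y : ℝ) : ℂ)
      = Complex.I * (P * ζ ^ m - Q * η ^ m) / 2 := by
    rw [Complex.ofReal_add, Complex.ofReal_mul, Complex.ofReal_mul, Complex.ofReal_neg,
      cosC, sinC, ← hζm, ← hηm, hP, hQ]
    linear_combination ((y:ℂ) * (ζ^m + η^m)/2) * Complex.I_sq
  rw [hA, hB, div_pow, div_pow, mul_pow]
  simp only [div_eq_mul_inv, inv_pow, pow_add]
  ring

/-! ### Rotation matrices inside a symplectic block -/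

def rotM {d : ℕ} (j0 j1 : Fin d) (co si : ℝ) : Matrix (Fin d) (Fin d) ℝ :=
  Matrix.of fun p q =>
    if p = j0 then (if q = j0 then co else if q = j1 then si else 0)
    else if p = j1 then (if q = j0 then -si else if q = j1 then co else 0)
    else if p = q then 1 else 0

variable {d : ℕ}

lemma row2 (j0 j1 : Fin d) (hne : j0 ≠ j1) (α β : ℝ) (v : Fin d → ℝ) :
    ∑ q, (if q = j0 then α else if q = j1 then β else 0) * v q = α * v j0 + β * v j1 := by
  rw [← Finset.sum_subset (Finset.subset_univ ({j0, j1} : Finset (Fin d)))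
      (fun q _ hq => ?_)]
  · rw [Finset.sum_pair hne]
    simp [hne, Ne.symm hne]
  · simp only [Finset.mem_insert, Finset.mem_singleton, not_or] at hq
    rw [if_neg hq.1, if_neg hq.2, zero_mul]

lemma row1 (p : Fin d) (v : Fin d → ℝ) :
    ∑ q, (if p = q then (1:ℝ) else 0) * v q = v p := by
  simp [ite_mul, Finset.sum_ite_eq]

lemma rotM_mulVec (j0 j1 : Fin d) (co si : ℝ) (hne : j0 ≠ j1) (v : Fin d → ℝ) (p : Fin d) :
    (rotM j0 j1 co si).mulVec v p =
      if p = j0 then co * v j0 + si * v j1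
      else if p = j1 then -si * v j0 + co * v j1
      else v p := by
  rw [Matrix.mulVec, dotProduct]
  by_cases h0 : p = j0
  · rw [if_pos h0]
    simp only [rotM, Matrix.of_apply, if_pos h0]
    exact row2 j0 j1 hne co si v
  · by_cases h1 : p = j1
    · rw [if_neg h0, if_pos h1]
      simp only [rotM, Matrix.of_apply, if_neg h0, if_pos h1]
      exact row2 j0 j1 hne (-si) co v
    · rw [if_neg h0, if_neg h1]
      simp only [rotM, Matrix.of_apply, if_neg h0, if_neg h1]
      exact row1 p v

def alC {d : ℕ} (j0 j1 : Fin d) (co si : ℝ) (i : Fin d) : ℝ :=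
  if i = j0 then co else if i = j1 then si else 0
def beC {d : ℕ} (j0 j1 : Fin d) (co si : ℝ) (i : Fin d) : ℝ :=
  if i = j0 then -si else if i = j1 then co else 0
def gaC {d : ℕ} (j0 j1 : Fin d) (i : Fin d) : ℝ :=
  if i = j0 then 0 else if i = j1 then 0 else 1

lemma col_decomp (j0 j1 : Fin d) (co si : ℝ) (hne : j0 ≠ j1) (p i : Fin d) :
    rotM j0 j1 co si p i =
      alC j0 j1 co si i * (if p = j0 then 1 else 0)
      + beC j0 j1 co si i * (if p = j1 then 1 else 0)
      + gaC j0 j1 i * (if p = i then 1 else 0) := by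
  simp only [rotM, Matrix.of_apply, alC, beC, gaC]
  split_ifs <;> simp_all <;> ring

lemma sum3L (A B C : ℝ) (c1 c2 c3 : Fin d) (f : Fin d → ℝ) :
    ∑ p, (A * (if p = c1 then (1:ℝ) else 0) + B * (if p = c2 then 1 else 0)
        + C * (if p = c3 then 1 else 0)) * f p
      = A * f c1 + B * f c2 + C * f c3 := by
  simp only [add_mul, Finset.sum_add_distrib, mul_ite, mul_one, mul_zero, ite_mul, zero_mul,
    Finset.sum_ite_eq', Finset.mem_univ, if_true]

lemma sum3R (A B C : ℝ) (c1 c2 c3 : Fin d) (f : Fin d → ℝ) :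
    ∑ q, f q * (A * (if q = c1 then (1:ℝ) else 0) + B * (if q = c2 then 1 else 0)
        + C * (if q = c3 then 1 else 0))
      = A * f c1 + B * f c2 + C * f c3 := by
  rw [Finset.sum_congr rfl fun q _ => mul_comm _ _]
  exact sum3L A B C c1 c2 c3 f

lemma rotM_symplectic (j0 j1 : Fin d) (co si : ℝ) (hj1 : (j1 : ℕ) = (j0 : ℕ) + 1)
    (hj0e : (j0 : ℕ) % 2 = 0) (hpyth : co ^ 2 + si ^ 2 = 1) :
    (rotM j0 j1 co si)ᵀ * Omega d * rotM j0 j1 co si = Omega d := by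
  have hne : j0 ≠ j1 := by intro h; rw [h] at hj1; omega
  have hOapp : ∀ i j : Fin d, Omega d i j =
      if (i:ℕ) % 2 = 0 ∧ (j:ℕ) = (i:ℕ) + 1 then 1
      else if (j:ℕ) % 2 = 0 ∧ (i:ℕ) = (j:ℕ) + 1 then -1 else 0 := fun i j => rfl
  have F1 : Omega d j0 j0 = 0 := by rw [hOapp, if_neg (by omega), if_neg (by omega)]
  have F2 : Omega d j0 j1 = 1 := by rw [hOapp, if_pos ⟨hj0e, hj1⟩]
  have F3 : Omega d j1 j0 = -1 := by
    rw [hOapp, if_neg (by omega), if_pos ⟨hj0e, hj1⟩]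
  have F4 : Omega d j1 j1 = 0 := by rw [hOapp, if_neg (by omega), if_neg (by omega)]
  have F5 : ∀ k : Fin d, k ≠ j0 → k ≠ j1 → Omega d j0 k = 0 := by
    intro k hk0 hk1
    have h0 : (k:ℕ) ≠ (j0:ℕ) := fun h => hk0 (Fin.ext h)
    have h1 : (k:ℕ) ≠ (j1:ℕ) := fun h => hk1 (Fin.ext h)
    rw [hOapp, if_neg (by omega), if_neg (by omega)]
  have F6 : ∀ k : Fin d, k ≠ j0 → k ≠ j1 → Omega d j1 k = 0 := by
    intro k hk0 hk1
    have h0 : (k:ℕ) ≠ (j0:ℕ) := fun h => hk0 (Fin.ext h)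
    have h1 : (k:ℕ) ≠ (j1:ℕ) := fun h => hk1 (Fin.ext h)
    rw [hOapp, if_neg (by omega), if_neg (by omega)]
  have F7 : ∀ k : Fin d, k ≠ j0 → k ≠ j1 → Omega d k j0 = 0 := by
    intro k hk0 hk1
    have h0 : (k:ℕ) ≠ (j0:ℕ) := fun h => hk0 (Fin.ext h)
    have h1 : (k:ℕ) ≠ (j1:ℕ) := fun h => hk1 (Fin.ext h)
    rw [hOapp, if_neg (by omega), if_neg (by omega)]
  have F8 : ∀ k : Fin d, k ≠ j0 → k ≠ j1 → Omega d k j1 = 0 := by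
    intro k hk0 hk1
    have h0 : (k:ℕ) ≠ (j0:ℕ) := fun h => hk0 (Fin.ext h)
    have h1 : (k:ℕ) ≠ (j1:ℕ) := fun h => hk1 (Fin.ext h)
    rw [hOapp, if_neg (by omega), if_neg (by omega)]
  ext i i'
  rw [Matrix.mul_assoc, Matrix.mul_apply]
  have hinner : ∀ p, (Omega d * rotM j0 j1 co si) p i' =
      alC j0 j1 co si i' * Omega d p j0 + beC j0 j1 co si i' * Omega d p j1
        + gaC j0 j1 i' * Omega d p i' := by
    intro p
    rw [Matrix.mul_apply]
    rw [Finset.sum_congr rfl fun q _ => by rw [col_decomp j0 j1 co si hne q i']]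
    exact sum3R _ _ _ _ _ _ _
  rw [Finset.sum_congr rfl fun p _ => by
    rw [Matrix.transpose_apply, hinner p, col_decomp j0 j1 co si hne p i]]
  rw [sum3L]
  by_cases hi0 : i = j0
  · by_cases hi'0 : i' = j0
    · simp [hi0, hi'0, alC, beC, gaC, hne, Ne.symm hne, F1, F2, F3, F4]
      all_goals ring
    · by_cases hi'1 : i' = j1
      · simp [hi0, hi'1, alC, beC, gaC, hne, Ne.symm hne, F1, F2, F3, F4]
        all_goals linear_combination hpyth
      · simp [hi0, hi'0, hi'1, alC, beC, gaC, hne, Ne.symm hne, F1, F2, F3, F4,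
          F5 i' hi'0 hi'1, F6 i' hi'0 hi'1]
  · by_cases hi1 : i = j1
    · by_cases hi'0 : i' = j0
      · simp [hi1, hi'0, alC, beC, gaC, hne, Ne.symm hne, F1, F2, F3, F4]
        all_goals linear_combination -hpyth
      · by_cases hi'1 : i' = j1
        · simp [hi1, hi'1, alC, beC, gaC, hne, Ne.symm hne, F1, F2, F3, F4]
          all_goals ring
        · simp [hi1, hi'0, hi'1, alC, beC, gaC, hne, Ne.symm hne, F1, F2, F3, F4,
            F5 i' hi'0 hi'1, F6 i' hi'0 hi'1]
    · by_cases hi'0 : i' = j0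
      · simp [hi'0, hi0, hi1, alC, beC, gaC, hne, Ne.symm hne, F1, F2, F3, F4,
          F7 i hi0 hi1, F8 i hi0 hi1]
      · by_cases hi'1 : i' = j1
        · simp [hi'1, hi0, hi1, alC, beC, gaC, hne, Ne.symm hne, F1, F2, F3, F4,
            F7 i hi0 hi1, F8 i hi0 hi1]
        · simp [alC, beC, gaC, hi0, hi1, hi'0, hi'1]

lemma rotM_sq_sum (j0 j1 : Fin d) (co si : ℝ) (hne : j0 ≠ j1) (hpyth : co ^ 2 + si ^ 2 = 1)
    (v : Fin d → ℝ) :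
    ∑ k, ((rotM j0 j1 co si).mulVec v k) ^ 2 = ∑ k, (v k) ^ 2 := by
  have split : ∀ f : Fin d → ℝ, ∑ k, f k
      = f j0 + (f j1 + ∑ k ∈ (Finset.univ.erase j0).erase j1, f k) := by
    intro f
    rw [← Finset.add_sum_erase _ f (Finset.mem_univ j0),
      ← Finset.add_sum_erase _ f (Finset.mem_erase.mpr ⟨Ne.symm hne, Finset.mem_univ j1⟩)]
  rw [split, split (fun k => (v k)^2)]
  have h0 : (rotM j0 j1 co si).mulVec v j0 = co * v j0 + si * v j1 := by
    rw [rotM_mulVec j0 j1 co si hne, if_pos rfl]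
  have h1 : (rotM j0 j1 co si).mulVec v j1 = -si * v j0 + co * v j1 := by
    rw [rotM_mulVec j0 j1 co si hne, if_neg (Ne.symm hne), if_pos rfl]
  have hrest : ∑ k ∈ (Finset.univ.erase j0).erase j1, ((rotM j0 j1 co si).mulVec v k) ^ 2
      = ∑ k ∈ (Finset.univ.erase j0).erase j1, (v k) ^ 2 := by
    refine Finset.sum_congr rfl fun k hk => ?_
    obtain ⟨hk1, hk0, -⟩ : k ≠ j1 ∧ k ≠ j0 ∧ True := by
      simp only [Finset.mem_erase] at hk; exact ⟨hk.1, hk.2.1, trivial⟩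
    rw [rotM_mulVec j0 j1 co si hne, if_neg hk0, if_neg hk1]
  rw [h0, h1, hrest]
  ring_nf
  linear_combination (v j0 ^ 2 + v j1 ^ 2) * hpyth

lemma rotM_norm (j0 j1 : Fin d) (co si : ℝ) (hne : j0 ≠ j1) (hpyth : co ^ 2 + si ^ 2 = 1)
    (t : EuclideanSpace ℝ (Fin d)) :
    ‖Matrix.toEuclideanLin (rotM j0 j1 co si) t‖ = ‖t‖ := by
  have hn : ∀ v : EuclideanSpace ℝ (Fin d), ‖v‖ = Real.sqrt (∑ i, (v i)^2) := by
    intro v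
    rw [EuclideanSpace.norm_eq]
    congr 1
    apply Finset.sum_congr rfl
    intro i _
    rw [Real.norm_eq_abs, sq_abs]
  rw [hn, hn]
  congr 1
  have hcoord : ∀ k, (Matrix.toEuclideanLin (rotM j0 j1 co si) t) k
      = (rotM j0 j1 co si).mulVec t k := fun _ => rfl
  rw [Finset.sum_congr rfl fun k _ => by rw [hcoord k]]
  exact rotM_sq_sum j0 j1 co si hne hpyth t

end Stmt9Aux

open Stmt9Aux Finset Real in
/-- Let `d ≥ 2` be even and `l` a continuous linear functional on
`C(S^{d-1})` invariant under `V_g` for every `g ∈ Sp(d,ℝ)`. If `n ∈ ℕ^d` is a multi-index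
with at least one odd entry, then `l(b_n) = 0`, where `b_n(t) = ∏ k, t_k ^ n_k`. -/
theorem stmt9 {d : ℕ} (hd : 2 ≤ d) (hdeven : Even d)
    (l : C(Metric.sphere (0 : EuclideanSpace ℝ (Fin d)) 1, ℂ) →L[ℂ] ℂ)
    (hl : ∀ g : Matrix (Fin d) (Fin d) ℝ, g.transpose * Omega d * g = Omega d →
      ∀ b c : C(Metric.sphere (0 : EuclideanSpace ℝ (Fin d)) 1, ℂ),
        (∀ t : Metric.sphere (0 : EuclideanSpace ℝ (Fin d)) 1,
          c t = (((‖Matrix.toEuclideanLin g t‖ ^ d)⁻¹ : ℝ) : ℂ) *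
            homog b (Matrix.toEuclideanLin g t)) →
        l c = l b)
    (n : Fin d → ℕ) (hodd : ∃ j, Odd (n j))
    (bn : C(Metric.sphere (0 : EuclideanSpace ℝ (Fin d)) 1, ℂ))
    (hbn : ∀ t : Metric.sphere (0 : EuclideanSpace ℝ (Fin d)) 1,
      bn t = ∏ k : Fin d, (((t : EuclideanSpace ℝ (Fin d)) k : ℝ) : ℂ) ^ n k) :
    l bn = 0 := by
  obtain ⟨j, hj⟩ := hodd
  obtain ⟨dd, hdd⟩ := hdeven
  have hjlt := j.isLt
  obtain ⟨j0, j1, hj1v, hj0e, hab⟩ :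
      ∃ j0 j1 : Fin d, (j1 : ℕ) = (j0 : ℕ) + 1 ∧ (j0 : ℕ) % 2 = 0
        ∧ (Odd (n j0) ∨ Odd (n j1)) := by
    by_cases hpar : (j : ℕ) % 2 = 0
    · exact ⟨j, ⟨(j : ℕ) + 1, by omega⟩, rfl, hpar, Or.inl hj⟩
    · exact ⟨⟨(j : ℕ) - 1, by omega⟩, j, by simp only [Fin.val_mk]; omega,
        by simp only [Fin.val_mk]; omega, Or.inr hj⟩
  have hne : j0 ≠ j1 := fun h => by rw [h] at hj1v; omega
  set a := n j0 with ha
  set b := n j1 with hb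
  set θ : ℕ → ℝ := fun m => 2 * π * m / (a + b + 1) with hθ
  set g : ℕ → Matrix (Fin d) (Fin d) ℝ :=
    fun m => rotM j0 j1 (Real.cos (θ m)) (Real.sin (θ m)) with hg
  have hpyth : ∀ m : ℕ, Real.cos (θ m) ^ 2 + Real.sin (θ m) ^ 2 = 1 :=
    fun m => Real.cos_sq_add_sin_sq _
  have hcont : ∀ m : ℕ, Continuous fun t : Metric.sphere (0 : EuclideanSpace ℝ (Fin d)) 1 =>
      ∏ k, ((((g m).mulVec (t : EuclideanSpace ℝ (Fin d)) k : ℝ)) : ℂ) ^ n k := by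
    intro m
    apply continuous_finset_prod
    intro k _
    apply Continuous.pow
    apply Complex.continuous_ofReal.comp
    show Continuous fun t : Metric.sphere (0 : EuclideanSpace ℝ (Fin d)) 1 =>
      ∑ q, (g m) k q * (t : EuclideanSpace ℝ (Fin d)) q
    apply continuous_finset_sum
    intro q _
    apply Continuous.mul continuous_const
    have h1 : Continuous fun v : EuclideanSpace ℝ (Fin d) => v q := by
      have := (EuclideanSpace.proj (𝕜 := ℝ) (ι := Fin d) q).continuous
      simpa using this
    exact h1.comp continuous_subtype_val
  set c : ℕ → C(Metric.sphere (0 : EuclideanSpace ℝ (Fin d)) 1, ℂ) := fun m =>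
    ⟨fun t => ∏ k, ((((g m).mulVec (t : EuclideanSpace ℝ (Fin d)) k : ℝ)) : ℂ) ^ n k,
      hcont m⟩ with hcdef
  have hlc : ∀ m : ℕ, l (c m) = l bn := by
    intro m
    apply hl (g m) (rotM_symplectic j0 j1 _ _ hj1v hj0e (hpyth m)) bn (c m)
    intro t
    have ht1 : ‖(t : EuclideanSpace ℝ (Fin d))‖ = 1 := mem_sphere_zero_iff_norm.mp t.2
    have hgt : ‖Matrix.toEuclideanLin (g m) (t : EuclideanSpace ℝ (Fin d))‖ = 1 := by
      rw [show (g m) = rotM j0 j1 (Real.cos (θ m)) (Real.sin (θ m)) from rfl,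
        rotM_norm j0 j1 _ _ hne (hpyth m)]
      exact ht1
    have hmem : Matrix.toEuclideanLin (g m) (t : EuclideanSpace ℝ (Fin d)) ∈
        Metric.sphere (0 : EuclideanSpace ℝ (Fin d)) 1 := mem_sphere_zero_iff_norm.mpr hgt
    rw [hgt]
    simp only [one_pow, inv_one, Complex.ofReal_one, one_mul]
    rw [homog]
    simp only [hgt, inv_one, one_smul]
    rw [dif_pos hmem]
    rw [hbn]
    rfl
  have hsum : ∑ m ∈ Finset.range (a + b + 1), c m = 0 := by
    ext t
    simp only [ContinuousMap.coe_sum, Finset.sum_apply, ContinuousMap.zero_apply]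
    have hterm : ∀ m : ℕ, (c m) t =
        (((Real.cos (θ m) * ((t : EuclideanSpace ℝ (Fin d)) j0)
            + Real.sin (θ m) * ((t : EuclideanSpace ℝ (Fin d)) j1) : ℝ)) : ℂ) ^ a
          * (((-Real.sin (θ m) * ((t : EuclideanSpace ℝ (Fin d)) j0)
            + Real.cos (θ m) * ((t : EuclideanSpace ℝ (Fin d)) j1) : ℝ)) : ℂ) ^ b
          * ∏ k ∈ (Finset.univ.erase j0).erase j1,
              (((t : EuclideanSpace ℝ (Fin d)) k : ℝ) : ℂ) ^ n k := by
      intro m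
      show (∏ k, ((((g m).mulVec (t : EuclideanSpace ℝ (Fin d)) k : ℝ)) : ℂ) ^ n k) = _
      rw [← Finset.mul_prod_erase Finset.univ _ (Finset.mem_univ j0),
        ← Finset.mul_prod_erase _ _ (Finset.mem_erase.mpr ⟨Ne.symm hne, Finset.mem_univ j1⟩)]
      have e0 : (g m).mulVec (t : EuclideanSpace ℝ (Fin d)) j0
          = Real.cos (θ m) * ((t : EuclideanSpace ℝ (Fin d)) j0)
            + Real.sin (θ m) * ((t : EuclideanSpace ℝ (Fin d)) j1) := by
        rw [show (g m) = rotM j0 j1 (Real.cos (θ m)) (Real.sin (θ m)) from rfl,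
          rotM_mulVec _ _ _ _ hne, if_pos rfl]
      have e1 : (g m).mulVec (t : EuclideanSpace ℝ (Fin d)) j1
          = -Real.sin (θ m) * ((t : EuclideanSpace ℝ (Fin d)) j0)
            + Real.cos (θ m) * ((t : EuclideanSpace ℝ (Fin d)) j1) := by
        rw [show (g m) = rotM j0 j1 (Real.cos (θ m)) (Real.sin (θ m)) from rfl,
          rotM_mulVec _ _ _ _ hne, if_neg (Ne.symm hne), if_pos rfl]
      have erest : ∏ k ∈ (Finset.univ.erase j0).erase j1,
            ((((g m).mulVec (t : EuclideanSpace ℝ (Fin d)) k : ℝ)) : ℂ) ^ n k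
          = ∏ k ∈ (Finset.univ.erase j0).erase j1,
            (((t : EuclideanSpace ℝ (Fin d)) k : ℝ) : ℂ) ^ n k := by
        refine Finset.prod_congr rfl fun k hk => ?_
        obtain ⟨hk1, hk0⟩ : k ≠ j1 ∧ k ≠ j0 := by
          simp only [Finset.mem_erase] at hk; exact ⟨hk.1, hk.2.1⟩
        rw [show (g m) = rotM j0 j1 (Real.cos (θ m)) (Real.sin (θ m)) from rfl,
          rotM_mulVec _ _ _ _ hne, if_neg hk0, if_neg hk1]
      rw [e0, e1, erest]
      ring
    rw [Finset.sum_congr rfl fun m _ => hterm m, ← Finset.sum_mul,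
      trig_sum a b hab _ _ θ (fun m => rfl), zero_mul]
  have h1 : ((a + b + 1 : ℕ) : ℂ) * l bn = 0 := by
    have h2 : ∑ m ∈ Finset.range (a + b + 1), l (c m)
        = l (∑ m ∈ Finset.range (a + b + 1), c m) := (map_sum l c _).symm
    rw [hsum, map_zero] at h2
    rw [Finset.sum_congr rfl (fun m _ => hlc m), Finset.sum_const, Finset.card_range,
      nsmul_eq_mul] at h2
    exact_mod_cast h2
  rcases mul_eq_zero.mp h1 with h | h
  · exact absurd h (Nat.cast_ne_zero.mpr (by omega))
  · exact h
end

section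
/- Let d ≥ 2 be even and let l be a continuous linear functional on C(S^{d−1}) such that l(V_g b) = l(b) for every g ∈ Sp(d,ℝ) and every b ∈ C(S^{d−1}). Then for every polynomial function b on ℝ^d and every A ∈ sp(d,ℝ), l vanishes on the restriction to S^{d−1} of the function (π(A)b)(t) = ⟨∇b(t) − ⟨∇b(t), t⟩ t, A t⟩ − d ⟨A t, t⟩ b(t); that is, l(π(A)b) = 0. -/
open MeasureTheory

lemma Omega_apply {d : ℕ} (i j : Fin d) : Omega d i j =
    if i.val % 2 = 0 ∧ j.val = i.val + 1 then 1
    else if j.val % 2 = 0 ∧ i.val = j.val + 1 then -1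
    else 0 := rfl

lemma Omega_mul_Omega {d : ℕ} (hdeven : Even d) : Omega d * Omega d = -1 := by
  ext i j
  rw [Matrix.mul_apply]
  rcases Nat.even_or_odd i.val with hi | hi
  · -- i even, pick k₀ = i+1
    have hi2 : i.val % 2 = 0 := Nat.even_iff.mp hi
    have hlt : i.val + 1 < d := by
      rcases Nat.lt_or_ge (i.val + 1) d with h | h
      · exact h
      · exfalso
        have : i.val + 1 = d := le_antisymm i.isLt h
        rw [← this] at hdeven
        exact (Nat.even_add_one.mp hdeven) hi
    set k₀ : Fin d := ⟨i.val + 1, hlt⟩ with hk₀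
    have hk0v : k₀.val = i.val + 1 := rfl
    rw [Finset.sum_eq_single_of_mem k₀ (Finset.mem_univ _)]
    · have h1 : Omega d i k₀ = 1 := by
        rw [Omega_apply]; simp [hi2, hk0v]
      rw [h1, one_mul, Omega_apply]
      have hk1 : ¬ (k₀.val % 2 = 0 ∧ j.val = k₀.val + 1) := by
        rintro ⟨h, -⟩
        omega
      rw [if_neg hk1]
      by_cases hij : j = i
      · subst hij
        rw [if_pos ⟨hi2, rfl⟩]
        simp
      · rw [if_neg, Matrix.neg_apply, Matrix.one_apply_ne (Ne.symm hij), neg_zero]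
        rintro ⟨-, h2⟩
        exact hij (Fin.ext (by omega))
    · intro k _ hk
      have : Omega d i k = 0 := by
        rw [Omega_apply, if_neg, if_neg]
        · rintro ⟨hk2, hik⟩
          omega
        · rintro ⟨-, hk2⟩
          exact hk (Fin.ext (by simp [hk₀, hk2]))
      rw [this, zero_mul]
  · -- i odd, pick k₀ = i - 1
    have hi2 : i.val % 2 = 1 := Nat.odd_iff.mp hi
    have hpos : 0 < i.val := by omega
    set k₀ : Fin d := ⟨i.val - 1, lt_trans (by omega) i.isLt⟩ with hk₀
    have hk₀v : k₀.val + 1 = i.val := by simp [hk₀]; omega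
    have hk₀2 : k₀.val % 2 = 0 := by simp [hk₀]; omega
    rw [Finset.sum_eq_single_of_mem k₀ (Finset.mem_univ _)]
    · have h1 : Omega d i k₀ = -1 := by
        rw [Omega_apply, if_neg, if_pos ⟨hk₀2, hk₀v.symm⟩]
        rintro ⟨h, -⟩; omega
      rw [h1, Omega_apply]
      by_cases hij : j = i
      · subst hij
        rw [if_pos ⟨hk₀2, hk₀v.symm⟩]
        simp
      · rw [if_neg, if_neg, Matrix.neg_apply, Matrix.one_apply_ne (Ne.symm hij)]
        · ring
        · rintro ⟨hj2, hj1⟩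
          omega
        · rintro ⟨-, hj1⟩
          exact hij (Fin.ext (by omega))
    · intro k _ hk
      have : Omega d i k = 0 := by
        rw [Omega_apply, if_neg, if_neg]
        · rintro ⟨hk2, hik⟩
          exact hk (Fin.ext (by omega))
        · rintro ⟨h, -⟩
          omega
      rw [this, zero_mul]

open NormedSpace in
lemma exp_symplectic {d : ℕ} (hdeven : Even d) (A : Matrix (Fin d) (Fin d) ℝ)
    (hA : Omega d * A + A.transpose * Omega d = 0) (B : Matrix (Fin d) (Fin d) ℝ)
    (hB : ∃ s : ℝ, B = s • A) :
    (exp B).transpose * Omega d * exp B = Omega d := by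
  obtain ⟨s, rfl⟩ := hB
  have hΩ : Omega d * Omega d = -1 := Omega_mul_Omega hdeven
  have hunit : Omega d * (-Omega d) = 1 := by rw [Matrix.mul_neg, hΩ, neg_neg]
  have hunit' : (-Omega d) * Omega d = 1 := by rw [Matrix.neg_mul, hΩ, neg_neg]
  set U : (Matrix (Fin d) (Fin d) ℝ)ˣ := ⟨Omega d, -Omega d, hunit, hunit'⟩ with hU
  have hAt : A.transpose = Omega d * A * Omega d := by
    have h1 : A.transpose * Omega d = -(Omega d * A) := by
      rw [eq_neg_iff_add_eq_zero, add_comm]; exact hA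
    calc A.transpose = A.transpose * (Omega d * (-Omega d)) := by rw [hunit, mul_one]
    _ = (A.transpose * Omega d) * (-Omega d) := by rw [mul_assoc]
    _ = -(Omega d * A) * (-Omega d) := by rw [h1]
    _ = Omega d * A * Omega d := by rw [Matrix.neg_mul, Matrix.mul_neg, neg_neg]
  have hsAt : (s • A).transpose = (U : Matrix (Fin d) (Fin d) ℝ) * (-(s • A)) * (U⁻¹ : (Matrix (Fin d) (Fin d) ℝ)ˣ) := by
    have hUinv : ((U⁻¹ : (Matrix (Fin d) (Fin d) ℝ)ˣ) : Matrix (Fin d) (Fin d) ℝ) = -Omega d := rfl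
    rw [hUinv, Matrix.transpose_smul, hAt]
    simp only [Matrix.mul_neg, Matrix.neg_mul, neg_neg, Matrix.mul_smul, Matrix.smul_mul,
      Matrix.mul_assoc]
    rfl
  have hexpconj : exp ((s • A).transpose) =
      (U : Matrix (Fin d) (Fin d) ℝ) * exp (-(s • A)) * (U⁻¹ : (Matrix (Fin d) (Fin d) ℝ)ˣ) := by
    rw [hsAt]
    exact Matrix.exp_units_conj U _
  have hinv : exp (-(s • A)) * exp (s • A) = 1 := by
    rw [← Matrix.exp_add_of_commute _ _ ((Commute.refl (s • A)).neg_left), neg_add_cancel,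
      exp_zero]
  have hUinv : ((U⁻¹ : (Matrix (Fin d) (Fin d) ℝ)ˣ) : Matrix (Fin d) (Fin d) ℝ) = -Omega d := rfl
  have hUval : (U : Matrix (Fin d) (Fin d) ℝ) = Omega d := rfl
  calc (exp (s • A)).transpose * Omega d * exp (s • A)
      = exp ((s • A).transpose) * Omega d * exp (s • A) := by
        rw [Matrix.exp_transpose]
    _ = Omega d * exp (-(s • A)) * ((-Omega d) * Omega d) * exp (s • A) := by
        rw [hexpconj, hUinv, hUval]; simp only [mul_assoc]
    _ = Omega d * (exp (-(s • A)) * exp (s • A)) := by rw [hunit', mul_one, mul_assoc]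
    _ = Omega d := by rw [hinv, mul_one]

lemma toEuclideanCLM_continuous {d : ℕ} :
    Continuous (fun N : Matrix (Fin d) (Fin d) ℝ => Matrix.toEuclideanCLM (𝕜 := ℝ) N) := by
  have : (fun N : Matrix (Fin d) (Fin d) ℝ => Matrix.toEuclideanCLM (𝕜 := ℝ) N) =
      fun N => LinearMap.toContinuousLinearMap (Matrix.toEuclideanLin N) := by
    funext N
    ext x
    rfl
  rw [this]
  exact ((LinearMap.toContinuousLinearMap (E := EuclideanSpace ℝ (Fin d))
      (F' := EuclideanSpace ℝ (Fin d))).toLinearMap.comp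
    (Matrix.toEuclideanLin (𝕜 := ℝ) (n := Fin d)).toLinearMap).continuous_of_finiteDimensional

noncomputable instance instNormedAlgebraRatCLM {d : ℕ} :
    NormedAlgebra ℚ (EuclideanSpace ℝ (Fin d) →L[ℝ] EuclideanSpace ℝ (Fin d)) :=
  NormedAlgebra.restrictScalars ℚ ℝ _

open NormedSpace in
lemma toEuclideanCLM_exp {d : ℕ} (M : Matrix (Fin d) (Fin d) ℝ) :
    Matrix.toEuclideanCLM (𝕜 := ℝ) (exp M) = exp (Matrix.toEuclideanCLM (𝕜 := ℝ) M) := by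
  letI : SeminormedRing (Matrix (Fin d) (Fin d) ℝ) := Matrix.linftyOpSemiNormedRing
  letI : NormedRing (Matrix (Fin d) (Fin d) ℝ) := Matrix.linftyOpNormedRing
  letI : NormedAlgebra ℝ (Matrix (Fin d) (Fin d) ℝ) := Matrix.linftyOpNormedAlgebra
  letI : NormedAlgebra ℚ (Matrix (Fin d) (Fin d) ℝ) := NormedAlgebra.restrictScalars ℚ ℝ _
  exact map_exp ((Matrix.toEuclideanCLM (𝕜 := ℝ) (n := Fin d)) :
    Matrix (Fin d) (Fin d) ℝ ≃⋆ₐ[ℝ] _) toEuclideanCLM_continuous M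

noncomputable def Pc {d : ℕ} (P : MvPolynomial (Fin d) ℂ) (x : EuclideanSpace ℝ (Fin d)) : ℂ :=
  MvPolynomial.eval (fun i => ((x i : ℝ) : ℂ)) P

noncomputable def gradL {d : ℕ} (P : MvPolynomial (Fin d) ℂ) (x : EuclideanSpace ℝ (Fin d)) :
    EuclideanSpace ℝ (Fin d) →L[ℝ] ℂ :=
  ∑ j : Fin d, MvPolynomial.eval (fun i => ((x i : ℝ) : ℂ)) (MvPolynomial.pderiv j P) •
    (Complex.ofRealCLM.comp (EuclideanSpace.proj j))

lemma gradL_apply {d : ℕ} (P : MvPolynomial (Fin d) ℂ) (x h : EuclideanSpace ℝ (Fin d)) :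
    gradL P x h = ∑ j : Fin d,
      MvPolynomial.eval (fun i => ((x i : ℝ) : ℂ)) (MvPolynomial.pderiv j P) * ((h j : ℝ) : ℂ) := by
  simp only [gradL, ContinuousLinearMap.sum_apply, ContinuousLinearMap.smul_apply,
    ContinuousLinearMap.comp_apply, Complex.ofRealCLM_apply, smul_eq_mul]
  rfl

lemma pc_contDiff {d : ℕ} (P : MvPolynomial (Fin d) ℂ) : ContDiff ℝ 1 (Pc P) := by
  induction P using MvPolynomial.induction_on with
  | C a =>
      have h1 : Pc (MvPolynomial.C a : MvPolynomial (Fin d) ℂ) = fun _ => a := by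
        funext y; simp [Pc]
      rw [h1]; exact contDiff_const
  | add p q hp hq =>
      have : Pc (p + q) = fun x => Pc p x + Pc q x := by
        funext x; simp [Pc]
      rw [this]; exact hp.add hq
  | mul_X p i hp =>
      have : Pc (p * MvPolynomial.X i) = fun x => Pc p x * ((x i : ℝ) : ℂ) := by
        funext x; simp [Pc]
      rw [this]
      exact hp.mul (Complex.ofRealCLM.comp (EuclideanSpace.proj i)).contDiff

lemma pc_hasFDerivAt {d : ℕ} (P : MvPolynomial (Fin d) ℂ) (x : EuclideanSpace ℝ (Fin d)) :
    HasFDerivAt (Pc P) (gradL P x) x := by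
  classical
  induction P using MvPolynomial.induction_on with
  | C a =>
      have h0 : gradL (MvPolynomial.C a : MvPolynomial (Fin d) ℂ) x = 0 := by
        ext y
        simp [gradL_apply, MvPolynomial.pderiv_C]
      have h1 : Pc (MvPolynomial.C a : MvPolynomial (Fin d) ℂ) = fun _ => a := by
        funext y; simp [Pc]
      rw [h0, h1]
      exact hasFDerivAt_const a x
  | add p q hp hq =>
      have h1 : Pc (p + q) = fun y => Pc p y + Pc q y := by funext y; simp [Pc]
      have h0 : gradL (p + q) x = gradL p x + gradL q x := by
        ext y
        rw [ContinuousLinearMap.add_apply, gradL_apply, gradL_apply, gradL_apply,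
          ← Finset.sum_add_distrib]
        refine Finset.sum_congr rfl fun j _ => ?_
        rw [map_add, map_add, add_mul]
      rw [h1, h0]
      exact hp.add hq
  | mul_X p i hp =>
      have hX : HasFDerivAt (fun y : EuclideanSpace ℝ (Fin d) => ((y i : ℝ) : ℂ))
          (Complex.ofRealCLM.comp (EuclideanSpace.proj i)) x :=
        (Complex.ofRealCLM.comp (EuclideanSpace.proj i)).hasFDerivAt
      have h1 : Pc (p * MvPolynomial.X i) = fun y => Pc p y * ((y i : ℝ) : ℂ) := by
        funext y; simp [Pc]
      have hterm : ∀ j : Fin d,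
          MvPolynomial.eval (fun i' => ((x i' : ℝ) : ℂ))
              (MvPolynomial.pderiv j (p * MvPolynomial.X i)) =
            MvPolynomial.eval (fun i' => ((x i' : ℝ) : ℂ)) (MvPolynomial.pderiv j p) *
              ((x i : ℝ) : ℂ) + (if i = j then Pc p x else 0) := by
        intro j
        rw [MvPolynomial.pderiv_mul, map_add, map_mul, map_mul, MvPolynomial.eval_X,
          MvPolynomial.pderiv_X, Pi.single_apply, apply_ite
            (MvPolynomial.eval (fun i' => ((x i' : ℝ) : ℂ))), map_one, map_zero,
          mul_ite, mul_one, mul_zero]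
        rfl
      have h0 : gradL (p * MvPolynomial.X i) x =
          Pc p x • (Complex.ofRealCLM.comp (EuclideanSpace.proj i)) +
            ((x i : ℝ) : ℂ) • gradL p x := by
        ext y
        rw [ContinuousLinearMap.add_apply, ContinuousLinearMap.smul_apply,
          ContinuousLinearMap.smul_apply, gradL_apply, gradL_apply]
        have hstep : ∀ j : Fin d,
            MvPolynomial.eval (fun i' => ((x i' : ℝ) : ℂ))
                (MvPolynomial.pderiv j (p * MvPolynomial.X i)) * ((y j : ℝ) : ℂ) =
              MvPolynomial.eval (fun i' => ((x i' : ℝ) : ℂ)) (MvPolynomial.pderiv j p) *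
                ((x i : ℝ) : ℂ) * ((y j : ℝ) : ℂ) +
              (if i = j then Pc p x * ((y j : ℝ) : ℂ) else 0) := by
          intro j
          rw [hterm j, add_mul, ite_mul, zero_mul]
        rw [Finset.sum_congr rfl fun j _ => hstep j, Finset.sum_add_distrib,
          Finset.sum_ite_eq, if_pos (Finset.mem_univ i), add_comm]
        simp only [ContinuousLinearMap.comp_apply, Complex.ofRealCLM_apply, smul_eq_mul,
          Finset.mul_sum]
        congr 1
        refine Finset.sum_congr rfl fun j _ => by ring
      rw [h1, h0]
      exact hp.mul hX

noncomputable def uu {d : ℕ} (T : EuclideanSpace ℝ (Fin d) →L[ℝ] EuclideanSpace ℝ (Fin d))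
    (p : ℝ × EuclideanSpace ℝ (Fin d)) : EuclideanSpace ℝ (Fin d) :=
  NormedSpace.exp (p.1 • T) p.2

noncomputable def ff {d : ℕ} (P : MvPolynomial (Fin d) ℂ)
    (T : EuclideanSpace ℝ (Fin d) →L[ℝ] EuclideanSpace ℝ (Fin d))
    (p : ℝ × EuclideanSpace ℝ (Fin d)) : ℂ :=
  (((‖uu T p‖ ^ d)⁻¹ : ℝ) : ℂ) * Pc P (‖uu T p‖⁻¹ • uu T p)

lemma uu_contDiff {d : ℕ} (T : EuclideanSpace ℝ (Fin d) →L[ℝ] EuclideanSpace ℝ (Fin d)) :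
    ContDiff ℝ 1 (uu T) := by
  have hexp : ContDiff ℝ 1 (fun s : ℝ => NormedSpace.exp (s • T)) := by
    rw [contDiff_iff_contDiffAt]
    intro s
    have h1 : ContDiffAt ℝ 1 (NormedSpace.exp) (s • T) :=
      (NormedSpace.exp_analytic (s • T)).contDiffAt
    have h2 : ContDiffAt ℝ 1 (fun s : ℝ => s • T) s :=
      (((1 : ℝ →L[ℝ] ℝ).smulRight T).contDiff).contDiffAt
    exact h1.comp s h2
  exact isBoundedBilinearMap_apply.contDiff.comp
    ((hexp.comp contDiff_fst).prodMk contDiff_snd)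

lemma uu_ne_zero {d : ℕ} (T : EuclideanSpace ℝ (Fin d) →L[ℝ] EuclideanSpace ℝ (Fin d))
    {p : ℝ × EuclideanSpace ℝ (Fin d)} (hp : p.2 ≠ 0) : uu T p ≠ 0 := by
  intro h
  apply hp
  have hinv : NormedSpace.exp (-(p.1 • T)) * NormedSpace.exp (p.1 • T) = 1 := by
    rw [← NormedSpace.exp_add_of_commute ((Commute.refl (p.1 • T)).neg_left), neg_add_cancel,
      NormedSpace.exp_zero]
  calc p.2 = (NormedSpace.exp (-(p.1 • T)) * NormedSpace.exp (p.1 • T)) p.2 := by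
        rw [hinv]; rfl
    _ = NormedSpace.exp (-(p.1 • T)) (uu T p) := rfl
    _ = 0 := by rw [h, map_zero]

lemma ff_contDiffAt {d : ℕ} (P : MvPolynomial (Fin d) ℂ)
    (T : EuclideanSpace ℝ (Fin d) →L[ℝ] EuclideanSpace ℝ (Fin d))
    {p : ℝ × EuclideanSpace ℝ (Fin d)} (hp : uu T p ≠ 0) :
    ContDiffAt ℝ 1 (ff P T) p := by
  have hn : ContDiffAt ℝ 1 (fun q => ‖uu T q‖) p :=
    ((uu_contDiff T).contDiffAt).norm ℝ hp
  have hnz : ‖uu T p‖ ≠ 0 := norm_ne_zero_iff.mpr hp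
  have h1 : ContDiffAt ℝ 1 (fun q => (((‖uu T q‖ ^ d)⁻¹ : ℝ) : ℂ)) p := by
    exact Complex.ofRealCLM.contDiff.contDiffAt.comp p
      (((hn.pow d).inv (pow_ne_zero d hnz)))
  have h2 : ContDiffAt ℝ 1 (fun q => Pc P (‖uu T q‖⁻¹ • uu T q)) p :=
    (pc_contDiff P).contDiffAt.comp p ((hn.inv hnz).smul ((uu_contDiff T).contDiffAt))
  exact h1.mul h2

lemma ff_slice_hasDerivAt {d : ℕ} (P : MvPolynomial (Fin d) ℂ)
    (T : EuclideanSpace ℝ (Fin d) →L[ℝ] EuclideanSpace ℝ (Fin d))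
    {s : ℝ} {x : EuclideanSpace ℝ (Fin d)} (hp : uu T (s, x) ≠ 0) :
    HasDerivAt (fun σ => ff P T (σ, x)) (fderiv ℝ (ff P T) (s, x) (1, 0)) s := by
  have hd : HasFDerivAt (ff P T) (fderiv ℝ (ff P T) (s, x)) (s, x) :=
    ((ff_contDiffAt P T hp).differentiableAt one_ne_zero).hasFDerivAt
  have hline : HasDerivAt (fun σ : ℝ => (σ, x)) ((1 : ℝ), (0 : EuclideanSpace ℝ (Fin d))) s :=
    (hasDerivAt_id s).prodMk (hasDerivAt_const s x)
  exact hd.comp_hasDerivAt s hline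

lemma uu_zero {d : ℕ} (T : EuclideanSpace ℝ (Fin d) →L[ℝ] EuclideanSpace ℝ (Fin d))
    (x : EuclideanSpace ℝ (Fin d)) : uu T (0, x) = x := by
  show NormedSpace.exp ((0 : ℝ) • T) x = x
  rw [show (0 : ℝ) • T = 0 from zero_smul ℝ T, NormedSpace.exp_zero,
    ContinuousLinearMap.one_apply]

lemma ff_deriv_zero {d : ℕ} (P : MvPolynomial (Fin d) ℂ)
    (T : EuclideanSpace ℝ (Fin d) →L[ℝ] EuclideanSpace ℝ (Fin d))
    {x : EuclideanSpace ℝ (Fin d)} (hx : ‖x‖ = 1) :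
    HasDerivAt (fun σ => ff P T (σ, x))
      (gradL P x (T x - (inner ℝ (T x) x : ℝ) • x)
        - (d : ℂ) * (((inner ℝ (T x) x : ℝ) : ℝ) : ℂ) * Pc P x) 0 := by
  have hu00 : uu T (0, x) = x := uu_zero T x
  have he : HasDerivAt (fun σ : ℝ => NormedSpace.exp (σ • T)) T 0 := by
    have := hasDerivAt_exp_smul_const (𝕂 := ℝ) T 0
    rw [show (0 : ℝ) • T = 0 from zero_smul ℝ T, NormedSpace.exp_zero, one_mul] at this
    exact this
  have hu0 : HasDerivAt (fun σ => uu T (σ, x)) (T x) 0 := by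
    have h2 := he.clm_apply (hasDerivAt_const (0 : ℝ) x)
    rw [show (0 : ℝ) • T = 0 from zero_smul ℝ T, NormedSpace.exp_zero, map_zero, add_zero]
      at h2
    exact h2
  have hq : HasDerivAt (fun σ => (inner ℝ (uu T (σ, x)) (uu T (σ, x)) : ℝ))
      ((inner ℝ (T x) x : ℝ) + (inner ℝ (T x) x : ℝ)) 0 := by
    have h2 := hu0.inner ℝ hu0
    rw [hu00, real_inner_comm (T x) x] at h2
    exact h2
  have hq0 : (inner ℝ (uu T (0, x)) (uu T (0, x)) : ℝ) = 1 := by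
    rw [hu00, real_inner_self_eq_norm_sq, hx, one_pow]
  have hn : HasDerivAt (fun σ => ‖uu T (σ, x)‖) (inner ℝ (T x) x : ℝ) 0 := by
    have hfun : (fun σ => ‖uu T (σ, x)‖) =
        fun σ => Real.sqrt (inner ℝ (uu T (σ, x)) (uu T (σ, x)) : ℝ) := by
      funext σ
      rw [real_inner_self_eq_norm_sq, Real.sqrt_sq (norm_nonneg _)]
    have hs := (Real.hasDerivAt_sqrt (by rw [hq0]; norm_num)).comp 0 hq
    rw [hq0] at hs
    rw [hfun]
    refine hs.congr_deriv ?_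
    rw [Real.sqrt_one]
    ring
  have hn0 : ‖uu T (0, x)‖ = 1 := by rw [hu00, hx]
  have hm : HasDerivAt (fun σ => ‖uu T (σ, x)‖⁻¹) (-(inner ℝ (T x) x : ℝ)) 0 := by
    have h2 := hn.inv (by rw [hn0]; norm_num)
    rw [hn0] at h2
    simp at h2; exact h2
  have hw : HasDerivAt (fun σ => ‖uu T (σ, x)‖⁻¹ • uu T (σ, x))
      (T x - (inner ℝ (T x) x : ℝ) • x) 0 := by
    have h2 := hm.smul hu0
    rw [hu00] at h2
    simp [hx, sub_eq_add_neg, neg_smul] at h2 ⊢; exact h2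
  have hw0 : ‖uu T (0, x)‖⁻¹ • uu T (0, x) = x := by rw [hu00, hx, inv_one, one_smul]
  have hP : HasDerivAt (fun σ => Pc P (‖uu T (σ, x)‖⁻¹ • uu T (σ, x)))
      (gradL P x (T x - (inner ℝ (T x) x : ℝ) • x)) 0 := by
    have hPC : HasFDerivAt (Pc P) (gradL P x) (‖uu T (0, x)‖⁻¹ • uu T (0, x)) := by
      rw [hw0]; exact pc_hasFDerivAt P x
    exact hPC.comp_hasDerivAt 0 hw
  have hinvd : HasDerivAt (fun σ => (((‖uu T (σ, x)‖ ^ d)⁻¹ : ℝ) : ℂ))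
      (-((d : ℂ) * (((inner ℝ (T x) x : ℝ) : ℝ) : ℂ))) 0 := by
    have hpow : HasDerivAt (fun σ => (‖uu T (σ, x)‖⁻¹) ^ d)
        (-((d : ℝ) * (inner ℝ (T x) x : ℝ))) 0 := by
      have h2 := hm.pow d
      rw [hn0] at h2
      simp at h2; exact h2
    have hfun : (fun σ => ((‖uu T (σ, x)‖ ^ d)⁻¹ : ℝ)) =
        fun σ => (‖uu T (σ, x)‖⁻¹) ^ d := by
      funext σ; rw [inv_pow]
    have h3 := Complex.ofRealCLM.hasFDerivAt.comp_hasDerivAt 0 hpow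
    rw [← hfun] at h3
    simpa [Function.comp_def, Complex.ofRealCLM_apply] using h3
  have hmul := hinvd.mul hP
  have hff : (fun σ => ff P T (σ, x)) =
      fun σ => (((‖uu T (σ, x)‖ ^ d)⁻¹ : ℝ) : ℂ) * Pc P (‖uu T (σ, x)‖⁻¹ • uu T (σ, x)) := rfl
  rw [hff]
  refine hmul.congr_deriv ?_
  rw [hw0, hn0]
  push_cast
  ring

lemma sphere_ne_zero {d : ℕ} (x : Metric.sphere (0 : EuclideanSpace ℝ (Fin d)) 1) :
    ((x : EuclideanSpace ℝ (Fin d))) ≠ 0 := by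
  have h := mem_sphere_zero_iff_norm.mp x.2
  intro h0
  rw [h0, norm_zero] at h
  norm_num at h

noncomputable def gam {d : ℕ} (P : MvPolynomial (Fin d) ℂ)
    (T : EuclideanSpace ℝ (Fin d) →L[ℝ] EuclideanSpace ℝ (Fin d)) (s : ℝ) :
    C(Metric.sphere (0 : EuclideanSpace ℝ (Fin d)) 1, ℂ) :=
  ⟨fun x => ff P T (s, (x : EuclideanSpace ℝ (Fin d))), by
    rw [continuous_iff_continuousAt]
    intro x
    exact ((ff_contDiffAt P T (uu_ne_zero T (sphere_ne_zero x))).continuousAt).comp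
      ((continuous_const.prodMk continuous_subtype_val).continuousAt)⟩

lemma gam_apply {d : ℕ} (P : MvPolynomial (Fin d) ℂ)
    (T : EuclideanSpace ℝ (Fin d) →L[ℝ] EuclideanSpace ℝ (Fin d)) (s : ℝ)
    (x : Metric.sphere (0 : EuclideanSpace ℝ (Fin d)) 1) :
    gam P T s x = ff P T (s, (x : EuclideanSpace ℝ (Fin d))) := rfl

lemma gam_hasDerivAt {d : ℕ} (P : MvPolynomial (Fin d) ℂ)
    (T : EuclideanSpace ℝ (Fin d) →L[ℝ] EuclideanSpace ℝ (Fin d))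
    (C : C(Metric.sphere (0 : EuclideanSpace ℝ (Fin d)) 1, ℂ))
    (hC : ∀ x : Metric.sphere (0 : EuclideanSpace ℝ (Fin d)) 1,
      C x = fderiv ℝ (ff P T) (0, (x : EuclideanSpace ℝ (Fin d)))
        (1, (0 : EuclideanSpace ℝ (Fin d)))) :
    HasDerivAt (gam P T) C 0 := by
  classical
  set E := EuclideanSpace ℝ (Fin d)
  set D : ℝ × E → ℂ := fun p => fderiv ℝ (ff P T) p (1, (0 : E)) with hD
  set U : Set (ℝ × E) := (uu T) ⁻¹' {(0 : E)}ᶜ with hUdef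
  have hUopen : IsOpen U := (isOpen_compl_singleton).preimage (uu_contDiff T).continuous
  have hmemU : ∀ p : ℝ × E, uu T p ≠ 0 → p ∈ U := fun p hp => hp
  have hfC1 : ContDiffOn ℝ 1 (ff P T) U := fun p hp =>
    (ff_contDiffAt P T hp).contDiffWithinAt
  have hDcont : ContinuousOn D U := by
    have h1 := hfC1.continuousOn_fderiv_of_isOpen hUopen le_rfl
    exact (ContinuousLinearMap.apply ℝ ℂ ((1 : ℝ), (0 : E))).continuous.comp_continuousOn h1
  set U' : Set (ℝ × E) := U ∩ {p : ℝ × E | ((0 : ℝ), p.2) ∈ U} with hU'def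
  have hU'open : IsOpen U' :=
    hUopen.inter (hUopen.preimage (continuous_const.prodMk continuous_snd))
  set H : ℝ × E → ℝ := fun p => ‖D p - D (0, p.2)‖ with hHdef
  have hHcont : ContinuousOn H U' := by
    have h2 : ContinuousOn (fun p : ℝ × E => D (0, p.2)) U' :=
      hDcont.comp ((continuous_const.prodMk continuous_snd).continuousOn)
        (fun p hp => hp.2)
    exact ((hDcont.mono Set.inter_subset_left).sub h2).norm
  rw [hasDerivAt_iff_isLittleO, Asymptotics.isLittleO_iff]
  intro ε hε
  set W : Set (ℝ × E) := U' ∩ H ⁻¹' (Set.Iio ε) with hWdef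
  have hWopen : IsOpen W := hHcont.isOpen_inter_preimage hU'open isOpen_Iio
  have hWsub : W ⊆ U' := Set.inter_subset_left
  have hsub : ({(0 : ℝ)} : Set ℝ) ×ˢ (Metric.sphere (0 : E) 1 : Set E) ⊆ W := by
    rintro ⟨s₀, x⟩ ⟨hs₀, hx⟩
    have hs₀' : s₀ = 0 := hs₀
    subst hs₀'
    have hxne : x ≠ 0 := by
      have h := mem_sphere_zero_iff_norm.mp hx
      intro h0; rw [h0, norm_zero] at h; norm_num at h
    have hU0 : ((0 : ℝ), x) ∈ U := hmemU _ (uu_ne_zero T hxne)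
    refine ⟨⟨hU0, hU0⟩, ?_⟩
    show H (0, x) < ε
    simp only [hHdef, sub_self, norm_zero]
    exact hε
  obtain ⟨u₀, v, hu₀o, hvo, h0u, hSv, huv⟩ := generalized_tube_lemma isCompact_singleton
    (isCompact_sphere (0 : E) 1) hWopen hsub
  obtain ⟨δ, hδpos, hδ⟩ := Metric.isOpen_iff.mp hu₀o 0 (h0u rfl)
  rw [Metric.eventually_nhds_iff]
  refine ⟨δ, hδpos, fun {s} hs => ?_⟩
  have hsabs : |s| < δ := by rwa [Real.dist_eq, sub_zero] at hs
  have hnonneg : 0 ≤ ε * ‖s - 0‖ := mul_nonneg hε.le (norm_nonneg _)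
  rw [ContinuousMap.norm_le _ hnonneg]
  intro x
  have hxnorm : ‖(x : E)‖ = 1 := mem_sphere_zero_iff_norm.mp x.2
  -- membership of the segment in W
  have hseg : ∀ σ ∈ Set.uIcc (0 : ℝ) s, (σ, (x : E)) ∈ W := by
    intro σ hσ
    have h1 := Set.mem_Icc.mp hσ
    have hσ1 : σ ≤ |s| := le_trans h1.2 (sup_le (abs_nonneg s) (le_abs_self s))
    have hσ2 : -|s| ≤ σ := le_trans (le_inf (neg_nonpos.mpr (abs_nonneg s)) (neg_abs_le s)) h1.1
    have hσabs : |σ| < δ := lt_of_le_of_lt (abs_le.mpr ⟨hσ2, hσ1⟩) hsabs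
    have hσball : σ ∈ u₀ := hδ (by rwa [Metric.mem_ball, Real.dist_eq, sub_zero])
    exact huv ⟨hσball, hSv x.2⟩
  -- mean value estimate
  set k : ℝ → ℂ := fun σ => ff P T (σ, (x : E)) - σ • D (0, (x : E)) with hk
  have hkderiv : ∀ σ ∈ Set.uIcc (0 : ℝ) s,
      HasDerivWithinAt k (D (σ, (x : E)) - D (0, (x : E))) (Set.uIcc (0 : ℝ) s) σ := by
    intro σ hσ
    have hUσ : uu T (σ, (x : E)) ≠ 0 := (hseg σ hσ).1.1
    have h1 : HasDerivAt (fun σ' : ℝ => σ' • D (0, (x : E))) (D (0, (x : E))) σ := by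
      simpa using (hasDerivAt_id σ).smul_const (D (0, (x : E)))
    exact ((ff_slice_hasDerivAt P T hUσ).sub h1).hasDerivWithinAt
  have hkbound : ∀ σ ∈ Set.uIcc (0 : ℝ) s,
      ‖D (σ, (x : E)) - D (0, (x : E))‖ ≤ ε := by
    intro σ hσ
    exact le_of_lt ((hseg σ hσ).2)
  have hMVT := Convex.norm_image_sub_le_of_norm_hasDerivWithin_le hkderiv hkbound
    (convex_uIcc (0 : ℝ) s) Set.left_mem_uIcc Set.right_mem_uIcc
  -- rewrite into the target form
  have hkval : k s - k 0 = ff P T (s, (x : E)) - ff P T (0, (x : E)) - s • D (0, (x : E)) := by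
    simp only [hk, zero_smul, sub_zero]
    ring
  calc ‖(gam P T s - gam P T 0 - (s - 0) • C) x‖
      = ‖ff P T (s, (x : E)) - ff P T (0, (x : E)) - s • D (0, (x : E))‖ := by
        rw [ContinuousMap.sub_apply, ContinuousMap.sub_apply, ContinuousMap.smul_apply,
          gam_apply, gam_apply, hC x, sub_zero]
    _ = ‖k s - k 0‖ := by rw [hkval]
    _ ≤ ε * ‖s - 0‖ := hMVT

attribute [local instance] Classical.propDecidable

/-- Let `d ≥ 2` be even and `l` a continuous linear functional on
`C(S^{d-1})` invariant under `V_g` for every `g ∈ Sp(d,ℝ)`. Then for every polynomial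
function `b` on `ℝ^d` (given by a multivariate polynomial `P`) and every `A ∈ sp(d,ℝ)`,
`l` vanishes on the restriction to `S^{d-1}` of
`(π(A)b)(t) = ⟨∇b(t) − ⟨∇b(t),t⟩t, At⟩ − d⟨At,t⟩b(t)`. -/
theorem stmt11 {d : ℕ} (hd : 2 ≤ d) (hdeven : Even d)
    (l : C(Metric.sphere (0 : EuclideanSpace ℝ (Fin d)) 1, ℂ) →L[ℂ] ℂ)
    (hl : ∀ g : Matrix (Fin d) (Fin d) ℝ, g.transpose * Omega d * g = Omega d →
      ∀ b c : C(Metric.sphere (0 : EuclideanSpace ℝ (Fin d)) 1, ℂ),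
        (∀ t : Metric.sphere (0 : EuclideanSpace ℝ (Fin d)) 1,
          c t = (((‖Matrix.toEuclideanLin g t‖ ^ d)⁻¹ : ℝ) : ℂ) *
            homog b (Matrix.toEuclideanLin g t)) →
        l c = l b)
    (P : MvPolynomial (Fin d) ℂ)
    (A : Matrix (Fin d) (Fin d) ℝ)
    (hA : Omega d * A + A.transpose * Omega d = 0)
    (c : C(Metric.sphere (0 : EuclideanSpace ℝ (Fin d)) 1, ℂ))
    (hc : ∀ t : Metric.sphere (0 : EuclideanSpace ℝ (Fin d)) 1,
      c t =
        (∑ j : Fin d,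
          (MvPolynomial.eval
              (fun i => (((t : EuclideanSpace ℝ (Fin d)) i : ℝ) : ℂ)) (MvPolynomial.pderiv j P)
            - (∑ i : Fin d,
                MvPolynomial.eval
                    (fun i' => (((t : EuclideanSpace ℝ (Fin d)) i' : ℝ) : ℂ))
                    (MvPolynomial.pderiv i P) *
                  (((t : EuclideanSpace ℝ (Fin d)) i : ℝ) : ℂ)) *
              (((t : EuclideanSpace ℝ (Fin d)) j : ℝ) : ℂ)) *
          (((Matrix.toEuclideanLin A t : EuclideanSpace ℝ (Fin d)) j : ℝ) : ℂ))
        - (d : ℂ) *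
          (∑ j : Fin d,
            (((Matrix.toEuclideanLin A t : EuclideanSpace ℝ (Fin d)) j : ℝ) : ℂ) *
              (((t : EuclideanSpace ℝ (Fin d)) j : ℝ) : ℂ)) *
          MvPolynomial.eval
            (fun i => (((t : EuclideanSpace ℝ (Fin d)) i : ℝ) : ℂ)) P) :
    l c = 0 := by
  classical
  set T : EuclideanSpace ℝ (Fin d) →L[ℝ] EuclideanSpace ℝ (Fin d) :=
    Matrix.toEuclideanCLM (𝕜 := ℝ) A with hT
  set b₀ : C(Metric.sphere (0 : EuclideanSpace ℝ (Fin d)) 1, ℂ) :=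
    ⟨fun x => Pc P (x : EuclideanSpace ℝ (Fin d)),
      (pc_contDiff P).continuous.comp continuous_subtype_val⟩ with hb₀
  -- invariance along the one-parameter group
  have h1 : ∀ s : ℝ, l (gam P T s) = l b₀ := by
    intro s
    apply hl (NormedSpace.exp (s • A)) (exp_symplectic hdeven A hA _ ⟨s, rfl⟩) b₀ (gam P T s)
    intro t
    have hkey : (Matrix.toEuclideanLin (NormedSpace.exp (s • A)))
        (t : EuclideanSpace ℝ (Fin d)) = uu T (s, (t : EuclideanSpace ℝ (Fin d))) := by
      have h2 : Matrix.toEuclideanCLM (𝕜 := ℝ) (NormedSpace.exp (s • A)) =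
          NormedSpace.exp (s • T) := by
        rw [toEuclideanCLM_exp, _root_.map_smul]
      calc (Matrix.toEuclideanLin (NormedSpace.exp (s • A))) (t : EuclideanSpace ℝ (Fin d))
          = Matrix.toEuclideanCLM (𝕜 := ℝ) (NormedSpace.exp (s • A))
              (t : EuclideanSpace ℝ (Fin d)) := rfl
        _ = uu T (s, (t : EuclideanSpace ℝ (Fin d))) := by rw [h2]; rfl
    rw [hkey]
    have hyne : uu T (s, (t : EuclideanSpace ℝ (Fin d))) ≠ 0 :=
      uu_ne_zero T (sphere_ne_zero t)
    set y := uu T (s, (t : EuclideanSpace ℝ (Fin d))) with hy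
    have hmem : ‖y‖⁻¹ • y ∈ Metric.sphere (0 : EuclideanSpace ℝ (Fin d)) 1 := by
      rw [mem_sphere_zero_iff_norm, norm_smul, norm_inv, norm_norm,
        inv_mul_cancel₀ (norm_ne_zero_iff.mpr hyne)]
    have hhom : homog b₀ y = b₀ ⟨‖y‖⁻¹ • y, hmem⟩ := dif_pos hmem
    rw [hhom]
    rfl
  -- the value of the curve's derivative matches `c`
  have hval : ∀ x : Metric.sphere (0 : EuclideanSpace ℝ (Fin d)) 1,
      c x = fderiv ℝ (ff P T) (0, (x : EuclideanSpace ℝ (Fin d)))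
        (1, (0 : EuclideanSpace ℝ (Fin d))) := by
    intro x
    have hxnorm : ‖(x : EuclideanSpace ℝ (Fin d))‖ = 1 := mem_sphere_zero_iff_norm.mp x.2
    have hder := ff_deriv_zero P T hxnorm
    have hslice := ff_slice_hasDerivAt P T (s := 0)
      (x := (x : EuclideanSpace ℝ (Fin d))) (uu_ne_zero T (sphere_ne_zero x))
    rw [hslice.unique hder, hc x]
    set z : EuclideanSpace ℝ (Fin d) := (x : EuclideanSpace ℝ (Fin d)) with hz
    set a : ℝ := (inner ℝ (T z) z : ℝ) with ha
    have haC : ((a : ℝ) : ℂ) = ∑ j : Fin d, ((T z j : ℝ) : ℂ) * ((z j : ℝ) : ℂ) := by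
      rw [ha, PiLp.inner_apply]
      push_cast
      refine Finset.sum_congr rfl fun j _ => ?_
      rw [RCLike.inner_apply, starRingEnd_apply, star_trivial]
      push_cast
      ring
    have hgrad : gradL P z (T z - a • z) =
        ∑ j : Fin d, MvPolynomial.eval (fun i => ((z i : ℝ) : ℂ)) (MvPolynomial.pderiv j P) *
          (((T z j : ℝ) : ℂ) - ((a : ℝ) : ℂ) * ((z j : ℝ) : ℂ)) := by
      rw [gradL_apply]
      refine Finset.sum_congr rfl fun j _ => ?_
      congr 1
      have h4 : (T z - a • z) j = T z j - a * z j := rfl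
      rw [h4]
      push_cast
      ring
    have hAv : ∀ j : Fin d, ((Matrix.toEuclideanLin A z : EuclideanSpace ℝ (Fin d)) j : ℝ) =
        T z j := fun j => rfl
    simp only [hAv]
    rw [hgrad]
    set ev : Fin d → ℂ :=
      fun j => MvPolynomial.eval (fun i => ((z i : ℝ) : ℂ)) (MvPolynomial.pderiv j P) with hev
    set vj : Fin d → ℂ := fun j => ((T z j : ℝ) : ℂ) with hvj
    set xj : Fin d → ℂ := fun j => ((z j : ℝ) : ℂ) with hxj
    set p0 : ℂ := MvPolynomial.eval (fun i => ((z i : ℝ) : ℂ)) P with hp0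
    have e1 : ∑ j : Fin d, (ev j - (∑ i : Fin d, ev i * xj i) * xj j) * vj j =
        ∑ j : Fin d, ev j * vj j - (∑ i : Fin d, ev i * xj i) * ∑ j : Fin d, xj j * vj j := by
      rw [Finset.mul_sum, ← Finset.sum_sub_distrib]
      exact Finset.sum_congr rfl fun j _ => by ring
    have e2 : ∑ j : Fin d, ev j * (vj j - ((a : ℝ) : ℂ) * xj j) =
        ∑ j : Fin d, ev j * vj j - ((a : ℝ) : ℂ) * ∑ j : Fin d, ev j * xj j := by
      rw [Finset.mul_sum, ← Finset.sum_sub_distrib]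
      exact Finset.sum_congr rfl fun j _ => by ring
    have hswap : ∑ j : Fin d, xj j * vj j = ∑ j : Fin d, vj j * xj j :=
      Finset.sum_congr rfl fun j _ => mul_comm _ _
    rw [e1, e2, haC, hswap, show Pc P z = p0 from rfl]
    ring
  have h2 : HasDerivAt (gam P T) c 0 := gam_hasDerivAt P T c hval
  have hld : HasDerivAt (fun s => l (gam P T s)) (l c) 0 := by
    have := (l.restrictScalars ℝ).hasFDerivAt.comp_hasDerivAt 0 h2
    simp at this; exact this
  have hconst : (fun s => l (gam P T s)) = fun _ => l b₀ := funext h1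
  rw [hconst] at hld
  exact hld.unique (hasDerivAt_const 0 (l b₀))
end

section
/- Let d ≥ 2 be even and let l be a continuous linear functional on C(S^{d−1}) such that l(V_g b) = l(b) for every g ∈ Sp(d,ℝ) and every b ∈ C(S^{d−1}). Then for every multi-index n ∈ ℕ^d and every k with 1 ≤ k ≤ d/2, (n_{2k} + 1) · l(b_{n + 2e_{2k−1}}) = (n_{2k−1} + 1) · l(b_{n + 2e_{2k}}). -/
open MeasureTheory

attribute [local instance] Classical.propDecidable

open Matrix in
noncomputable def rotM {d : ℕ} (p q : Fin d) (θ : ℝ) : Matrix (Fin d) (Fin d) ℝ :=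
  1 + (Real.cos θ - 1) • (single p p 1 + single q q 1)
    + Real.sin θ • (single q p 1 - single p q 1)

section matrixpart
open Matrix
variable {d : ℕ}

lemma omega_mul_std_p {p q : Fin d} (hp : p.val % 2 = 0) (hq : q.val = p.val + 1) (j : Fin d) :
    Omega d * single p j (1:ℝ) = - single q j 1 := by
  ext a b
  by_cases hb : b = j
  · subst hb
    rw [Matrix.mul_single_apply_same]
    simp only [Matrix.neg_apply, Omega, Matrix.of_apply, mul_one, single]
    by_cases ha : a = q
    · subst ha
      rw [if_neg (by omega), if_pos ⟨hp, hq⟩]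
      simp
    · rw [if_neg (by rintro ⟨h1, h2⟩; omega), if_neg (by rintro ⟨h1, h2⟩; exact ha (Fin.ext (by omega)))]
      simp [Ne.symm ha]
  · rw [Matrix.mul_single_apply_of_ne (a := a) (b := b) (hbj := hb)]
    simp [single, Ne.symm hb]

lemma omega_mul_std_q {p q : Fin d} (hp : p.val % 2 = 0) (hq : q.val = p.val + 1) (j : Fin d) :
    Omega d * single q j (1:ℝ) = single p j 1 := by
  ext a b
  by_cases hb : b = j
  · subst hb
    rw [Matrix.mul_single_apply_same]
    simp only [Omega, Matrix.of_apply, mul_one, single]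
    by_cases ha : a = p
    · subst ha
      rw [if_pos ⟨hp, hq⟩]
      simp
    · rw [if_neg (by rintro ⟨h1, h2⟩; exact ha (Fin.ext (by omega))), if_neg (by rintro ⟨h1, h2⟩; omega)]
      simp [Ne.symm ha]
  · rw [Matrix.mul_single_apply_of_ne (a := a) (b := b) (hbj := hb)]
    simp [single, Ne.symm hb]

lemma std_p_mul_omega {p q : Fin d} (hp : p.val % 2 = 0) (hq : q.val = p.val + 1) (i : Fin d) :
    single i p (1:ℝ) * Omega d = single i q 1 := by
  ext a b
  by_cases ha : a = i
  · subst ha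
    rw [Matrix.single_mul_apply_same]
    simp only [Omega, Matrix.of_apply, one_mul, single]
    by_cases hbq : b = q
    · subst hbq
      rw [if_pos ⟨hp, hq⟩]
      simp
    · rw [if_neg (by rintro ⟨h1, h2⟩; exact hbq (Fin.ext (by omega))), if_neg (by rintro ⟨h1, h2⟩; omega)]
      simp [Ne.symm hbq]
  · rw [Matrix.single_mul_apply_of_ne (a := a) (b := b) (h := ha)]
    simp [single, Ne.symm ha]

lemma std_q_mul_omega {p q : Fin d} (hp : p.val % 2 = 0) (hq : q.val = p.val + 1) (i : Fin d) :
    single i q (1:ℝ) * Omega d = - single i p 1 := by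
  ext a b
  by_cases ha : a = i
  · subst ha
    rw [Matrix.single_mul_apply_same]
    simp only [Omega, Matrix.of_apply, one_mul, single, Matrix.neg_apply]
    by_cases hbp : b = p
    · subst hbp
      rw [if_neg (by omega), if_pos ⟨hp, hq⟩]
      simp
    · rw [if_neg (by rintro ⟨h1, h2⟩; omega), if_neg (by rintro ⟨h1, h2⟩; exact hbp (Fin.ext (by omega)))]
      simp [Ne.symm hbp]
  · rw [Matrix.single_mul_apply_of_ne (a := a) (b := b) (h := ha)]
    simp [single, Ne.symm ha]

lemma std_transpose (i j : Fin d) :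
    (single i j (1:ℝ))ᵀ = single j i 1 := by
  ext a b
  simp [single, Matrix.transpose_apply, and_comm]

lemma rot_symplectic {p q : Fin d} (hp : p.val % 2 = 0) (hq : q.val = p.val + 1) (θ : ℝ) :
    (rotM p q θ)ᵀ * Omega d * rotM p q θ = Omega d := by
  have hpq : p ≠ q := by intro h; rw [h] at hq; omega
  have e1 : ∀ (i l : Fin d) (c e : ℝ), single i p c * single q l e = 0 :=
    fun i l c e => Matrix.single_mul_single_of_ne _ _ _ _ hpq _
  have e2 : ∀ (i l : Fin d) (c e : ℝ), single i q c * single p l e = 0 :=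
    fun i l c e => Matrix.single_mul_single_of_ne _ _ _ _ hpq.symm _
  unfold rotM
  simp only [transpose_add, transpose_one, transpose_smul, transpose_sub,
    std_transpose, add_mul, mul_add, smul_mul_assoc, mul_smul_comm, one_mul, mul_one,
    sub_mul, mul_sub, omega_mul_std_p hp hq, omega_mul_std_q hp hq, std_p_mul_omega hp hq,
    std_q_mul_omega hp hq, Matrix.single_mul_single_same,
    e1, e2,
    mul_neg, neg_mul, smul_neg, neg_neg, smul_zero, sub_zero, zero_sub, neg_zero, add_zero,
    zero_add, mul_one]
  match_scalars
  all_goals nlinarith [Real.sin_sq_add_cos_sq θ]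

lemma rot_apply (p q : Fin d) (hpq : p ≠ q) (θ : ℝ) (t : EuclideanSpace ℝ (Fin d)) (i : Fin d) :
    Matrix.toEuclideanLin (rotM p q θ) t i =
      if i = p then Real.cos θ * t p - Real.sin θ * t q
      else if i = q then Real.sin θ * t p + Real.cos θ * t q
      else t i := by
  have h0 : Matrix.toEuclideanLin (rotM p q θ) t i = (rotM p q θ *ᵥ (fun j => t j)) i := rfl
  rw [h0]
  unfold rotM
  simp only [Matrix.add_mulVec, Matrix.smul_mulVec, Matrix.sub_mulVec,
    Matrix.one_mulVec, Matrix.single_mulVec, one_mul]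
  by_cases hip : i = p
  · subst hip
    simp [Function.update_apply, hpq, Ne.symm hpq, Pi.smul_apply, smul_eq_mul]
    ring
  · by_cases hiq : i = q
    · subst hiq
      simp [Function.update_apply, hpq, Ne.symm hpq, hip, Pi.smul_apply, smul_eq_mul]
      ring
    · simp [Function.update_apply, hip, hiq, Pi.smul_apply, smul_eq_mul]
end matrixpart

section normpart
variable {d : ℕ}

lemma sum_split (p q : Fin d) (hpq : p ≠ q) (v : Fin d → ℝ) :
    ∑ i, v i = v p + v q + ∑ i ∈ (Finset.univ.erase p).erase q, v i := by
  rw [← Finset.add_sum_erase Finset.univ v (Finset.mem_univ p),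
    ← Finset.add_sum_erase (Finset.univ.erase p) v
      (Finset.mem_erase.2 ⟨Ne.symm hpq, Finset.mem_univ q⟩), Finset.erase_right_comm]
  ring

lemma rot_norm (p q : Fin d) (hpq : p ≠ q) (θ : ℝ) (t : EuclideanSpace ℝ (Fin d)) :
    ‖Matrix.toEuclideanLin (rotM p q θ) t‖ = ‖t‖ := by
  rw [EuclideanSpace.norm_eq, EuclideanSpace.norm_eq]
  congr 1
  rw [sum_split p q hpq (fun i => ‖Matrix.toEuclideanLin (rotM p q θ) t i‖ ^ 2),
    sum_split p q hpq (fun i => ‖t i‖ ^ 2)]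
  have hr := rot_apply p q hpq θ t
  rw [hr p, hr q, if_pos rfl, if_neg (Ne.symm hpq), if_pos rfl]
  have hsum : ∀ i ∈ (Finset.univ.erase p).erase q,
      ‖Matrix.toEuclideanLin (rotM p q θ) t i‖ ^ 2 = ‖t i‖ ^ 2 := by
    intro i hi
    rw [Finset.mem_erase, Finset.mem_erase] at hi
    rw [hr i, if_neg hi.2.1, if_neg hi.1]
  rw [Finset.sum_congr rfl hsum]
  have : ∀ x : ℝ, ‖x‖ ^ 2 = x ^ 2 := fun x => by rw [Real.norm_eq_abs, sq_abs]
  rw [this, this, this, this]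
  linear_combination (t p ^ 2 + t q ^ 2) * Real.sin_sq_add_cos_sq θ
end normpart

section calc1
variable {𝔸 : Type*} [NormedCommRing 𝔸] [NormedAlgebra ℝ 𝔸]

lemma my_hasDerivAt_pow {w : ℝ → 𝔸} {w' : 𝔸} {x : ℝ} (h : HasDerivAt w w' x) (m : ℕ) :
    HasDerivAt (fun θ => w θ ^ (m + 1)) ((((m : 𝔸) + 1) * w x ^ m) * w') x := by
  induction m with
  | zero => simpa using h
  | succ m ih =>
    have h2 : HasDerivAt (fun θ => w θ ^ (m + 1) * w θ)
        ((((m : 𝔸) + 1) * w x ^ m) * w' * w x + w x ^ (m + 1) * w') x := ih.mul h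
    have h3 : (fun θ => w θ ^ (m + 1) * w θ) = fun θ => w θ ^ (m + 2) := by
      funext θ; ring
    rw [h3] at h2
    convert h2 using 1
    push_cast
    ring
end calc1

section coords
variable {d : ℕ}

noncomputable def coordC (i : Fin d) : C(Metric.sphere (0 : EuclideanSpace ℝ (Fin d)) 1, ℂ) :=
  ⟨fun t => (((t : EuclideanSpace ℝ (Fin d)) i : ℝ) : ℂ),
    Complex.continuous_ofReal.comp (by fun_prop)⟩
end coords

section phipart
variable {d : ℕ}

lemma prod_split_cm (p q : Fin d) (hpq : p ≠ q) (m : Fin d → ℕ) :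
    (∏ i, coordC i ^ m i : C(Metric.sphere (0 : EuclideanSpace ℝ (Fin d)) 1, ℂ)) =
      coordC p ^ m p * coordC q ^ m q *
        ∏ i ∈ (Finset.univ.erase p).erase q, coordC i ^ m i := by
  rw [← Finset.mul_prod_erase Finset.univ _ (Finset.mem_univ p),
    ← Finset.mul_prod_erase (Finset.univ.erase p) _
      (Finset.mem_erase.2 ⟨Ne.symm hpq, Finset.mem_univ q⟩), Finset.erase_right_comm, mul_assoc]

lemma phi_pointwise (p q : Fin d) (hp : p.val % 2 = 0) (hq : q.val = p.val + 1) (θ : ℝ)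
    (m : Fin d → ℕ) (t : Metric.sphere (0 : EuclideanSpace ℝ (Fin d)) 1) :
    ((Real.cos θ • coordC p - Real.sin θ • coordC q) ^ m p *
      (Real.sin θ • coordC p + Real.cos θ • coordC q) ^ m q *
      ∏ i ∈ (Finset.univ.erase p).erase q, coordC i ^ m i) t =
    (((‖Matrix.toEuclideanLin (rotM p q θ) (t : EuclideanSpace ℝ (Fin d))‖ ^ d)⁻¹ : ℝ) : ℂ) *
      homog (∏ i, coordC i ^ m i) (Matrix.toEuclideanLin (rotM p q θ) (t : EuclideanSpace ℝ (Fin d))) := by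
  have hpq : p ≠ q := by intro h; rw [h] at hq; omega
  set gt := Matrix.toEuclideanLin (rotM p q θ) (t : EuclideanSpace ℝ (Fin d)) with hgt
  have ht : ‖(t : EuclideanSpace ℝ (Fin d))‖ = 1 := by
    have := t.2; rwa [mem_sphere_zero_iff_norm] at this
  have hnorm : ‖gt‖ = 1 := by rw [hgt, rot_norm p q hpq, ht]
  have hmem : ‖gt‖⁻¹ • gt ∈ Metric.sphere (0 : EuclideanSpace ℝ (Fin d)) 1 := by
    rw [hnorm, inv_one, one_smul, mem_sphere_zero_iff_norm]; exact hnorm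
  rw [homog, dif_pos hmem]
  have hsc : ((‖gt‖ ^ d)⁻¹ : ℝ) = 1 := by rw [hnorm]; simp
  rw [hsc, Complex.ofReal_one, one_mul]
  have hmem' : gt ∈ Metric.sphere (0 : EuclideanSpace ℝ (Fin d)) 1 := by
    rwa [mem_sphere_zero_iff_norm]
  have hxeq : (⟨‖gt‖⁻¹ • gt, hmem⟩ : Metric.sphere (0 : EuclideanSpace ℝ (Fin d)) 1) =
      ⟨gt, hmem'⟩ := Subtype.ext (by simp [hnorm])
  rw [hxeq, prod_split_cm p q hpq m]
  have hgp : gt p = Real.cos θ * (t : EuclideanSpace ℝ (Fin d)) p -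
      Real.sin θ * (t : EuclideanSpace ℝ (Fin d)) q := by
    rw [hgt, rot_apply p q hpq, if_pos rfl]
  have hgq : gt q = Real.sin θ * (t : EuclideanSpace ℝ (Fin d)) p +
      Real.cos θ * (t : EuclideanSpace ℝ (Fin d)) q := by
    rw [hgt, rot_apply p q hpq, if_neg (Ne.symm hpq), if_pos rfl]
  simp only [ContinuousMap.mul_apply, ContinuousMap.pow_apply, ContinuousMap.smul_apply,
    ContinuousMap.sub_apply, ContinuousMap.add_apply, ContinuousMap.prod_apply, coordC,
    ContinuousMap.coe_mk, hgp, hgq, Complex.real_smul]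
  have hprod : ∀ i ∈ (Finset.univ.erase p).erase q,
      (((gt i : ℝ) : ℂ)) ^ m i = (((t : EuclideanSpace ℝ (Fin d)) i : ℝ) : ℂ) ^ m i := by
    intro i hi
    rw [Finset.mem_erase, Finset.mem_erase] at hi
    rw [hgt, rot_apply p q hpq, if_neg hi.2.1, if_neg hi.1]
  rw [Finset.prod_congr rfl hprod]
  push_cast
  ring
end phipart

/-- Let `d ≥ 2` be even and `l` a continuous linear functional on
`C(S^{d-1})` invariant under `V_g` for every `g ∈ Sp(d,ℝ)`. Then for every multi-index
`n ∈ ℕ^d` and every `1 ≤ k ≤ d/2` (`k'` below is `k-1`, so `2k-1, 2k` (1-based) become the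
0-based indices `2k', 2k'+1`):
`(n_{2k} + 1)·l(b_{n+2e_{2k-1}}) = (n_{2k-1} + 1)·l(b_{n+2e_{2k}})`,
where `b_m(t) = ∏ i, t_i ^ m_i`. -/
theorem stmt12 {d : ℕ} (hd : 2 ≤ d) (hdeven : Even d)
    (l : C(Metric.sphere (0 : EuclideanSpace ℝ (Fin d)) 1, ℂ) →L[ℂ] ℂ)
    (hl : ∀ g : Matrix (Fin d) (Fin d) ℝ, g.transpose * Omega d * g = Omega d →
      ∀ b c : C(Metric.sphere (0 : EuclideanSpace ℝ (Fin d)) 1, ℂ),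
        (∀ t : Metric.sphere (0 : EuclideanSpace ℝ (Fin d)) 1,
          c t = (((‖Matrix.toEuclideanLin g t‖ ^ d)⁻¹ : ℝ) : ℂ) *
            homog b (Matrix.toEuclideanLin g t)) →
        l c = l b)
    (n : Fin d → ℕ) (k' : ℕ) (hk : 2 * k' + 1 < d)
    (c₁ c₂ : C(Metric.sphere (0 : EuclideanSpace ℝ (Fin d)) 1, ℂ))
    (hc₁ : ∀ t : Metric.sphere (0 : EuclideanSpace ℝ (Fin d)) 1,
      c₁ t = ∏ i : Fin d, (((t : EuclideanSpace ℝ (Fin d)) i : ℝ) : ℂ) ^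
        (n i + if i = (⟨2 * k', by omega⟩ : Fin d) then 2 else 0))
    (hc₂ : ∀ t : Metric.sphere (0 : EuclideanSpace ℝ (Fin d)) 1,
      c₂ t = ∏ i : Fin d, (((t : EuclideanSpace ℝ (Fin d)) i : ℝ) : ℂ) ^
        (n i + if i = (⟨2 * k' + 1, hk⟩ : Fin d) then 2 else 0)) :
    ((n ⟨2 * k' + 1, hk⟩ : ℂ) + 1) * l c₁ = ((n ⟨2 * k', by omega⟩ : ℂ) + 1) * l c₂ := by
  have hk0 : 2 * k' < d := by omega
  set p : Fin d := ⟨2 * k', hk0⟩ with hpdef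
  set q : Fin d := ⟨2 * k' + 1, hk⟩ with hqdef
  have hp : p.val % 2 = 0 := by simp [hpdef]
  have hq : q.val = p.val + 1 := rfl
  have hpq : p ≠ q := by
    intro h
    have := congrArg Fin.val h
    simp [hpdef, hqdef] at this
  set m : Fin d → ℕ := fun i => if i = p then n p + 1 else if i = q then n q + 1 else n i with hm
  have hmp : m p = n p + 1 := by simp [hm]
  have hmq : m q = n q + 1 := by simp [hm, hpq.symm]
  set X : C(Metric.sphere (0 : EuclideanSpace ℝ (Fin d)) 1, ℂ) := coordC p with hX
  set Y : C(Metric.sphere (0 : EuclideanSpace ℝ (Fin d)) 1, ℂ) := coordC q with hY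
  set Z : C(Metric.sphere (0 : EuclideanSpace ℝ (Fin d)) 1, ℂ) := ∏ i ∈ (Finset.univ.erase p).erase q, coordC i ^ m i with hZdef
  set Φ : ℝ → C(Metric.sphere (0 : EuclideanSpace ℝ (Fin d)) 1, ℂ) := fun θ =>
    (Real.cos θ • X - Real.sin θ • Y) ^ m p * (Real.sin θ • X + Real.cos θ • Y) ^ m q * Z
    with hΦ
  have hB : (∏ i, coordC i ^ m i : C(Metric.sphere (0 : EuclideanSpace ℝ (Fin d)) 1, ℂ)) = Φ 0 := by
    rw [prod_split_cm p q hpq m, hΦ]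
    show _ = (Real.cos 0 • X - Real.sin 0 • Y) ^ m p * (Real.sin 0 • X + Real.cos 0 • Y) ^ m q * Z
    rw [Real.cos_zero, Real.sin_zero, one_smul ℝ X, one_smul ℝ Y, zero_smul ℝ X,
      zero_smul ℝ Y, sub_zero, zero_add]
  have hconst : ∀ θ, l (Φ θ) = l (Φ 0) := by
    intro θ
    rw [← hB]
    apply hl (rotM p q θ) (rot_symplectic hp hq θ)
    intro t
    exact phi_pointwise p q hp hq θ m t
  -- calculus
  have hu : HasDerivAt (fun θ : ℝ => Real.cos θ • X - Real.sin θ • Y)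
      ((-Real.sin 0) • X - Real.cos 0 • Y) 0 :=
    ((Real.hasDerivAt_cos 0).smul_const X).sub ((Real.hasDerivAt_sin 0).smul_const Y)
  have hv : HasDerivAt (fun θ : ℝ => Real.sin θ • X + Real.cos θ • Y)
      (Real.cos 0 • X + (-Real.sin 0) • Y) 0 :=
    ((Real.hasDerivAt_sin 0).smul_const X).add ((Real.hasDerivAt_cos 0).smul_const Y)
  have hu' : HasDerivAt (fun θ : ℝ => Real.cos θ • X - Real.sin θ • Y) (-Y) 0 := by
    convert hu using 1
    rw [Real.sin_zero, Real.cos_zero]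
    module
  have hv' : HasDerivAt (fun θ : ℝ => Real.sin θ • X + Real.cos θ • Y) X 0 := by
    convert hv using 1
    rw [Real.sin_zero, Real.cos_zero]
    module
  have hPQ := ((my_hasDerivAt_pow hu' (n p)).mul (my_hasDerivAt_pow hv' (n q))).mul_const Z
  have hΦeq : Φ = fun θ =>
      (Real.cos θ • X - Real.sin θ • Y) ^ (n p + 1) *
        (Real.sin θ • X + Real.cos θ • Y) ^ (n q + 1) * Z := by
    funext θ; rw [hΦ, hmp, hmq]
  rw [hΦeq] at hconst
  have hD' : HasDerivAt
      (fun θ : ℝ => l ((Real.cos θ • X - Real.sin θ • Y) ^ (n p + 1) *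
        (Real.sin θ • X + Real.cos θ • Y) ^ (n q + 1) * Z))
      (l ((((n p : C(Metric.sphere (0 : EuclideanSpace ℝ (Fin d)) 1, ℂ)) + 1) *
          (Real.cos 0 • X - Real.sin 0 • Y) ^ n p * -Y *
          (Real.sin 0 • X + Real.cos 0 • Y) ^ (n q + 1) +
        (Real.cos 0 • X - Real.sin 0 • Y) ^ (n p + 1) *
          (((n q : C(Metric.sphere (0 : EuclideanSpace ℝ (Fin d)) 1, ℂ)) + 1) *
          (Real.sin 0 • X + Real.cos 0 • Y) ^ n q * X)) * Z)) 0 :=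
    (l.restrictScalars ℝ).hasFDerivAt.comp_hasDerivAt 0 hPQ
  have hFc : (fun θ : ℝ => l ((Real.cos θ • X - Real.sin θ • Y) ^ (n p + 1) *
      (Real.sin θ • X + Real.cos θ • Y) ^ (n q + 1) * Z)) =
      fun _ : ℝ => l ((Real.cos 0 • X - Real.sin 0 • Y) ^ (n p + 1) *
      (Real.sin 0 • X + Real.cos 0 • Y) ^ (n q + 1) * Z) := funext hconst
  rw [hFc] at hD'
  have hzero := hD'.unique (hasDerivAt_const 0 _)
  set bC1 : C(Metric.sphere (0 : EuclideanSpace ℝ (Fin d)) 1, ℂ) :=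
    X ^ (n p + 2) * Y ^ (n q) * Z with hbC1
  set bC2 : C(Metric.sphere (0 : EuclideanSpace ℝ (Fin d)) 1, ℂ) :=
    X ^ (n p) * Y ^ (n q + 2) * Z with hbC2
  have hbig : ((((n p : C(Metric.sphere (0 : EuclideanSpace ℝ (Fin d)) 1, ℂ)) + 1) *
          (Real.cos 0 • X - Real.sin 0 • Y) ^ n p * -Y *
          (Real.sin 0 • X + Real.cos 0 • Y) ^ (n q + 1) +
        (Real.cos 0 • X - Real.sin 0 • Y) ^ (n p + 1) *
          (((n q : C(Metric.sphere (0 : EuclideanSpace ℝ (Fin d)) 1, ℂ)) + 1) *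
          (Real.sin 0 • X + Real.cos 0 • Y) ^ n q * X)) * Z) =
      ((n q + 1 : ℕ) • bC1) - ((n p + 1 : ℕ) • bC2) := by
    rw [Real.cos_zero, Real.sin_zero, one_smul ℝ X, one_smul ℝ Y, zero_smul ℝ X,
      zero_smul ℝ Y, sub_zero, zero_add, hbC1, hbC2, nsmul_eq_mul, nsmul_eq_mul]
    push_cast
    ring
  rw [hbig, map_sub, map_nsmul, map_nsmul] at hzero
  have hfin : ((n q : ℂ) + 1) * l bC1 = ((n p : ℂ) + 1) * l bC2 := by
    rw [sub_eq_zero] at hzero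
    rw [nsmul_eq_mul, nsmul_eq_mul] at hzero
    push_cast at hzero
    exact hzero
  have hqp : ¬ q = p := fun h => hpq h.symm
  have hmcong : ∀ i ∈ (Finset.univ.erase p).erase q, m i = n i := by
    intro i hi
    rw [Finset.mem_erase, Finset.mem_erase] at hi
    simp [hm, hi.1, hi.2.1]
  have hC1 : c₁ = bC1 := by
    ext t
    rw [hc₁ t, hbC1]
    simp only [ContinuousMap.mul_apply, ContinuousMap.pow_apply, ContinuousMap.prod_apply,
      hX, hY, hZdef, coordC, ContinuousMap.coe_mk]
    rw [← Finset.mul_prod_erase Finset.univ _ (Finset.mem_univ p),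
      ← Finset.mul_prod_erase (Finset.univ.erase p) _
        (Finset.mem_erase.2 ⟨Ne.symm hpq, Finset.mem_univ q⟩), Finset.erase_right_comm,
      if_pos rfl, if_neg hqp]
    have hprodc : ∀ i ∈ (Finset.univ.erase q).erase p,
        (((t : EuclideanSpace ℝ (Fin d)) i : ℝ) : ℂ) ^ (n i + if i = p then 2 else 0) =
          (((t : EuclideanSpace ℝ (Fin d)) i : ℝ) : ℂ) ^ m i := by
      intro i hi
      rw [Finset.mem_erase, Finset.mem_erase] at hi
      have h2 : m i = n i := by simp [hm, hi.1, hi.2.1]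
      rw [if_neg hi.1, add_zero, h2]
    rw [Finset.prod_congr rfl hprodc, add_zero]
    ring
  have hC2 : c₂ = bC2 := by
    ext t
    rw [hc₂ t, hbC2]
    simp only [ContinuousMap.mul_apply, ContinuousMap.pow_apply, ContinuousMap.prod_apply,
      hX, hY, hZdef, coordC, ContinuousMap.coe_mk]
    rw [← Finset.mul_prod_erase Finset.univ _ (Finset.mem_univ p),
      ← Finset.mul_prod_erase (Finset.univ.erase p) _
        (Finset.mem_erase.2 ⟨Ne.symm hpq, Finset.mem_univ q⟩), Finset.erase_right_comm]
    have hprodc : ∀ i ∈ (Finset.univ.erase q).erase p,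
        (((t : EuclideanSpace ℝ (Fin d)) i : ℝ) : ℂ) ^ (n i + if i = q then 2 else 0) =
          (((t : EuclideanSpace ℝ (Fin d)) i : ℝ) : ℂ) ^ m i := by
      intro i hi
      rw [Finset.mem_erase, Finset.mem_erase] at hi
      have h2 : m i = n i := by simp [hm, hi.1, hi.2.1]
      rw [if_neg hi.2.1, add_zero, h2]
    rw [Finset.prod_congr rfl hprodc, if_pos rfl, if_neg hpq, add_zero]
    ring
  rw [hC1, hC2]
  exact hfin
end

section
/- Let d ≥ 2 be even and let l be a continuous linear functional on C(S^{d−1}) such that l(V_g b) = l(b) for every g ∈ Sp(d,ℝ) and every b ∈ C(S^{d−1}). Then for every multi-index n ∈ ℕ^d with n_j ≥ 1 for all j, and every k with 1 ≤ k ≤ d, (‖n‖₁ + d) · l(b_{n + 2e_k}) = (n_k + 1) · l(b_n), where ‖n‖₁ = Σ_{j=1}^d n_j. -/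
open MeasureTheory

attribute [local instance] Classical.propDecidable

namespace Stmt13Aux

variable {d : ℕ}

abbrev Ed (d : ℕ) := EuclideanSpace ℝ (Fin d)
abbrev Sd (d : ℕ) := Metric.sphere (0 : Ed d) 1

/-- Coordinates of `g_s t` where `g_s = 1 + s E_{k k'}`. -/
def wv (k k' : Fin d) (s : ℝ) (t : Ed d) : Fin d → ℝ :=
  fun i => t i + if i = k then s * t k' else 0

noncomputable def rr (k k' : Fin d) (s : ℝ) (t : Ed d) : ℝ :=
  Real.sqrt (∑ i, wv k k' s t i ^ 2)

def gm (k k' : Fin d) (s : ℝ) : Matrix (Fin d) (Fin d) ℝ :=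
  Matrix.of fun a b => (if a = b then 1 else 0) + (if a = k ∧ b = k' then s else 0)

lemma toEuclideanLin_gm (k k' : Fin d) (s : ℝ) (t : Ed d) (i : Fin d) :
    (Matrix.toEuclideanLin (gm k k' s) t) i = wv k k' s t i := by
  rw [Matrix.toEuclideanLin_apply, WithLp.ofLp_toLp]
  simp only [Matrix.mulVec, dotProduct, gm, Matrix.of_apply, add_mul, ite_mul, one_mul,
    zero_mul, Finset.sum_add_distrib, wv]
  congr 1
  · rw [Finset.sum_ite_eq _ i (fun j => t j)]; simp
  · by_cases h : i = k <;> simp [h, Finset.sum_ite_eq']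

lemma norm_toEuclideanLin_gm (k k' : Fin d) (s : ℝ) (t : Ed d) :
    ‖Matrix.toEuclideanLin (gm k k' s) t‖ = rr k k' s t := by
  rw [EuclideanSpace.norm_eq, rr]
  congr 1
  refine Finset.sum_congr rfl fun i _ => ?_
  rw [toEuclideanLin_gm, Real.norm_eq_abs, sq_abs]

lemma sphere_sum_sq (t : Sd d) : ∑ i, ((t : Ed d) i) ^ 2 = 1 := by
  have h : ‖(t : Ed d)‖ = 1 := by
    have := t.2
    rwa [mem_sphere_zero_iff_norm] at this
  have h2 : ‖(t : Ed d)‖ ^ 2 = ∑ i, ((t : Ed d) i) ^ 2 := by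
    rw [EuclideanSpace.norm_eq, Real.sq_sqrt (Finset.sum_nonneg fun i _ => sq_nonneg _)]
    exact Finset.sum_congr rfl fun i _ => by rw [Real.norm_eq_abs, sq_abs]
  rw [← h2, h, one_pow]

lemma wv_sum_sq (k k' : Fin d) (hkk : k ≠ k') (s : ℝ) (t : Sd d) :
    ∑ i, wv k k' s (t : Ed d) i ^ 2
      = 1 + s * (2 * (t : Ed d) k * (t : Ed d) k' + s * ((t : Ed d) k') ^ 2) := by
  have hcong : ∀ i ∈ Finset.univ, wv k k' s (t : Ed d) i ^ 2
      = (t : Ed d) i ^ 2 + (if i = k then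
          s * (2 * (t : Ed d) k * (t : Ed d) k' + s * ((t : Ed d) k') ^ 2) else 0) := by
    intro i _
    by_cases h : i = k
    · subst h; simp only [wv]; rw [if_pos trivial, if_pos trivial]; ring
    · simp [wv, h]
  rw [Finset.sum_congr rfl hcong, Finset.sum_add_distrib, sphere_sum_sq,
    Finset.sum_ite_eq' Finset.univ k]
  simp

lemma rr_pos (k k' : Fin d) (hkk : k ≠ k') (s : ℝ) (t : Sd d) :
    0 < rr k k' s (t : Ed d) := by
  rw [rr]
  apply Real.sqrt_pos.mpr
  by_contra hle
  push_neg at hle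
  have hz : ∑ i, wv k k' s (t : Ed d) i ^ 2 = 0 :=
    le_antisymm hle (Finset.sum_nonneg fun i _ => sq_nonneg _)
  have hall : ∀ i, wv k k' s (t : Ed d) i = 0 := by
    intro i
    have := (Finset.sum_eq_zero_iff_of_nonneg (fun i _ => sq_nonneg (wv k k' s (t : Ed d) i))).mp
      hz i (Finset.mem_univ i)
    exact pow_eq_zero_iff two_ne_zero |>.mp this
  have htk' : (t : Ed d) k' = 0 := by
    have := hall k'
    simpa [wv, (Ne.symm hkk)] using this
  have hti : ∀ i, (t : Ed d) i = 0 := by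
    intro i
    by_cases h : i = k
    · subst h
      have := hall i
      simpa [wv, htk'] using this
    · have := hall i
      simpa [wv, h] using this
  have := sphere_sum_sq t
  simp [hti] at this

lemma gm_symplectic (k k' : Fin d) (hkk : k ≠ k')
    (hcol : ∀ i, i ≠ k' → Omega d i k = 0) (hrow : ∀ j, j ≠ k' → Omega d k j = 0)
    (hanti : Omega d k' k = - Omega d k k') (s : ℝ) :
    (gm k k' s).transpose * Omega d * gm k k' s = Omega d := by
  have hA : ∀ i b, ((gm k k' s).transpose * Omega d) i b
      = Omega d i b + (if i = k' then s * Omega d k b else 0) := by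
    intro i b
    rw [Matrix.mul_apply]
    simp only [Matrix.transpose_apply, gm, Matrix.of_apply, add_mul, ite_mul, one_mul,
      zero_mul, Finset.sum_add_distrib]
    congr 1
    · rw [Finset.sum_ite_eq' Finset.univ i (fun a => Omega d a b)]; simp
    · by_cases h : i = k' <;> simp [h, Finset.sum_ite_eq']
  ext i j
  rw [Matrix.mul_apply]
  have hsum : ∀ b, ((gm k k' s).transpose * Omega d) i b * gm k k' s b j
      = (if b = j then ((gm k k' s).transpose * Omega d) i b else 0)
        + (if b = k ∧ j = k' then ((gm k k' s).transpose * Omega d) i b * s else 0) := by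
    intro b
    simp only [gm, Matrix.of_apply, mul_add]
    congr 1
    · by_cases h : b = j <;> simp [h]
    · by_cases h : b = k ∧ j = k' <;> simp [h]
  rw [Finset.sum_congr rfl fun b _ => hsum b, Finset.sum_add_distrib,
    Finset.sum_ite_eq' Finset.univ j (fun b => ((gm k k' s).transpose * Omega d) i b)]
  have h2 : (∑ b, if b = k ∧ j = k' then ((gm k k' s).transpose * Omega d) i b * s else 0)
      = if j = k' then ((gm k k' s).transpose * Omega d) i k * s else 0 := by
    by_cases h : j = k' <;> simp [h, Finset.sum_ite_eq']
  rw [h2]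
  simp only [Finset.mem_univ, ite_true, if_true, hA]
  have hΩkk : Omega d k k = 0 := hrow k hkk
  by_cases hi : i = k' <;> by_cases hj : j = k'
  · subst hi; subst hj; simp [hΩkk, hanti]; ring
  · subst hi; simp [hj, hΩkk, hrow j hj]
  · subst hj; simp [hi, hcol i hi]
  · simp [hi, hj]

lemma omega_facts (k k' : Fin d)
    (hk' : (k.val % 2 = 0 ∧ k'.val = k.val + 1) ∨ (k.val % 2 = 1 ∧ k.val = k'.val + 1)) :
    (∀ i, i ≠ k' → Omega d i k = 0) ∧ (∀ j, j ≠ k' → Omega d k j = 0) ∧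
      (Omega d k' k = - Omega d k k') ∧ k ≠ k' := by
  have hvne : ∀ {a b : Fin d}, a ≠ b → a.val ≠ b.val := fun h hh => h (Fin.val_injective hh)
  refine ⟨fun i hi => ?_, fun j hj => ?_, ?_, ?_⟩
  · have h := hvne hi
    simp only [Omega, Matrix.of_apply]
    split_ifs with h1 h2 <;> first | rfl | (exfalso; omega)
  · have h := hvne hj
    simp only [Omega, Matrix.of_apply]
    split_ifs with h1 h2 <;> first | rfl | (exfalso; omega)
  · simp only [Omega, Matrix.of_apply]
    split_ifs <;> (try norm_num) <;> omega
  · intro h; subst h; omega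

/-- The Hadamard-quotient function `G(s,t)` with `c_s = c_0 + s • G(s, ·)`. -/
noncomputable def Gf (k k' : Fin d) (m : Fin d → ℕ) (p : ℕ)
    (st : ℝ × Sd d) : ℂ :=
  (-(2 * (((st.2 : Ed d) k : ℝ) : ℂ) * (((st.2 : Ed d) k' : ℝ) : ℂ)
        + ((st.1 : ℝ) : ℂ) * (((st.2 : Ed d) k' : ℝ) : ℂ) ^ 2)
      * (∑ j ∈ Finset.range p, ((rr k k' st.1 (st.2 : Ed d) : ℝ) : ℂ) ^ j)
      * (((1 + ((rr k k' st.1 (st.2 : Ed d) : ℝ) : ℂ))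
          * ((rr k k' st.1 (st.2 : Ed d) : ℝ) : ℂ) ^ p)⁻¹))
    * (∏ i, ((wv k k' st.1 (st.2 : Ed d) i : ℝ) : ℂ) ^ (m i))
  + (((st.2 : Ed d) k' : ℝ) : ℂ) *
      ((∑ j ∈ Finset.range (m k), ((wv k k' st.1 (st.2 : Ed d) k : ℝ) : ℂ) ^ j
          * (((st.2 : Ed d) k : ℝ) : ℂ) ^ (m k - 1 - j))
        * ∏ i ∈ Finset.univ.erase k, (((st.2 : Ed d) i : ℝ) : ℂ) ^ (m i))

lemma master (k k' : Fin d) (hkk : k ≠ k') (m : Fin d → ℕ) (p : ℕ)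
    (hp : p = (∑ i, m i) + d)
    (bm : C(Sd d, ℂ)) (hbm : ∀ t : Sd d, bm t = ∏ i, (((t : Ed d) i : ℝ) : ℂ) ^ (m i))
    (s : ℝ) (t : Sd d) :
    (((‖Matrix.toEuclideanLin (gm k k' s) (t : Ed d)‖ ^ d)⁻¹ : ℝ) : ℂ) *
      homog bm (Matrix.toEuclideanLin (gm k k' s) (t : Ed d))
    = bm t + (s : ℂ) * Gf k k' m p (s, t) := by
  set t' : Ed d := (t : Ed d) with ht'
  set L : Ed d := Matrix.toEuclideanLin (gm k k' s) t' with hL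
  set r : ℝ := rr k k' s t' with hrdef
  have hnorm : ‖L‖ = r := norm_toEuclideanLin_gm k k' s t'
  have hr : 0 < r := rr_pos k k' hkk s t
  have hLne : L ≠ 0 := by
    intro h
    rw [h, norm_zero] at hnorm
    exact absurd hnorm.symm (ne_of_gt hr)
  have hmem : ‖L‖⁻¹ • L ∈ Sd d := by
    rw [mem_sphere_zero_iff_norm, norm_smul, norm_inv, norm_norm,
      inv_mul_cancel₀ (norm_ne_zero_iff.mpr hLne)]
  have hhomog : homog bm L = bm ⟨_, hmem⟩ := dif_pos hmem
  have hcoord : ∀ i, ((‖L‖⁻¹ • L : Ed d) i : ℝ) = r⁻¹ * wv k k' s t' i := by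
    intro i
    rw [PiLp.smul_apply, hnorm, smul_eq_mul, hL, toEuclideanLin_gm]
  have hN : homog bm L = ((r : ℂ) ^ (∑ i, m i))⁻¹ * ∏ i, ((wv k k' s t' i : ℝ) : ℂ) ^ (m i) := by
    rw [hhomog, hbm]
    simp only [hcoord]
    push_cast
    rw [Finset.prod_congr rfl (fun i _ => mul_pow ((r : ℂ)⁻¹) _ (m i)),
      Finset.prod_mul_distrib, Finset.prod_pow_eq_pow_sum, inv_pow]
  set rc : ℂ := (r : ℂ) with hrc
  have hrcne : rc ≠ 0 := by
    simp only [hrc, ne_eq, Complex.ofReal_eq_zero]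
    exact ne_of_gt hr
  have h1rne : (1 : ℂ) + rc ≠ 0 := by
    have : (0:ℝ) < 1 + r := by linarith
    simp only [hrc]
    intro h
    have := congrArg Complex.re h
    simp at this
    linarith
  set tk : ℂ := ((t' k : ℝ) : ℂ) with htk
  set tk' : ℂ := ((t' k' : ℝ) : ℂ) with htk'
  set sc : ℂ := ((s : ℝ) : ℂ) with hsc
  set wk : ℂ := ((wv k k' s t' k : ℝ) : ℂ) with hwk
  have hr2 : rc ^ 2 = 1 + sc * (2 * tk * tk' + sc * tk' ^ 2) := by
    have hsq : r ^ 2 = 1 + s * (2 * t' k * t' k' + s * (t' k') ^ 2) := by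
      rw [hrdef, rr, Real.sq_sqrt (Finset.sum_nonneg fun i _ => sq_nonneg _)]
      exact wv_sum_sq k k' hkk s t
    show ((r : ℝ) : ℂ) ^ 2 = 1 + ((s : ℝ) : ℂ) * (2 * ((t' k : ℝ) : ℂ) * ((t' k' : ℝ) : ℂ)
      + ((s : ℝ) : ℂ) * ((t' k' : ℝ) : ℂ) ^ 2)
    rw [← Complex.ofReal_pow, hsq]
    push_cast
    ring
  have hwkeq : wk = tk + sc * tk' := by
    rw [hwk, wv, if_pos rfl]; push_cast; ring
  set P : ℂ := ∏ i ∈ Finset.univ.erase k, ((t' i : ℝ) : ℂ) ^ (m i) with hP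
  have hBsplit : (∏ i, ((wv k k' s t' i : ℝ) : ℂ) ^ (m i)) = wk ^ (m k) * P := by
    rw [← Finset.mul_prod_erase Finset.univ _ (Finset.mem_univ k)]
    congr 1
    refine Finset.prod_congr rfl fun i hi => ?_
    have hik : i ≠ k := (Finset.mem_erase.mp hi).1
    rw [wv, if_neg hik, add_zero]
  have hB0split : (∏ i, ((t' i : ℝ) : ℂ) ^ (m i)) = tk ^ (m k) * P := by
    rw [← Finset.mul_prod_erase Finset.univ _ (Finset.mem_univ k)]
  set Sg : ℂ := ∑ j ∈ Finset.range p, rc ^ j with hSg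
  set Sg2 : ℂ := ∑ j ∈ Finset.range (m k), wk ^ j * tk ^ (m k - 1 - j) with hSg2
  have hgeom : Sg * (rc - 1) = rc ^ p - 1 := geom_sum_mul rc p
  have hgeom2 : Sg2 * (wk - tk) = wk ^ (m k) - tk ^ (m k) := geom_sum₂_mul wk tk (m k)
  have e2 : (rc - 1) * (1 + rc) = sc * (2 * tk * tk' + sc * tk' ^ 2) := by
    linear_combination hr2
  have hne : (1 + rc) * rc ^ p ≠ 0 := mul_ne_zero h1rne (pow_ne_zero p hrcne)
  have F1 : rc ^ p * (rc ^ p)⁻¹ = 1 := mul_inv_cancel₀ (pow_ne_zero p hrcne)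
  have F2 : ((1 + rc) * rc ^ p) * ((1 + rc) * rc ^ p)⁻¹ = 1 := mul_inv_cancel₀ hne
  have hstep2 : (rc ^ p)⁻¹ - 1 = sc * (-(2 * tk * tk' + sc * tk' ^ 2) * Sg
      * (((1 + rc) * rc ^ p)⁻¹)) := by
    apply mul_left_cancel₀ hne
    linear_combination (1 + rc) * F1 + (sc * (2 * tk * tk' + sc * tk' ^ 2) * Sg) * F2
      + (1 + rc) * hgeom - Sg * e2
  rw [hnorm, hN, hbm t]
  rw [hBsplit]
  have hcast : ((((r ^ d)⁻¹ : ℝ)) : ℂ) = (rc ^ d)⁻¹ := by rw [hrc]; push_cast; ring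
  rw [hcast]
  have hB0 : (∏ i, ((((t : Ed d) i : ℝ)) : ℂ) ^ (m i)) = tk ^ (m k) * P := hB0split
  rw [hB0]
  have hGf : Gf k k' m p (s, t) = (-(2 * tk * tk' + sc * tk' ^ 2) * Sg
      * (((1 + rc) * rc ^ p)⁻¹)) * (wk ^ (m k) * P) + tk' * (Sg2 * P) := by
    show (-(2 * tk * tk' + sc * tk' ^ 2)
      * (∑ j ∈ Finset.range p, rc ^ j)
      * (((1 + rc) * rc ^ p)⁻¹))
      * (∏ i, ((wv k k' s t' i : ℝ) : ℂ) ^ (m i))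
    + tk' * ((∑ j ∈ Finset.range (m k), wk ^ j * tk ^ (m k - 1 - j)) * P) = _
    rw [← hSg, ← hSg2, hBsplit]
  rw [hGf]
  have hpsplit : (rc ^ d)⁻¹ * ((rc ^ (∑ i, m i))⁻¹ * (wk ^ (m k) * P))
      = (rc ^ p)⁻¹ * (wk ^ (m k) * P) := by
    rw [hp, pow_add, mul_inv]; ring
  rw [hpsplit]
  linear_combination (wk ^ (m k) * P) * hstep2 - P * hgeom2 + (P * Sg2) * hwkeq

lemma cont_coord (i : Fin d) : Continuous fun st : ℝ × Sd d => ((st.2 : Ed d) i : ℝ) :=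
  (continuous_apply i).comp ((PiLp.continuous_ofLp 2 fun _ : Fin d => ℝ).comp
    (continuous_subtype_val.comp continuous_snd))

lemma cont_wv (k k' : Fin d) (i : Fin d) :
    Continuous fun st : ℝ × Sd d => wv k k' st.1 (st.2 : Ed d) i := by
  unfold wv
  by_cases h : i = k
  · subst h
    refine ((cont_coord i).add (continuous_fst.mul (cont_coord k'))).congr ?_
    intro st; simp
  · simpa [h] using cont_coord i

lemma cont_rr (k k' : Fin d) :
    Continuous fun st : ℝ × Sd d => rr k k' st.1 (st.2 : Ed d) := by
  unfold rr
  exact Real.continuous_sqrt.comp (continuous_finset_sum _ fun i _ => (cont_wv k k' i).pow 2)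

lemma cont_Gf (k k' : Fin d) (hkk : k ≠ k') (m : Fin d → ℕ) (p : ℕ) :
    Continuous (Gf k k' m p) := by
  have hc : ∀ i : Fin d, Continuous fun st : ℝ × Sd d => (((st.2 : Ed d) i : ℝ) : ℂ) :=
    fun i => Complex.continuous_ofReal.comp (cont_coord i)
  have hw : ∀ i : Fin d, Continuous fun st : ℝ × Sd d =>
      ((wv k k' st.1 (st.2 : Ed d) i : ℝ) : ℂ) :=
    fun i => Complex.continuous_ofReal.comp (cont_wv k k' i)
  have hrC : Continuous fun st : ℝ × Sd d => ((rr k k' st.1 (st.2 : Ed d) : ℝ) : ℂ) :=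
    Complex.continuous_ofReal.comp (cont_rr k k')
  have hs : Continuous fun st : ℝ × Sd d => ((st.1 : ℝ) : ℂ) :=
    Complex.continuous_ofReal.comp continuous_fst
  have hden : Continuous fun st : ℝ × Sd d =>
      ((1 + ((rr k k' st.1 (st.2 : Ed d) : ℝ) : ℂ))
        * ((rr k k' st.1 (st.2 : Ed d) : ℝ) : ℂ) ^ p)⁻¹ := by
    apply Continuous.inv₀ ((continuous_const.add hrC).mul (hrC.pow p))
    intro st
    have hr := rr_pos k k' hkk st.1 st.2
    apply mul_ne_zero
    · intro h
      have := congrArg Complex.re h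
      simp at this
      linarith
    · apply pow_ne_zero
      simp only [ne_eq, Complex.ofReal_eq_zero]
      exact ne_of_gt hr
  have term1 : Continuous fun st : ℝ × Sd d =>
      -(2 * (((st.2 : Ed d) k : ℝ) : ℂ) * (((st.2 : Ed d) k' : ℝ) : ℂ)
        + ((st.1 : ℝ) : ℂ) * (((st.2 : Ed d) k' : ℝ) : ℂ) ^ 2) :=
    (((continuous_const.mul (hc k)).mul (hc k')).add (hs.mul ((hc k').pow 2))).neg
  have sum1 : Continuous fun st : ℝ × Sd d =>
      ∑ j ∈ Finset.range p, ((rr k k' st.1 (st.2 : Ed d) : ℝ) : ℂ) ^ j :=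
    continuous_finset_sum _ fun j _ => hrC.pow j
  have sum2 : Continuous fun st : ℝ × Sd d =>
      ∑ j ∈ Finset.range (m k), ((wv k k' st.1 (st.2 : Ed d) k : ℝ) : ℂ) ^ j
        * (((st.2 : Ed d) k : ℝ) : ℂ) ^ (m k - 1 - j) :=
    continuous_finset_sum _ fun j _ => ((hw k).pow j).mul ((hc k).pow (m k - 1 - j))
  have prodall : Continuous fun st : ℝ × Sd d =>
      ∏ i, ((wv k k' st.1 (st.2 : Ed d) i : ℝ) : ℂ) ^ (m i) :=
    continuous_finset_prod _ fun i _ => (hw i).pow (m i)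
  have prode : Continuous fun st : ℝ × Sd d =>
      ∏ i ∈ Finset.univ.erase k, (((st.2 : Ed d) i : ℝ) : ℂ) ^ (m i) :=
    continuous_finset_prod _ fun i _ => (hc i).pow (m i)
  exact (((term1.mul sum1).mul hden).mul prodall).add ((hc k').mul (sum2.mul prode))

lemma rr_zero (k k' : Fin d) (t : Sd d) : rr k k' 0 (t : Ed d) = 1 := by
  rw [rr]
  have : ∀ i ∈ Finset.univ, wv k k' 0 (t : Ed d) i ^ 2 = ((t : Ed d) i) ^ 2 := by
    intro i _
    by_cases h : i = k <;> simp [wv, h]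
  rw [Finset.sum_congr rfl this, sphere_sum_sq, Real.sqrt_one]

lemma Gf_zero (k k' : Fin d) (m : Fin d → ℕ) (p : ℕ) (t : Sd d) :
    Gf k k' m p (0, t)
      = (m k : ℂ) * (((t : Ed d) k' : ℝ) : ℂ) * (((t : Ed d) k : ℝ) : ℂ) ^ (m k - 1)
          * (∏ i ∈ Finset.univ.erase k, (((t : Ed d) i : ℝ) : ℂ) ^ (m i))
        - (p : ℂ) * (((t : Ed d) k : ℝ) : ℂ) * (((t : Ed d) k' : ℝ) : ℂ)
          * ∏ i, (((t : Ed d) i : ℝ) : ℂ) ^ (m i) := by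
  have hwv : ∀ i, wv k k' 0 (t : Ed d) i = (t : Ed d) i := by
    intro i
    by_cases h : i = k <;> simp [wv, h]
  have hrr : rr k k' 0 (t : Ed d) = 1 := rr_zero k k' t
  show (-(2 * (((t : Ed d) k : ℝ) : ℂ) * (((t : Ed d) k' : ℝ) : ℂ)
        + ((0 : ℝ) : ℂ) * (((t : Ed d) k' : ℝ) : ℂ) ^ 2)
      * (∑ j ∈ Finset.range p, ((rr k k' 0 (t : Ed d) : ℝ) : ℂ) ^ j)
      * (((1 + ((rr k k' 0 (t : Ed d) : ℝ) : ℂ))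
          * ((rr k k' 0 (t : Ed d) : ℝ) : ℂ) ^ p)⁻¹))
    * (∏ i, ((wv k k' 0 (t : Ed d) i : ℝ) : ℂ) ^ (m i))
  + (((t : Ed d) k' : ℝ) : ℂ) *
      ((∑ j ∈ Finset.range (m k), ((wv k k' 0 (t : Ed d) k : ℝ) : ℂ) ^ j
          * (((t : Ed d) k : ℝ) : ℂ) ^ (m k - 1 - j))
        * ∏ i ∈ Finset.univ.erase k, (((t : Ed d) i : ℝ) : ℂ) ^ (m i)) = _
  rw [hrr]
  have hsum1 : (∑ j ∈ Finset.range p, (((1 : ℝ) : ℂ)) ^ j) = (p : ℂ) := by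
    simp
  have hsum2 : (∑ j ∈ Finset.range (m k), ((wv k k' 0 (t : Ed d) k : ℝ) : ℂ) ^ j
      * (((t : Ed d) k : ℝ) : ℂ) ^ (m k - 1 - j))
      = (m k : ℂ) * (((t : Ed d) k : ℝ) : ℂ) ^ (m k - 1) := by
    have : ∀ j ∈ Finset.range (m k), ((wv k k' 0 (t : Ed d) k : ℝ) : ℂ) ^ j
        * (((t : Ed d) k : ℝ) : ℂ) ^ (m k - 1 - j)
        = (((t : Ed d) k : ℝ) : ℂ) ^ (m k - 1) := by
      intro j hj
      rw [hwv k, ← pow_add]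
      congr 1
      have := Finset.mem_range.mp hj
      omega
    rw [Finset.sum_congr rfl this, Finset.sum_const, Finset.card_range, nsmul_eq_mul]
  have hprod : (∏ i, ((wv k k' 0 (t : Ed d) i : ℝ) : ℂ) ^ (m i))
      = ∏ i, (((t : Ed d) i : ℝ) : ℂ) ^ (m i) := by
    exact Finset.prod_congr rfl fun i _ => by rw [hwv i]
  rw [hsum1, hsum2, hprod]
  push_cast
  ring

end Stmt13Aux

open Stmt13Aux in
/-- Let `d ≥ 2` be even and `l` a continuous linear functional on
`C(S^{d-1})` invariant under `V_g` for every `g ∈ Sp(d,ℝ)`. Then for every multi-index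
`n ∈ ℕ^d` with all entries `≥ 1` and every `k`:
`(‖n‖₁ + d)·l(b_{n+2e_k}) = (n_k + 1)·l(b_n)`, where `b_m(t) = ∏ i, t_i ^ m_i` and
`‖n‖₁ = ∑ j, n_j`. -/
theorem stmt13 {d : ℕ} (hd : 2 ≤ d) (hdeven : Even d)
    (l : C(Metric.sphere (0 : EuclideanSpace ℝ (Fin d)) 1, ℂ) →L[ℂ] ℂ)
    (hl : ∀ g : Matrix (Fin d) (Fin d) ℝ, g.transpose * Omega d * g = Omega d →
      ∀ b c : C(Metric.sphere (0 : EuclideanSpace ℝ (Fin d)) 1, ℂ),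
        (∀ t : Metric.sphere (0 : EuclideanSpace ℝ (Fin d)) 1,
          c t = (((‖Matrix.toEuclideanLin g t‖ ^ d)⁻¹ : ℝ) : ℂ) *
            homog b (Matrix.toEuclideanLin g t)) →
        l c = l b)
    (n : Fin d → ℕ) (hn : ∀ j, 1 ≤ n j) (k : Fin d)
    (bn bnk : C(Metric.sphere (0 : EuclideanSpace ℝ (Fin d)) 1, ℂ))
    (hbn : ∀ t : Metric.sphere (0 : EuclideanSpace ℝ (Fin d)) 1,
      bn t = ∏ i : Fin d, (((t : EuclideanSpace ℝ (Fin d)) i : ℝ) : ℂ) ^ n i)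
    (hbnk : ∀ t : Metric.sphere (0 : EuclideanSpace ℝ (Fin d)) 1,
      bnk t = ∏ i : Fin d, (((t : EuclideanSpace ℝ (Fin d)) i : ℝ) : ℂ) ^
        (n i + if i = k then 2 else 0)) :
    (((∑ j : Fin d, n j : ℕ) : ℂ) + (d : ℂ)) * l bnk = ((n k : ℂ) + 1) * l bn := by
  have hd2 : d % 2 = 0 := Nat.even_iff.mp hdeven
  obtain ⟨k', hk'⟩ : ∃ k' : Fin d,
      (k.val % 2 = 0 ∧ k'.val = k.val + 1) ∨ (k.val % 2 = 1 ∧ k.val = k'.val + 1) := by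
    rcases Nat.even_or_odd k.val with he | ho
    · have hke : k.val % 2 = 0 := Nat.even_iff.mp he
      have hk1 : k.val + 1 < d := by have := k.isLt; omega
      exact ⟨⟨k.val + 1, hk1⟩, Or.inl ⟨hke, rfl⟩⟩
    · have hko : k.val % 2 = 1 := Nat.odd_iff.mp ho
      refine ⟨⟨k.val - 1, by have := k.isLt; omega⟩, Or.inr ⟨hko, ?_⟩⟩
      show k.val = k.val - 1 + 1
      omega
  obtain ⟨hcol, hrow, hanti, hkk⟩ := omega_facts k k' hk'
  set m : Fin d → ℕ := fun i => if i = k then n k + 1 else if i = k' then n k' - 1 else n i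
    with hm
  have hmk : m k = n k + 1 := by simp [hm]
  have hmk' : m k' = n k' - 1 := by simp [hm, Ne.symm hkk]
  have hmi : ∀ i, i ≠ k → i ≠ k' → m i = n i := fun i h1 h2 => by simp [hm, h1, h2]
  have hmem' : k' ∈ Finset.univ.erase k := Finset.mem_erase.mpr ⟨Ne.symm hkk, Finset.mem_univ k'⟩
  have hmsum : (∑ i, m i) = ∑ j, n j := by
    have h1 : ∀ f : Fin d → ℕ, (∑ i, f i)
        = f k + (f k' + ∑ i ∈ (Finset.univ.erase k).erase k', f i) := by
      intro f
      rw [← Finset.add_sum_erase _ f (Finset.mem_univ k), ← Finset.add_sum_erase _ f hmem']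
    rw [h1 m, h1 n]
    have h2 : (∑ i ∈ (Finset.univ.erase k).erase k', m i)
        = ∑ i ∈ (Finset.univ.erase k).erase k', n i :=
      Finset.sum_congr rfl fun i hi => by
        have h := Finset.mem_erase.mp hi
        have h3 := Finset.mem_erase.mp h.2
        exact hmi i h3.1 h.1
    rw [h2, hmk, hmk']
    have := hn k'
    omega
  set p : ℕ := (∑ j, n j) + d with hpdef
  have hp : p = (∑ i, m i) + d := by rw [hmsum]
  have hcont_bm : Continuous fun t : Sd d => ∏ i, (((t : Ed d) i : ℝ) : ℂ) ^ (m i) := by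
    apply continuous_finset_prod
    intro i _
    exact (Complex.continuous_ofReal.comp ((continuous_apply i).comp
      ((PiLp.continuous_ofLp 2 fun _ : Fin d => ℝ).comp continuous_subtype_val))).pow (m i)
  set bm : C(Sd d, ℂ) := ⟨_, hcont_bm⟩ with hbmdef
  have hbm : ∀ t : Sd d, bm t = ∏ i, (((t : Ed d) i : ℝ) : ℂ) ^ (m i) := fun t => rfl
  set Gc : C(ℝ × Sd d, ℂ) := ⟨Gf k k' m p, cont_Gf k k' hkk m p⟩ with hGcdef
  have key : ∀ s : ℝ, s ≠ 0 → l (Gc.curry s) = 0 := by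
    intro s hs
    have hform : ∀ t : Sd d, (bm + (s : ℂ) • Gc.curry s) t
        = (((‖Matrix.toEuclideanLin (gm k k' s) (t : Ed d)‖ ^ d)⁻¹ : ℝ) : ℂ) *
          homog bm (Matrix.toEuclideanLin (gm k k' s) (t : Ed d)) := by
      intro t
      rw [ContinuousMap.add_apply, ContinuousMap.smul_apply, smul_eq_mul,
        ContinuousMap.curry_apply]
      exact (master k k' hkk m p hp bm hbm s t).symm
    have hinv := hl (gm k k' s) (gm_symplectic k k' hkk hcol hrow hanti s) bm
      (bm + (s : ℂ) • Gc.curry s) hform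
    rw [l.map_add, l.map_smul, smul_eq_mul] at hinv
    have hz : (s : ℂ) * l (Gc.curry s) = 0 := by linear_combination hinv
    exact (mul_eq_zero.mp hz).resolve_left (by exact_mod_cast hs)
  have hcont : Continuous fun s : ℝ => l (Gc.curry s) :=
    l.continuous.comp (map_continuous Gc.curry)
  have hzero : l (Gc.curry 0) = 0 := by
    have heq : (fun s : ℝ => l (Gc.curry s)) = fun _ => (0 : ℂ) := by
      apply Continuous.ext_on (dense_compl_singleton (0 : ℝ)) hcont continuous_const
      intro s hs
      exact key s hs
    exact congrFun heq 0
  have hcurry0 : ∀ t : Sd d, (Gc.curry 0) t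
      = ((n k : ℂ) + 1) * bn t - ((((∑ j, n j) : ℕ) : ℂ) + (d : ℂ)) * bnk t := by
    intro t
    rw [ContinuousMap.curry_apply]
    show Gf k k' m p (0, t) = _
    rw [Gf_zero k k' m p t, hbn t, hbnk t]
    set x : Fin d → ℂ := fun i => (((t : Ed d) i : ℝ) : ℂ) with hx
    have hsplit : ∀ e : Fin d → ℕ, (∏ i, x i ^ e i)
        = x k ^ e k * (x k' ^ e k' * ∏ i ∈ (Finset.univ.erase k).erase k', x i ^ e i) := by
      intro e
      rw [← Finset.mul_prod_erase Finset.univ _ (Finset.mem_univ k),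
        ← Finset.mul_prod_erase _ _ hmem']
    have hPe : (∏ i ∈ Finset.univ.erase k, x i ^ (m i))
        = x k' ^ (m k') * ∏ i ∈ (Finset.univ.erase k).erase k', x i ^ (m i) := by
      rw [← Finset.mul_prod_erase _ _ hmem']
    have hrest : (∏ i ∈ (Finset.univ.erase k).erase k', x i ^ (m i))
        = ∏ i ∈ (Finset.univ.erase k).erase k', x i ^ (n i) :=
      Finset.prod_congr rfl fun i hi => by
        have h := Finset.mem_erase.mp hi
        have h3 := Finset.mem_erase.mp h.2
        rw [hmi i h3.1 h.1]
    set R : ℂ := ∏ i ∈ (Finset.univ.erase k).erase k', x i ^ (n i) with hR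
    have e2 : n k' - 1 + 1 = n k' := by have := hn k'; omega
    have hxk' : x k' ^ (n k') = x k' ^ (n k' - 1) * x k' := by
      conv_lhs => rw [← e2]
      rw [pow_succ]
    have emk : m k - 1 = n k := by rw [hmk]; omega
    have ha : x k' * x k ^ (m k - 1) * (∏ i ∈ Finset.univ.erase k, x i ^ (m i))
        = ∏ i, x i ^ (n i) := by
      rw [hsplit n, hPe, hrest, hmk', emk, hxk']
      ring
    have hb : x k * x k' * (∏ i, x i ^ (m i))
        = ∏ i, x i ^ (n i + if i = k then 2 else 0) := by
      rw [hsplit m, hsplit (fun i => n i + if i = k then 2 else 0)]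
      have hrest2 : (∏ i ∈ (Finset.univ.erase k).erase k', x i
            ^ (n i + if i = k then 2 else 0))
          = R := by
        rw [hR]
        refine Finset.prod_congr rfl fun i hi => ?_
        have h := Finset.mem_erase.mp hi
        have h3 := Finset.mem_erase.mp h.2
        rw [if_neg h3.1, add_zero]
      rw [hrest2, hrest, hmk, hmk']
      rw [if_pos rfl, if_neg (Ne.symm hkk), add_zero, hxk']
      have h22 : n k + 2 = (n k + 1) + 1 := by omega
      rw [h22, pow_succ]
      ring
    have hmkc : (m k : ℂ) = (n k : ℂ) + 1 := by rw [hmk]; push_cast; ring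
    have hpc : (p : ℂ) = (((∑ j, n j) : ℕ) : ℂ) + (d : ℂ) := by rw [hpdef]; push_cast; ring
    rw [hmkc, hpc] at *
    linear_combination ((n k : ℂ) + 1) * ha - ((((∑ j, n j) : ℕ) : ℂ) + (d : ℂ)) * hb
  have hmap : Gc.curry 0 = ((n k : ℂ) + 1) • bn - ((((∑ j, n j) : ℕ) : ℂ) + (d : ℂ)) • bnk := by
    ext t
    rw [ContinuousMap.sub_apply, ContinuousMap.smul_apply, ContinuousMap.smul_apply,
      smul_eq_mul, smul_eq_mul]
    exact hcurry0 t
  rw [hmap, l.map_sub, l.map_smul, l.map_smul, smul_eq_mul, smul_eq_mul] at hzero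
  linear_combination -hzero
end
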